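/- arXiv:1110.0167 — 7 statements merged into one kernel-verified Lean document; each statement's English description precedes it below -/
import Mathlib

section
/- Under the standing assumptions, for every θ > 0 there exist constants 0 < c ≤ C such that for all w = (w₁, w₂) ∈ H × H: c·(‖w₁‖² + ‖A^{1/2} w₂‖²) ≤ [w, w]_θ ≤ C·(‖w₁‖² + ‖A^{1/2} w₂‖²); that is, the norm |w|_θ = √([w,w]_θ) is topologically equivalent to the energy norm on H × H. -/
open scoped InnerProductSpace ComplexOrder

/-- The sesquilinear form `[w, v]_θ` on `H × H`, where `S = A^{1/2}` and
`Sinv = A^{-1/2}`. -/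
noncomputable def formTheta {H : Type*} [NormedAddCommGroup H] [InnerProductSpace ℂ H]
    (D S Sinv : H →L[ℂ] H) (θ : ℝ) (w v : H × H) : ℂ :=
  inner ℂ w.1 v.1 + (θ : ℂ) * inner ℂ (Sinv w.1) (Sinv v.1) + inner ℂ (S w.2) (S v.2)
    + (θ : ℂ) * inner ℂ w.2 v.2 + (θ : ℂ) * inner ℂ (Sinv (D w.2)) (Sinv (D v.2))
    + (θ : ℂ) * inner ℂ (Sinv (D w.2)) (Sinv v.1) + (θ : ℂ) * inner ℂ (Sinv w.1) (Sinv (D v.2))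

lemma formTheta_diag {H : Type*} [NormedAddCommGroup H] [InnerProductSpace ℂ H]
    (D S Sinv : H →L[ℂ] H) (θ : ℝ) (w : H × H) :
    formTheta D S Sinv θ w w
      = ((‖w.1‖ ^ 2 + ‖S w.2‖ ^ 2
          + θ * (‖w.2‖ ^ 2 + ‖Sinv w.1 + Sinv (D w.2)‖ ^ 2) : ℝ) : ℂ) := by
  have h : formTheta D S Sinv θ w w
      = inner ℂ w.1 w.1 + inner ℂ (S w.2) (S w.2) + (θ : ℂ) * inner ℂ w.2 w.2
        + (θ : ℂ) * (inner ℂ (Sinv w.1 + Sinv (D w.2)) (Sinv w.1 + Sinv (D w.2)) : ℂ) := by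
    rw [inner_add_add_self]
    simp only [formTheta]
    ring
  rw [h, inner_self_eq_norm_sq_to_K, inner_self_eq_norm_sq_to_K,
    inner_self_eq_norm_sq_to_K, inner_self_eq_norm_sq_to_K]
  simp [Complex.ext_iff]
  constructor <;> ring

/-- For every `θ > 0` there are constants `0 < c ≤ C` such that for all
`w ∈ H × H`: `c·(‖w₁‖² + ‖A^{1/2} w₂‖²) ≤ [w, w]_θ ≤ C·(‖w₁‖² + ‖A^{1/2} w₂‖²)`,
i.e. the norm `|·|_θ` is topologically equivalent to the energy norm on `H × H`. -/
theorem formTheta_equiv_energy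
    {H : Type*} [NormedAddCommGroup H] [InnerProductSpace ℂ H] [CompleteSpace H]
    [Nontrivial H]
    (A D S Sinv : H →L[ℂ] H)
    (hA : IsSelfAdjoint A) (a₀ : ℝ) (ha₀ : 0 < a₀)
    (hApd : ∀ x : H, a₀ * ‖x‖ ^ 2 ≤ (inner ℂ (A x) x : ℂ).re)
    (hSsa : IsSelfAdjoint S) (hSpos : ∀ x : H, 0 ≤ (inner ℂ (S x) x : ℂ).re)
    (hSsq : S * S = A)
    (hSinv : S * Sinv = 1) (hSinv' : Sinv * S = 1)
    (hDacc : ∀ x : H, 0 ≤ (inner ℂ (D x) x : ℂ).re)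
    (θ : ℝ) (hθ : 0 < θ) :
    ∃ c C : ℝ, 0 < c ∧ c ≤ C ∧ ∀ w : H × H,
      ((c * (‖w.1‖ ^ 2 + ‖S w.2‖ ^ 2) : ℝ) : ℂ) ≤ formTheta D S Sinv θ w w ∧
      formTheta D S Sinv θ w w ≤ ((C * (‖w.1‖ ^ 2 + ‖S w.2‖ ^ 2) : ℝ) : ℂ) := by
  set k := ‖Sinv‖ with hk
  set d := ‖D‖ with hd
  have hk0 : 0 ≤ k := norm_nonneg _
  have hd0 : 0 ≤ d := norm_nonneg _
  refine ⟨1, 1 + θ * (k ^ 2 + 2 * (k + k ^ 2 * d) ^ 2), one_pos, by nlinarith [sq_nonneg k, sq_nonneg (k + k ^ 2 * d)], ?_⟩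
  intro w
  rw [formTheta_diag]
  have hw2 : ‖w.2‖ ≤ k * ‖S w.2‖ := by
    have h1 : Sinv (S w.2) = w.2 := by
      rw [← ContinuousLinearMap.mul_apply, hSinv', ContinuousLinearMap.one_apply]
    calc ‖w.2‖ = ‖Sinv (S w.2)‖ := by rw [h1]
      _ ≤ k * ‖S w.2‖ := Sinv.le_opNorm _
  have hx : ‖Sinv w.1 + Sinv (D w.2)‖ ≤ k * ‖w.1‖ + k * (d * (k * ‖S w.2‖)) := by
    calc ‖Sinv w.1 + Sinv (D w.2)‖ ≤ ‖Sinv w.1‖ + ‖Sinv (D w.2)‖ := norm_add_le _ _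
      _ ≤ k * ‖w.1‖ + k * ‖D w.2‖ := add_le_add (Sinv.le_opNorm _) (Sinv.le_opNorm _)
      _ ≤ k * ‖w.1‖ + k * (d * ‖w.2‖) := by
          gcongr
          exact D.le_opNorm _
      _ ≤ k * ‖w.1‖ + k * (d * (k * ‖S w.2‖)) := by gcongr
  have hn1 : (0:ℝ) ≤ ‖w.1‖ := norm_nonneg _
  have hn2 : (0:ℝ) ≤ ‖S w.2‖ := norm_nonneg _
  have hnx : (0:ℝ) ≤ ‖Sinv w.1 + Sinv (D w.2)‖ := norm_nonneg _
  have hnw2 : (0:ℝ) ≤ ‖w.2‖ := norm_nonneg _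
  constructor
  · rw [Complex.real_le_real]
    nlinarith [sq_nonneg ‖w.2‖, sq_nonneg ‖Sinv w.1 + Sinv (D w.2)‖]
  · rw [Complex.real_le_real]
    set a := ‖w.1‖
    set b := ‖S w.2‖
    have hxx : ‖Sinv w.1 + Sinv (D w.2)‖ ^ 2 ≤ (k * a + k ^ 2 * d * b) ^ 2 := by
      apply sq_le_sq' <;> nlinarith
    have hww : ‖w.2‖ ^ 2 ≤ k ^ 2 * b ^ 2 := by
      have := hw2
      nlinarith
    have h4 : (k * a + k ^ 2 * d * b) ^ 2 ≤ 2 * (k + k ^ 2 * d) ^ 2 * (a ^ 2 + b ^ 2) := by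
      nlinarith [sq_nonneg (k * a - k ^ 2 * d * b), sq_nonneg (k * a), sq_nonneg (k ^ 2 * d * a),
        sq_nonneg (k * b), sq_nonneg (k ^ 2 * d * b),
        mul_nonneg (mul_nonneg (mul_nonneg hk0 hk0) (mul_nonneg hk0 hd0)) (sq_nonneg a),
        mul_nonneg (mul_nonneg (mul_nonneg hk0 hk0) (mul_nonneg hk0 hd0)) (sq_nonneg b)]
    have h5 : ‖w.2‖ ^ 2 ≤ k ^ 2 * (a ^ 2 + b ^ 2) := by nlinarith [sq_nonneg (k * a)]
    have h6 : ‖Sinv w.1 + Sinv (D w.2)‖ ^ 2 ≤ 2 * (k + k ^ 2 * d) ^ 2 * (a ^ 2 + b ^ 2) :=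
      hxx.trans h4
    have h7 := mul_le_mul_of_nonneg_left h5 hθ.le
    have h8 := mul_le_mul_of_nonneg_left h6 hθ.le
    have hrw : (1 + θ * (k ^ 2 + 2 * (k + k ^ 2 * d) ^ 2)) * (a ^ 2 + b ^ 2)
        = (a ^ 2 + b ^ 2) + θ * (k ^ 2 * (a ^ 2 + b ^ 2))
          + θ * (2 * (k + k ^ 2 * d) ^ 2 * (a ^ 2 + b ^ 2)) := by ring
    rw [hrw]
    linarith
end

section
/- Under the standing assumptions, the semigroup generated by T is contractive in the energy norm: for every t ≥ 0 and every w = (w₁, w₂) ∈ H × H, writing exp(tT) for the operator exponential, one has ‖exp(tT) w‖_E ≤ ‖w‖_E, where ‖w‖_E² = ‖w₁‖² + ‖A^{1/2} w₂‖². -/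
set_option maxSynthPendingDepth 3

open scoped InnerProductSpace

/-- The matrix operator `T(w₁, w₂) = (−D w₁ − A w₂, w₁)` on `H × H`. -/
noncomputable def Tlin {H : Type*} [NormedAddCommGroup H] [InnerProductSpace ℂ H]
    (A D : H →L[ℂ] H) : (H × H) →L[ℂ] (H × H) :=
  ((-(D.comp (ContinuousLinearMap.fst ℂ H H)))
      - A.comp (ContinuousLinearMap.snd ℂ H H)).prod (ContinuousLinearMap.fst ℂ H H)

/-- The semigroup generated by `T` is contractive in the energy norm:
for every `t ≥ 0` and `w ∈ H × H`, `‖exp(tT) w‖_E ≤ ‖w‖_E`, where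
`‖w‖_E² = ‖w₁‖² + ‖A^{1/2} w₂‖²` and `S = A^{1/2}`. -/
theorem exp_T_contractive
    {H : Type*} [NormedAddCommGroup H] [InnerProductSpace ℂ H] [CompleteSpace H]
    [Nontrivial H]
    (A D S Sinv : H →L[ℂ] H)
    (hA : IsSelfAdjoint A) (a₀ : ℝ) (ha₀ : 0 < a₀)
    (hApd : ∀ x : H, a₀ * ‖x‖ ^ 2 ≤ (inner ℂ (A x) x : ℂ).re)
    (hSsa : IsSelfAdjoint S) (hSpos : ∀ x : H, 0 ≤ (inner ℂ (S x) x : ℂ).re)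
    (hSsq : S * S = A)
    (hSinv : S * Sinv = 1) (hSinv' : Sinv * S = 1)
    (hDacc : ∀ x : H, 0 ≤ (inner ℂ (D x) x : ℂ).re)
    (t : ℝ) (ht : 0 ≤ t) (w : H × H) :
    ‖(NormedSpace.exp (t • Tlin A D) w).1‖ ^ 2
      + ‖S (NormedSpace.exp (t • Tlin A D) w).2‖ ^ 2
    ≤ ‖w.1‖ ^ 2 + ‖S w.2‖ ^ 2 := by
  set T := Tlin A D with hT
  have hexp_eq : (NormedSpace.exp : ((H × H) →L[ℂ] (H × H)) → _) = NormedSpace.exp :=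
    rfl
  set u : ℝ → H × H := fun s => NormedSpace.exp (s • T) w with hu_def
  -- derivative of u
  have hu : ∀ s : ℝ, HasDerivAt u (T (u s)) s := by
    intro s
    have h0 : HasDerivAt (fun r : ℝ => NormedSpace.exp (r • T))
        (T * NormedSpace.exp (s • T)) s := hasDerivAt_exp_smul_const' T s
    have h1 := (((ContinuousLinearMap.apply ℂ (H × H) w).restrictScalars
        ℝ).hasFDerivAt).comp_hasDerivAt s h0
    exact h1
  letI : InnerProductSpace ℝ H := InnerProductSpace.complexToReal
  -- component derivatives
  have hu1 : ∀ s : ℝ, HasDerivAt (fun r => (u r).1) (T (u s)).1 s := fun s =>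
    ((ContinuousLinearMap.fst ℝ H H).hasFDerivAt.comp_hasDerivAt s (hu s))
  have hu2 : ∀ s : ℝ, HasDerivAt (fun r => S (u r).2) (S (T (u s)).2) s := fun s =>
    (((S.restrictScalars ℝ).comp (ContinuousLinearMap.snd ℝ H H)).hasFDerivAt.comp_hasDerivAt
      s (hu s))
  set f : ℝ → ℝ := fun s => ⟪(u s).1, (u s).1⟫_ℝ + ⟪S (u s).2, S (u s).2⟫_ℝ with hf_def
  have hf : ∀ s : ℝ, HasDerivAt f
      ((⟪(u s).1, (T (u s)).1⟫_ℝ + ⟪(T (u s)).1, (u s).1⟫_ℝ)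
        + (⟪S (u s).2, S (T (u s)).2⟫_ℝ + ⟪S (T (u s)).2, S (u s).2⟫_ℝ)) s := fun s =>
    ((hu1 s).inner ℝ (hu1 s)).add ((hu2 s).inner ℝ (hu2 s))
  -- the derivative is nonpositive
  have hf' : ∀ s : ℝ, deriv f s ≤ 0 := by
    intro s
    rw [(hf s).deriv]
    set x := (u s).1
    set y := (u s).2
    have hTx : (T (u s)).1 = -(D x) - A y := by
      simp [hT, Tlin, ContinuousLinearMap.prod_apply, x, y]
    have hTy : (T (u s)).2 = x := by
      simp [hT, Tlin, ContinuousLinearMap.prod_apply, x, y]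
    rw [hTx, hTy]
    have hsym : ∀ a b : H, ⟪a, b⟫_ℝ = ⟪b, a⟫_ℝ := fun a b => real_inner_comm b a
    have hS : ∀ a b : H, ⟪S a, b⟫_ℝ = ⟪a, S b⟫_ℝ := by
      intro a b
      have hadj : ContinuousLinearMap.adjoint S = S :=
        (ContinuousLinearMap.isSelfAdjoint_iff' ).mp hSsa
      have : (inner ℂ (S a) b : ℂ) = inner ℂ a (S b) := by
        conv_lhs => rw [← hadj]
        exact ContinuousLinearMap.adjoint_inner_left S b a
      rw [real_inner_eq_re_inner ℂ, real_inner_eq_re_inner ℂ, this]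
    have key : ⟪S x, S y⟫_ℝ = ⟪x, A y⟫_ℝ := by
      rw [hS x (S y)]
      congr 1
      have : S (S y) = A y := by rw [← ContinuousLinearMap.mul_apply, hSsq]
      rw [this]
    have hDnn : 0 ≤ ⟪D x, x⟫_ℝ := by
      rw [real_inner_eq_re_inner ℂ]; exact hDacc x
    have e1 : ⟪x, -(D x) - A y⟫_ℝ = -⟪x, D x⟫_ℝ - ⟪x, A y⟫_ℝ := by
      rw [inner_sub_right, inner_neg_right]
    have e2 : ⟪-(D x) - A y, x⟫_ℝ = -⟪D x, x⟫_ℝ - ⟪A y, x⟫_ℝ := by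
      rw [inner_sub_left, inner_neg_left]
    have key2 : ⟪S y, S x⟫_ℝ = ⟪x, A y⟫_ℝ := by rw [hsym (S y) (S x)]; exact key
    rw [e1, e2, key, key2]
    have hAx : ⟪A y, x⟫_ℝ = ⟪x, A y⟫_ℝ := hsym _ _
    have hxD : ⟪x, D x⟫_ℝ = ⟪D x, x⟫_ℝ := hsym _ _
    rw [hAx, hxD]
    linarith
  have hfd : Differentiable ℝ f := fun s => (hf s).differentiableAt
  have hanti : Antitone f := antitone_of_deriv_nonpos hfd hf'
  have hle : f t ≤ f 0 := hanti ht
  have hu0 : u 0 = w := by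
    simp [hu_def, NormedSpace.exp_zero]
  have hft : f t = ‖(u t).1‖ ^ 2 + ‖S (u t).2‖ ^ 2 := by
    simp [hf_def, real_inner_self_eq_norm_sq]
  have hf0 : f 0 = ‖w.1‖ ^ 2 + ‖S w.2‖ ^ 2 := by
    simp [hf_def, hu0, real_inner_self_eq_norm_sq]
  rw [hft, hf0] at hle
  exact hle
end

section
/- (Proposition 1, real part) Under the standing assumptions, if δ > 0, then for every θ > 0 the constant ω_θ is well defined and positive, and for all w ∈ H × H one has re [T w, w]_θ ≤ −ω_θ · [w, w]_θ. -/
set_option maxSynthPendingDepth 3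

open scoped InnerProductSpace

private lemma quad_aux (n1 n4 p q r X a b C α β θ δ N : ℝ)
    (hquad : 0 ≤ (C * α - θ) * p ^ 2 - 2 * (θ * N) * (p * q)
      + (C * (θ * δ) - (1 + θ * N ^ 2)) * q ^ 2)
    (hCa : C * (α * p ^ 2) ≤ C * a)
    (hCb : C * θ * (δ * q ^ 2) ≤ C * θ * b)
    (hθN2 : θ * r ^ 2 ≤ θ * (N ^ 2 * q ^ 2))
    (hθX : 2 * θ * X ≤ 2 * θ * (N * q * p))
    (hβinv : 1 / β * (β * n1 ^ 2) = n1 ^ 2)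
    (hβinv2 : 1 / β * (θ * (β * n4 ^ 2)) = θ * n4 ^ 2)
    (hm1 : 1 / β * (β * n1 ^ 2) ≤ 1 / β * a)
    (hm2 : 1 / β * (θ * (β * n4 ^ 2)) ≤ 1 / β * (θ * b)) :
    n1 ^ 2 + θ * p ^ 2 + q ^ 2 + θ * n4 ^ 2 + θ * r ^ 2 + 2 * θ * X
      ≤ (1 / β + C) * (a + θ * b) := by
  linarith

/-- Proposition 1, real part: if `δ > 0`, then for every `θ > 0` the
constant `ω_θ` is well defined and positive, and `re [T w, w]_θ ≤ −ω_θ · [w, w]_θ`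
for all `w ∈ H × H`. Here `S = A^{1/2}`, `Sinv = A^{-1/2}` and
`‖D‖ₒₚ = ‖A^{-1/2} D A^{-1/2}‖`. -/
theorem prop1_re
    {H : Type*} [NormedAddCommGroup H] [InnerProductSpace ℂ H] [CompleteSpace H]
    [Nontrivial H]
    (A D S Sinv : H →L[ℂ] H)
    (hA : IsSelfAdjoint A) (a₀ : ℝ) (ha₀ : 0 < a₀)
    (hApd : ∀ x : H, a₀ * ‖x‖ ^ 2 ≤ (inner ℂ (A x) x : ℂ).re)
    (hSsa : IsSelfAdjoint S) (hSpos : ∀ x : H, 0 ≤ (inner ℂ (S x) x : ℂ).re)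
    (hSsq : S * S = A)
    (hSinv : S * Sinv = 1) (hSinv' : Sinv * S = 1)
    (hDacc : ∀ x : H, 0 ≤ (inner ℂ (D x) x : ℂ).re)
    (ν : ℝ) (hν : 0 < ν)
    (hDsec : ∀ x : H, |(inner ℂ (D x) x : ℂ).im| ≤ ν * (inner ℂ (D x) x : ℂ).re)
    (α β δ : ℝ)
    (hα : α = ⨅ x : {x : H // x ≠ 0}, (inner ℂ (D (x : H)) (x : H) : ℂ).re / ‖Sinv (x : H)‖ ^ 2)
    (hβ : β = ⨅ x : {x : H // x ≠ 0}, (inner ℂ (D (x : H)) (x : H) : ℂ).re / ‖(x : H)‖ ^ 2)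
    (hδ : δ = ⨅ x : {x : H // x ≠ 0}, (inner ℂ (D (x : H)) (x : H) : ℂ).re / ‖S (x : H)‖ ^ 2)
    (hδpos : 0 < δ)
    (θ : ℝ) (hθ : 0 < θ)
    (ω : ℝ)
    (hω : ω = (1 / β + ‖Sinv * D * Sinv‖ ^ 2 / (2 * δ)
        + (θ / α + 1 / (θ * δ)) / 2
        + Real.sqrt ((θ / α + 1 / (θ * δ) + ‖Sinv * D * Sinv‖ ^ 2 / δ) ^ 2
            - 4 / (α * δ)) / 2)⁻¹) :
    0 < ω ∧
    ∀ w : H × H,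
      (formTheta D S Sinv θ (Tlin A D w) w).re ≤ -ω * (formTheta D S Sinv θ w w).re := by
  -- Nonempty index type
  haveI hne : Nonempty {x : H // x ≠ 0} := by
    obtain ⟨x, hx⟩ := exists_ne (0 : H); exact ⟨⟨x, hx⟩⟩
  -- basic operator facts
  have hSSinv : ∀ x : H, S (Sinv x) = x := by
    intro x; have := ContinuousLinearMap.ext_iff.mp hSinv x; simpa using this
  have hSinvS : ∀ x : H, Sinv (S x) = x := by
    intro x; have := ContinuousLinearMap.ext_iff.mp hSinv' x; simpa using this
  have hSadj : ∀ x y : H, (inner ℂ (S x) y : ℂ) = inner ℂ x (S y) := by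
    intro x y
    conv_lhs => rw [← hSsa.adjoint_eq]
    rw [ContinuousLinearMap.adjoint_inner_left]
  have hSinvadj : ∀ x y : H, (inner ℂ (Sinv x) y : ℂ) = inner ℂ x (Sinv y) := by
    intro x y
    conv_lhs => rw [← hSSinv y]
    rw [← hSadj, hSSinv]
  have hnormSx : ∀ x : H, ‖S x‖ ^ 2 = (inner ℂ (A x) x : ℂ).re := by
    intro x
    have h : (inner ℂ (A x) x : ℂ) = inner ℂ (S x) (S x) := by
      rw [← hSsq]
      change (inner ℂ (S (S x)) x : ℂ) = _
      rw [hSadj]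
    rw [h]; exact (inner_self_eq_norm_sq (𝕜 := ℂ) (S x)).symm
  have hSlow : ∀ x : H, a₀ * ‖x‖ ^ 2 ≤ ‖S x‖ ^ 2 := by
    intro x; rw [hnormSx]; exact hApd x
  have hSne : ∀ x : H, x ≠ 0 → S x ≠ 0 := by
    intro x hx hc; exact hx (by rw [← hSinvS x, hc, map_zero])
  have hSinvne : ∀ x : H, x ≠ 0 → Sinv x ≠ 0 := by
    intro x hx hc; exact hx (by rw [← hSSinv x, hc, map_zero])
  -- infimum lower bounds
  have hδle : ∀ x : H, δ * ‖S x‖ ^ 2 ≤ (inner ℂ (D x) x : ℂ).re := by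
    intro x
    rcases eq_or_ne x 0 with h | h
    · simp [h]
    · have hb : BddBelow (Set.range fun x : {x : H // x ≠ 0} =>
          (inner ℂ (D (x : H)) (x : H) : ℂ).re / ‖S (x : H)‖ ^ 2) := by
        refine ⟨0, ?_⟩; rintro y ⟨z, rfl⟩
        exact div_nonneg (hDacc _) (sq_nonneg _)
      have h1 : δ ≤ (inner ℂ (D x) x : ℂ).re / ‖S x‖ ^ 2 := by
        rw [hδ]; exact ciInf_le hb ⟨x, h⟩
      have hS0 : 0 < ‖S x‖ ^ 2 := by
        have := hSne x h
        have : 0 < ‖S x‖ := norm_pos_iff.mpr this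
        positivity
      rw [← div_mul_cancel₀ ((inner ℂ (D x) x : ℂ).re) hS0.ne']
      exact mul_le_mul_of_nonneg_right h1 hS0.le
  have hβge : a₀ * δ ≤ β := by
    rw [hβ]; apply le_ciInf; rintro ⟨x, hx⟩
    have hx2 : 0 < ‖x‖ ^ 2 := by
      have : 0 < ‖x‖ := norm_pos_iff.mpr hx
      positivity
    rw [le_div_iff₀ hx2]
    calc a₀ * δ * ‖x‖ ^ 2 = δ * (a₀ * ‖x‖ ^ 2) := by ring
      _ ≤ δ * ‖S x‖ ^ 2 := mul_le_mul_of_nonneg_left (hSlow x) hδpos.le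
      _ ≤ _ := hδle x
  have hβ0 : 0 < β := lt_of_lt_of_le (by positivity) hβge
  have hβle : ∀ x : H, β * ‖x‖ ^ 2 ≤ (inner ℂ (D x) x : ℂ).re := by
    intro x
    rcases eq_or_ne x 0 with h | h
    · simp [h]
    · have hb : BddBelow (Set.range fun x : {x : H // x ≠ 0} =>
          (inner ℂ (D (x : H)) (x : H) : ℂ).re / ‖(x : H)‖ ^ 2) := by
        refine ⟨0, ?_⟩; rintro y ⟨z, rfl⟩
        exact div_nonneg (hDacc _) (sq_nonneg _)
      have h1 : β ≤ (inner ℂ (D x) x : ℂ).re / ‖x‖ ^ 2 := by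
        rw [hβ]; exact ciInf_le hb ⟨x, h⟩
      have hS0 : 0 < ‖x‖ ^ 2 := by
        have : 0 < ‖x‖ := norm_pos_iff.mpr h
        positivity
      rw [← div_mul_cancel₀ ((inner ℂ (D x) x : ℂ).re) hS0.ne']
      exact mul_le_mul_of_nonneg_right h1 hS0.le
  have hαge : a₀ * β ≤ α := by
    rw [hα]; apply le_ciInf; rintro ⟨x, hx⟩
    have hx2 : 0 < ‖Sinv x‖ ^ 2 := by
      have : 0 < ‖Sinv x‖ := norm_pos_iff.mpr (hSinvne x hx)
      positivity
    rw [le_div_iff₀ hx2]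
    calc a₀ * β * ‖Sinv x‖ ^ 2 = β * (a₀ * ‖Sinv x‖ ^ 2) := by ring
      _ ≤ β * ‖S (Sinv x)‖ ^ 2 := mul_le_mul_of_nonneg_left (hSlow (Sinv x)) hβ0.le
      _ = β * ‖x‖ ^ 2 := by rw [hSSinv]
      _ ≤ _ := hβle x
  have hα0 : 0 < α := lt_of_lt_of_le (by positivity) hαge
  have hαle : ∀ x : H, α * ‖Sinv x‖ ^ 2 ≤ (inner ℂ (D x) x : ℂ).re := by
    intro x
    rcases eq_or_ne x 0 with h | h
    · simp [h]
    · have hb : BddBelow (Set.range fun x : {x : H // x ≠ 0} =>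
          (inner ℂ (D (x : H)) (x : H) : ℂ).re / ‖Sinv (x : H)‖ ^ 2) := by
        refine ⟨0, ?_⟩; rintro y ⟨z, rfl⟩
        exact div_nonneg (hDacc _) (sq_nonneg _)
      have h1 : α ≤ (inner ℂ (D x) x : ℂ).re / ‖Sinv x‖ ^ 2 := by
        rw [hα]; exact ciInf_le hb ⟨x, h⟩
      have hS0 : 0 < ‖Sinv x‖ ^ 2 := by
        have : 0 < ‖Sinv x‖ := norm_pos_iff.mpr (hSinvne x h)
        positivity
      rw [← div_mul_cancel₀ ((inner ℂ (D x) x : ℂ).re) hS0.ne']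
      exact mul_le_mul_of_nonneg_right h1 hS0.le
  -- constants
  set N := ‖Sinv * D * Sinv‖ with hNdef
  have hN0 : 0 ≤ N := norm_nonneg _
  set K := θ / α + 1 / (θ * δ) + N ^ 2 / δ with hKdef
  set disc := K ^ 2 - 4 / (α * δ) with hdiscdef
  set C := K / 2 + Real.sqrt disc / 2 with hCdef
  have hM : ω = (1 / β + C)⁻¹ := by
    rw [hω, hCdef, hKdef]; congr 1; ring
  have hdisc_eq : disc = (θ / α - (1 / (θ * δ) + N ^ 2 / δ)) ^ 2 + 4 * θ * N ^ 2 / (α * δ) := by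
    rw [hdiscdef, hKdef]
    field_simp
    ring
  have hdisc_nonneg : 0 ≤ disc := by
    rw [hdisc_eq]; positivity
  have hsqrt_ge : |θ / α - (1 / (θ * δ) + N ^ 2 / δ)| ≤ Real.sqrt disc := by
    have key : (θ / α - (1 / (θ * δ) + N ^ 2 / δ)) ^ 2 ≤ disc := by
      rw [hdisc_eq]
      have : 0 ≤ 4 * θ * N ^ 2 / (α * δ) := by positivity
      linarith
    have := Real.sqrt_le_sqrt key
    rwa [Real.sqrt_sq_eq_abs] at this
  have hs := Real.sq_sqrt hdisc_nonneg
  have hCu : θ / α ≤ C := by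
    have h1 := (abs_le.mp hsqrt_ge).2
    rw [hCdef, hKdef]; linarith
  have hCv : 1 / (θ * δ) + N ^ 2 / δ ≤ C := by
    have h1 := (abs_le.mp hsqrt_ge).1
    rw [hCdef, hKdef]; linarith
  have hCpos : 0 < C := lt_of_lt_of_le (by positivity) hCv
  have h1βC : 0 < 1 / β + C := by positivity
  have hωpos : 0 < ω := by rw [hM]; exact inv_pos.mpr h1βC
  have hCsq' : α * δ * C ^ 2 = α * δ * K * C - 1 := by
    have h1 : α * δ * disc = α * δ * K ^ 2 - 4 := by
      rw [hdiscdef]; field_simp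
    rw [hCdef]
    linear_combination (α * δ / 4) * hs + (1 / 4) * h1
  have hK' : α * θ * δ * K = θ ^ 2 * δ + α + α * θ * N ^ 2 := by
    rw [hKdef]; field_simp
  have he1 : 0 ≤ C * α - θ := by
    have := (div_le_iff₀ hα0).mp hCu; linarith
  have he2 : 0 ≤ C * (θ * δ) - (1 + θ * N ^ 2) := by
    have hθδ : 0 < θ * δ := mul_pos hθ hδpos
    have h2 := mul_le_mul_of_nonneg_left hCv hθδ.le
    have h3 : θ * δ * (1 / (θ * δ) + N ^ 2 / δ) = 1 + θ * N ^ 2 := by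
      field_simp
    rw [h3] at h2
    linarith [h2]
  have hprod : (C * α - θ) * (C * (θ * δ) - (1 + θ * N ^ 2)) = θ ^ 2 * N ^ 2 := by
    linear_combination θ * hCsq' + C * hK'
  refine ⟨hωpos, fun w => ?_⟩
  -- notation
  have hai : ∀ x : H, Sinv (A x) = S x := by
    intro x; rw [← hSsq]
    change Sinv (S (S x)) = S x
    rw [hSinvS]
  have h1 : (Tlin A D w).1 = -(D w.1) - A w.2 := rfl
  have h2 : (Tlin A D w).2 = w.1 := rfl
  have e1 : (inner ℂ (A w.2) w.1 : ℂ).re = (inner ℂ (S w.1) (S w.2) : ℂ).re := by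
    have h : (inner ℂ (A w.2) w.1 : ℂ) = inner ℂ (S w.2) (S w.1) := by
      rw [← hSsq]
      change (inner ℂ (S (S w.2)) w.1 : ℂ) = _
      rw [hSadj]
    rw [h]; exact inner_re_symm (𝕜 := ℂ) _ _
  have e2 : (inner ℂ (S w.2) (Sinv w.1) : ℂ).re = (inner ℂ w.1 w.2 : ℂ).re := by
    have h : (inner ℂ (S w.2) (Sinv w.1) : ℂ) = inner ℂ w.2 w.1 := by
      rw [← hSinvadj (S w.2) w.1, hSinvS]
    rw [h]; exact inner_re_symm (𝕜 := ℂ) _ _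
  have e3 : (inner ℂ (S w.2) (Sinv (D w.2)) : ℂ).re = (inner ℂ (D w.2) w.2 : ℂ).re := by
    have h : (inner ℂ (S w.2) (Sinv (D w.2)) : ℂ) = inner ℂ w.2 (D w.2) := by
      rw [← hSinvadj (S w.2) (D w.2), hSinvS]
    rw [h]; exact inner_re_symm (𝕜 := ℂ) _ _
  have hTre : (formTheta D S Sinv θ (Tlin A D w) w).re
      = -((inner ℂ (D w.1) w.1 : ℂ).re + θ * (inner ℂ (D w.2) w.2 : ℂ).re) := by
    simp only [formTheta, h1, h2, map_sub, map_neg, inner_sub_left, inner_neg_left, hai,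
      Complex.add_re, Complex.sub_re, Complex.neg_re, Complex.mul_re,
      Complex.ofReal_re, Complex.ofReal_im, zero_mul, sub_zero]
    linear_combination (-1 : ℝ) * e1 + (-θ) * e2 + (-θ) * e3
  have hWre : (formTheta D S Sinv θ w w).re
      = ‖w.1‖ ^ 2 + θ * ‖Sinv w.1‖ ^ 2 + ‖S w.2‖ ^ 2 + θ * ‖w.2‖ ^ 2
        + θ * ‖Sinv (D w.2)‖ ^ 2
        + 2 * θ * (inner ℂ (Sinv (D w.2)) (Sinv w.1) : ℂ).re := by
    have e4 : (inner ℂ (Sinv w.1) (Sinv (D w.2)) : ℂ).re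
        = (inner ℂ (Sinv (D w.2)) (Sinv w.1) : ℂ).re := inner_re_symm (𝕜 := ℂ) _ _
    simp only [formTheta, Complex.add_re, Complex.mul_re,
      Complex.ofReal_re, Complex.ofReal_im, zero_mul, sub_zero]
    have hsn : ∀ x : H, (inner ℂ x x : ℂ).re = ‖x‖ ^ 2 := fun x => inner_self_eq_norm_sq (𝕜 := ℂ) x
    rw [hsn w.1, hsn (Sinv w.1), hsn (S w.2), hsn w.2, hsn (Sinv (D w.2))]
    linear_combination θ * e4
  -- bounds
  have hb1 := hβle w.1
  have hb2 := hβle w.2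
  have hb3 := hαle w.1
  have hb4 := hδle w.2
  have hrq : ‖Sinv (D w.2)‖ ≤ N * ‖S w.2‖ := by
    have h : Sinv (D w.2) = (Sinv * D * Sinv) (S w.2) := by
      change _ = Sinv (D (Sinv (S w.2)))
      rw [hSinvS]
    rw [h, hNdef]
    exact ContinuousLinearMap.le_opNorm _ _
  have hX : (inner ℂ (Sinv (D w.2)) (Sinv w.1) : ℂ).re ≤ ‖Sinv (D w.2)‖ * ‖Sinv w.1‖ :=
    re_inner_le_norm (𝕜 := ℂ) _ _
  set p := ‖Sinv w.1‖ with hpdef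
  set q := ‖S w.2‖ with hqdef
  have hp0 : 0 ≤ p := norm_nonneg _
  have hq0 : 0 ≤ q := norm_nonneg _
  have hr0 : 0 ≤ ‖Sinv (D w.2)‖ := norm_nonneg _
  -- quadratic form bound
  set s₁ := Real.sqrt (C * α - θ) with hs₁def
  set s₂ := Real.sqrt (C * (θ * δ) - (1 + θ * N ^ 2)) with hs₂def
  have hs₁ : s₁ ^ 2 = C * α - θ := Real.sq_sqrt he1
  have hs₂ : s₂ ^ 2 = C * (θ * δ) - (1 + θ * N ^ 2) := Real.sq_sqrt he2
  have hs₁₂ : s₁ * s₂ = θ * N := by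
    rw [hs₁def, hs₂def, ← Real.sqrt_mul he1, hprod,
      show θ ^ 2 * N ^ 2 = (θ * N) ^ 2 by ring, Real.sqrt_sq (by positivity)]
  have expand : (s₁ * p - s₂ * q) ^ 2
      = (C * α - θ) * p ^ 2 - 2 * (θ * N) * (p * q)
        + (C * (θ * δ) - (1 + θ * N ^ 2)) * q ^ 2 := by
    linear_combination p ^ 2 * hs₁ + q ^ 2 * hs₂ - 2 * p * q * hs₁₂
  have hquad : 0 ≤ (C * α - θ) * p ^ 2 - 2 * (θ * N) * (p * q)
      + (C * (θ * δ) - (1 + θ * N ^ 2)) * q ^ 2 := by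
    rw [← expand]; exact sq_nonneg _
  -- cross term estimates
  have hr2 : ‖Sinv (D w.2)‖ ^ 2 ≤ N ^ 2 * q ^ 2 := by
    have h := mul_le_mul hrq hrq hr0 (by positivity : (0:ℝ) ≤ N * q)
    calc ‖Sinv (D w.2)‖ ^ 2 = ‖Sinv (D w.2)‖ * ‖Sinv (D w.2)‖ := by ring
      _ ≤ (N * q) * (N * q) := h
      _ = N ^ 2 * q ^ 2 := by ring
  have hXb : (inner ℂ (Sinv (D w.2)) (Sinv w.1) : ℂ).re ≤ N * q * p := by
    have := mul_le_mul_of_nonneg_right hrq hp0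
    linarith
  -- assemble
  have hCa : C * (α * p ^ 2) ≤ C * (inner ℂ (D w.1) w.1 : ℂ).re :=
    mul_le_mul_of_nonneg_left hb3 hCpos.le
  have hCb : (C * θ) * (δ * q ^ 2) ≤ (C * θ) * (inner ℂ (D w.2) w.2 : ℂ).re :=
    mul_le_mul_of_nonneg_left hb4 (by positivity)
  have hbb2 : θ * (β * ‖w.2‖ ^ 2) ≤ θ * (inner ℂ (D w.2) w.2 : ℂ).re :=
    mul_le_mul_of_nonneg_left hb2 hθ.le
  have hE : (formTheta D S Sinv θ w w).re
      ≤ (1 / β + C) * ((inner ℂ (D w.1) w.1 : ℂ).re + θ * (inner ℂ (D w.2) w.2 : ℂ).re) := by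
    rw [hWre]
    have hθN2 : θ * ‖Sinv (D w.2)‖ ^ 2 ≤ θ * (N ^ 2 * q ^ 2) :=
      mul_le_mul_of_nonneg_left hr2 hθ.le
    have hθX : 2 * θ * (inner ℂ (Sinv (D w.2)) (Sinv w.1) : ℂ).re ≤ 2 * θ * (N * q * p) :=
      mul_le_mul_of_nonneg_left hXb (by positivity)
    have hβinv : 1 / β * (β * ‖w.1‖ ^ 2) = ‖w.1‖ ^ 2 := by field_simp
    have hβinv2 : 1 / β * (θ * (β * ‖w.2‖ ^ 2)) = θ * ‖w.2‖ ^ 2 := by field_simp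
    have hm1 : 1 / β * (β * ‖w.1‖ ^ 2) ≤ 1 / β * (inner ℂ (D w.1) w.1 : ℂ).re :=
      mul_le_mul_of_nonneg_left hb1 (by positivity)
    have hm2 : 1 / β * (θ * (β * ‖w.2‖ ^ 2)) ≤ 1 / β * (θ * (inner ℂ (D w.2) w.2 : ℂ).re) :=
      mul_le_mul_of_nonneg_left hbb2 (by positivity)
    exact quad_aux ‖w.1‖ ‖w.2‖ p q ‖Sinv (D w.2)‖ _ _ _ C α β θ δ N
      hquad hCa hCb hθN2 hθX hβinv hβinv2 hm1 hm2
  have hone : ω * (1 / β + C) = 1 := by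
    rw [hM]; exact inv_mul_cancel₀ h1βC.ne'
  have hfin : ω * (formTheta D S Sinv θ w w).re
      ≤ (inner ℂ (D w.1) w.1 : ℂ).re + θ * (inner ℂ (D w.2) w.2 : ℂ).re := by
    calc ω * (formTheta D S Sinv θ w w).re
        ≤ ω * ((1 / β + C) * ((inner ℂ (D w.1) w.1 : ℂ).re
            + θ * (inner ℂ (D w.2) w.2 : ℂ).re)) :=
          mul_le_mul_of_nonneg_left hE hωpos.le
      _ = (ω * (1 / β + C)) * ((inner ℂ (D w.1) w.1 : ℂ).re
            + θ * (inner ℂ (D w.2) w.2 : ℂ).re) := by ring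
      _ = _ := by rw [hone, one_mul]
  rw [hTre]
  linarith [hfin]
end

section
/- (Proposition 1, imaginary part) Under the standing assumptions, if δ > 0, then for every θ > 0 and every b with 0 ≤ b ≤ √θ, for all w ∈ H × H one has |im [T w, w]_θ| ≤ M_{θ,b} · |re [T w, w]_θ| + b · [w, w]_θ, where M_{θ,b} = ν + 2/(δ·(b + √(b² + 4θ))) + (√θ − b)/β. -/
set_option maxSynthPendingDepth 3
set_option maxHeartbeats 1000000

open scoped InnerProductSpace

/-- Proposition 1, imaginary part: if `δ > 0`, then for every `θ > 0`
and every `b` with `0 ≤ b ≤ √θ`, for all `w ∈ H × H` one has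
`|im [T w, w]_θ| ≤ M_{θ,b} · |re [T w, w]_θ| + b · [w, w]_θ`, where
`M_{θ,b} = ν + 2/(δ(b + √(b² + 4θ))) + (√θ − b)/β`. -/
theorem prop1_im
    {H : Type*} [NormedAddCommGroup H] [InnerProductSpace ℂ H] [CompleteSpace H]
    [Nontrivial H]
    (A D S Sinv : H →L[ℂ] H)
    (hA : IsSelfAdjoint A) (a₀ : ℝ) (ha₀ : 0 < a₀)
    (hApd : ∀ x : H, a₀ * ‖x‖ ^ 2 ≤ (inner ℂ (A x) x : ℂ).re)
    (hSsa : IsSelfAdjoint S) (hSpos : ∀ x : H, 0 ≤ (inner ℂ (S x) x : ℂ).re)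
    (hSsq : S * S = A)
    (hSinv : S * Sinv = 1) (hSinv' : Sinv * S = 1)
    (hDacc : ∀ x : H, 0 ≤ (inner ℂ (D x) x : ℂ).re)
    (ν : ℝ) (hν : 0 < ν)
    (hDsec : ∀ x : H, |(inner ℂ (D x) x : ℂ).im| ≤ ν * (inner ℂ (D x) x : ℂ).re)
    (β δ : ℝ)
    (hβ : β = ⨅ x : {x : H // x ≠ 0}, (inner ℂ (D (x : H)) (x : H) : ℂ).re / ‖(x : H)‖ ^ 2)
    (hδ : δ = ⨅ x : {x : H // x ≠ 0}, (inner ℂ (D (x : H)) (x : H) : ℂ).re / ‖S (x : H)‖ ^ 2)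
    (hδpos : 0 < δ)
    (θ : ℝ) (hθ : 0 < θ)
    (b : ℝ) (hb0 : 0 ≤ b) (hb : b ≤ Real.sqrt θ)
    (M : ℝ)
    (hM : M = ν + 2 / (δ * (b + Real.sqrt (b ^ 2 + 4 * θ))) + (Real.sqrt θ - b) / β) :
    ∀ w : H × H,
      |(formTheta D S Sinv θ (Tlin A D w) w).im|
        ≤ M * |(formTheta D S Sinv θ (Tlin A D w) w).re|
          + b * (formTheta D S Sinv θ w w).re := by
  -- basic operator facts
  have hSym : ∀ a c : H, (inner ℂ (S a) c : ℂ) = inner ℂ a (S c) := fun a c => hSsa.isSymmetric a c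
  have hSinvS : ∀ z : H, Sinv (S z) = z := fun z => by
    have := ContinuousLinearMap.ext_iff.mp hSinv' z
    simpa [ContinuousLinearMap.mul_apply] using this
  have hSSinv : ∀ z : H, S (Sinv z) = z := fun z => by
    have := ContinuousLinearMap.ext_iff.mp hSinv z
    simpa [ContinuousLinearMap.mul_apply] using this
  have hAapp : ∀ z : H, A z = S (S z) := fun z => by
    rw [← hSsq]; simp [ContinuousLinearMap.mul_apply]
  have hSinvA : ∀ z : H, Sinv (A z) = S z := fun z => by rw [hAapp, hSinvS]
  have hns : ∀ z : H, ((inner ℂ z z : ℂ)).re = ‖z‖^2 := fun z => by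
    rw [← RCLike.re_to_complex]; exact inner_self_eq_norm_sq (𝕜 := ℂ) z
  -- infimum bounds
  have hbdd : ∀ (f : {x : H // x ≠ 0} → ℝ), (∀ i, 0 ≤ f i) → BddBelow (Set.range f) :=
    fun f hf => ⟨0, by rintro r ⟨i, rfl⟩; exact hf i⟩
  have hδle : ∀ z : H, δ * ‖S z‖^2 ≤ (inner ℂ (D z) z : ℂ).re := by
    intro z
    by_cases hz : z = 0
    · simp [hz]
    · have hle : δ ≤ (inner ℂ (D z) z : ℂ).re / ‖S z‖^2 := by
        rw [hδ]
        exact ciInf_le (hbdd _ fun i => div_nonneg (hDacc _) (sq_nonneg _)) ⟨z, hz⟩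
      have hSz : 0 < ‖S z‖^2 := by
        have hne : S z ≠ 0 := fun h => hz (by rw [← hSinvS z, h, map_zero])
        exact pow_pos (norm_pos_iff.mpr hne) 2
      exact (le_div_iff₀ hSz).mp hle
  have hβle : ∀ z : H, β * ‖z‖^2 ≤ (inner ℂ (D z) z : ℂ).re := by
    intro z
    by_cases hz : z = 0
    · simp [hz]
    · have hle : β ≤ (inner ℂ (D z) z : ℂ).re / ‖z‖^2 := by
        rw [hβ]
        exact ciInf_le (hbdd _ fun i => div_nonneg (hDacc _) (sq_nonneg _)) ⟨z, hz⟩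
      have hz2 : 0 < ‖z‖^2 := pow_pos (norm_pos_iff.mpr hz) 2
      exact (le_div_iff₀ hz2).mp hle
  have hne0 : Nonempty {x : H // x ≠ 0} := by
    obtain ⟨z, hz⟩ := exists_ne (0 : H)
    exact ⟨⟨z, hz⟩⟩
  have hβpos : 0 < β := by
    have h1 : δ * a₀ ≤ β := by
      rw [hβ]
      apply le_ciInf
      rintro ⟨z, hz⟩
      have hz2 : 0 < ‖z‖^2 := pow_pos (norm_pos_iff.mpr hz) 2
      rw [le_div_iff₀ hz2]
      have hkey : ‖S z‖^2 = (inner ℂ (A z) z : ℂ).re := by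
        have h : (inner ℂ (S z) (S z) : ℂ) = inner ℂ (A z) z := by
          rw [hAapp]; exact (hSym (S z) z).symm
        rw [← hns (S z), h]
      have h2 : a₀ * ‖z‖^2 ≤ ‖S z‖^2 := hkey ▸ hApd z
      have h3 := hδle z
      have h4 := mul_le_mul_of_nonneg_left h2 hδpos.le
      linarith
    linarith [mul_pos hδpos ha₀]
  -- numeric setup
  set r := Real.sqrt θ with hrdef
  set s := Real.sqrt (b^2 + 4*θ) with hsdef
  have hr2 : r^2 = θ := Real.sq_sqrt hθ.le
  have hrpos : 0 < r := Real.sqrt_pos.mpr hθ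
  have hs2 : s^2 = b^2 + 4*θ := Real.sq_sqrt (by positivity)
  have hspos : 0 < s := Real.sqrt_pos.mpr (by positivity)
  have hbs : 0 < b + s := by linarith
  set t := 2 / (b + s) with htdef
  have ht : 0 < t := by positivity
  have htid : t * (b + t*θ) = 1 := by
    have h : (b+s) ≠ 0 := ne_of_gt hbs
    rw [htdef]
    field_simp
    linear_combination -hs2
  have hMt : M = ν + t/δ + (r - b)/β := by
    rw [hM, htdef, hrdef, hsdef]
    congr 1
    congr 1
    rw [div_div]
    ring_nf
  intro w
  obtain ⟨x, y⟩ := w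
  set dx := (inner ℂ (D x) x : ℂ) with hdxdef
  set dy := (inner ℂ (D y) y : ℂ) with hdydef
  set axy := (inner ℂ (S x) (S y) : ℂ) with haxydef
  set pxy := (inner ℂ x y : ℂ) with hpxydef
  -- the expansion of the form at (T w, w)
  have e1 : (inner ℂ (A y) x : ℂ) = (starRingEnd ℂ) axy := by
    rw [haxydef, hAapp, hSym (S y) x, ← inner_conj_symm]
  have e2 : (inner ℂ (S y) (Sinv x) : ℂ) = (starRingEnd ℂ) pxy := by
    rw [hpxydef, hSym y (Sinv x), hSSinv, ← inner_conj_symm]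
  have e3 : (inner ℂ (S y) (Sinv (D y)) : ℂ) = (starRingEnd ℂ) dy := by
    rw [hdydef, hSym y (Sinv (D y)), hSSinv, ← inner_conj_symm]
  have hΦ : formTheta D S Sinv θ (Tlin A D (x, y)) (x, y)
      = -dx - (θ:ℂ) * (starRingEnd ℂ) dy + (axy - (starRingEnd ℂ) axy)
        + (θ:ℂ) * (pxy - (starRingEnd ℂ) pxy) := by
    simp only [formTheta, Tlin, ContinuousLinearMap.prod_apply, ContinuousLinearMap.coe_sub',
      ContinuousLinearMap.neg_apply, ContinuousLinearMap.comp_apply, ContinuousLinearMap.coe_fst',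
      ContinuousLinearMap.coe_snd', Pi.sub_apply, map_sub, map_neg, inner_sub_left, inner_neg_left,
      hSinvA, e1, e2, e3, ← hdxdef, ← hdydef, ← haxydef, ← hpxydef]
    ring
  have hRe : (formTheta D S Sinv θ (Tlin A D (x, y)) (x, y)).re = -(dx.re + θ * dy.re) := by
    rw [hΦ]
    simp only [Complex.add_re, Complex.sub_re, Complex.neg_re, Complex.mul_re,
      Complex.ofReal_re, Complex.ofReal_im, Complex.conj_re, Complex.conj_im]
    ring
  have hIm : (formTheta D S Sinv θ (Tlin A D (x, y)) (x, y)).im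
      = -dx.im + θ*dy.im + 2*axy.im + θ*(2*pxy.im) := by
    rw [hΦ]
    simp only [Complex.add_im, Complex.sub_im, Complex.neg_im, Complex.mul_im,
      Complex.ofReal_re, Complex.ofReal_im, Complex.conj_re, Complex.conj_im]
    ring
  -- abs of the real part
  have hdxre : 0 ≤ dx.re := hDacc x
  have hdyre : 0 ≤ dy.re := hDacc y
  have hreabs : |(formTheta D S Sinv θ (Tlin A D (x, y)) (x, y)).re| = dx.re + θ * dy.re := by
    rw [hRe, abs_neg, abs_of_nonneg (add_nonneg hdxre (mul_nonneg hθ.le hdyre))]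
  -- lower bound on the diagonal form
  have hcross : ((inner ℂ (Sinv (D y)) (Sinv x) : ℂ)).re
      = ((inner ℂ (Sinv x) (Sinv (D y)) : ℂ)).re := by
    rw [← inner_conj_symm (Sinv x) (Sinv (D y)), Complex.conj_re]
  have hnadd : ‖Sinv x + Sinv (D y)‖^2
      = ‖Sinv x‖^2 + 2 * ((inner ℂ (Sinv x) (Sinv (D y)) : ℂ)).re + ‖Sinv (D y)‖^2 := by
    rw [← RCLike.re_to_complex]; exact norm_add_sq (𝕜 := ℂ) _ _
  have hΨ : ‖x‖^2 + ‖S y‖^2 + θ*‖y‖^2 ≤ (formTheta D S Sinv θ (x, y) (x, y)).re := by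
    have hexp : (formTheta D S Sinv θ (x, y) (x, y)).re
        = ‖x‖^2 + ‖S y‖^2 + θ*‖y‖^2 + θ * ‖Sinv x + Sinv (D y)‖^2 := by
      simp only [formTheta, Complex.add_re, Complex.mul_re, Complex.ofReal_re, Complex.ofReal_im,
        zero_mul, sub_zero, hns, hnadd, hcross]
      ring
    linarith [hexp, mul_nonneg hθ.le (sq_nonneg ‖Sinv x + Sinv (D y)‖)]
  -- bound the imaginary part
  have i1 := hDsec x
  have i2 := hDsec y
  have i3 : |axy.im| ≤ ‖S x‖ * ‖S y‖ := by
    refine (Complex.abs_im_le_norm axy).trans ?_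
    exact norm_inner_le_norm (𝕜 := ℂ) _ _
  have i4 : |pxy.im| ≤ ‖x‖ * ‖y‖ := by
    refine (Complex.abs_im_le_norm pxy).trans ?_
    exact norm_inner_le_norm (𝕜 := ℂ) _ _
  have himb : |(formTheta D S Sinv θ (Tlin A D (x, y)) (x, y)).im|
      ≤ ν*dx.re + θ*(ν*dy.re) + 2*(‖S x‖*‖S y‖) + θ*(2*(‖x‖*‖y‖)) := by
    rw [hIm]
    obtain ⟨a1, a2⟩ := abs_le.mp i1
    obtain ⟨c1, c2⟩ := abs_le.mp i2
    obtain ⟨d1, d2⟩ := abs_le.mp i3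
    obtain ⟨f1, f2⟩ := abs_le.mp i4
    have j2 := mul_le_mul_of_nonneg_left c2 hθ.le
    have j2' := mul_le_mul_of_nonneg_left c1 hθ.le
    have j4 := mul_le_mul_of_nonneg_left f2 hθ.le
    have j4' := mul_le_mul_of_nonneg_left f1 hθ.le
    rw [abs_le]
    constructor <;> linarith
  -- Young inequalities
  have young1 : 2*(‖S x‖*‖S y‖) ≤ t*‖S x‖^2 + b*‖S y‖^2 + (t*θ)*‖S y‖^2 := by
    have key : t*(t*‖S x‖^2 + (b + t*θ)*‖S y‖^2 - 2*(‖S x‖*‖S y‖))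
        = (t*‖S x‖ - ‖S y‖)^2 + (t*(b + t*θ) - 1)*‖S y‖^2 := by ring
    rw [htid] at key
    have h2 : 0 ≤ t*(t*‖S x‖^2 + (b + t*θ)*‖S y‖^2 - 2*(‖S x‖*‖S y‖)) := by
      rw [key]; simp; positivity
    have h3 : 0 ≤ t*‖S x‖^2 + (b + t*θ)*‖S y‖^2 - 2*(‖S x‖*‖S y‖) :=
      nonneg_of_mul_nonneg_right h2 ht
    linarith [h3]
  have young2 : θ*(2*(‖x‖*‖y‖)) ≤ r*‖x‖^2 + (r*θ)*‖y‖^2 := by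
    rw [← hr2]
    have key : r*‖x‖^2 + (r*r^2)*‖y‖^2 - r^2*(2*(‖x‖*‖y‖)) = r*(‖x‖ - r*‖y‖)^2 := by ring
    linarith [mul_nonneg hrpos.le (sq_nonneg (‖x‖ - r*‖y‖)), key]
  -- resource bounds
  have hA1 : t*‖S x‖^2 ≤ (t/δ) * dx.re := by
    have := mul_le_mul_of_nonneg_left (hδle x) (le_of_lt (div_pos ht hδpos))
    calc t*‖S x‖^2 = (t/δ) * (δ * ‖S x‖^2) := by field_simp
    _ ≤ (t/δ) * dx.re := this
  have hA2 : (t*θ)*‖S y‖^2 ≤ (t/δ) * (θ * dy.re) := by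
    have h0 := mul_le_mul_of_nonneg_left (hδle y) (mul_nonneg (le_of_lt (div_pos ht hδpos)) hθ.le)
    calc (t*θ)*‖S y‖^2 = ((t/δ)*θ) * (δ * ‖S y‖^2) := by field_simp
    _ ≤ ((t/δ)*θ) * dy.re := h0
    _ = (t/δ) * (θ * dy.re) := by ring
  have hrb : 0 ≤ r - b := by linarith
  have hB1 : (r - b)*‖x‖^2 ≤ ((r-b)/β) * dx.re := by
    have := mul_le_mul_of_nonneg_left (hβle x) (div_nonneg hrb hβpos.le)
    calc (r - b)*‖x‖^2 = ((r-b)/β) * (β * ‖x‖^2) := by field_simp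
    _ ≤ ((r-b)/β) * dx.re := this
  have hB2 : ((r - b)*θ)*‖y‖^2 ≤ ((r-b)/β) * (θ * dy.re) := by
    have h0 := mul_le_mul_of_nonneg_left (hβle y) (mul_nonneg (div_nonneg hrb hβpos.le) hθ.le)
    calc ((r - b)*θ)*‖y‖^2 = (((r-b)/β)*θ) * (β * ‖y‖^2) := by field_simp
    _ ≤ (((r-b)/β)*θ) * dy.re := h0
    _ = ((r-b)/β) * (θ * dy.re) := by ring
  -- assemble
  have hbΨ : b*(‖x‖^2 + ‖S y‖^2 + θ*‖y‖^2) ≤ b * (formTheta D S Sinv θ (x, y) (x, y)).re :=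
    mul_le_mul_of_nonneg_left hΨ hb0
  have hfin : M * |(formTheta D S Sinv θ (Tlin A D (x, y)) (x, y)).re|
      = ν*dx.re + θ*(ν*dy.re) + (t/δ)*dx.re + (t/δ)*(θ*dy.re)
        + ((r-b)/β)*dx.re + ((r-b)/β)*(θ*dy.re) := by
    rw [hreabs, hMt]; ring
  calc |(formTheta D S Sinv θ (Tlin A D (x, y)) (x, y)).im|
      ≤ ν*dx.re + θ*(ν*dy.re) + 2*(‖S x‖*‖S y‖) + θ*(2*(‖x‖*‖y‖)) := himb
    _ ≤ M * |(formTheta D S Sinv θ (Tlin A D (x, y)) (x, y)).re|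
        + b * (formTheta D S Sinv θ (x, y) (x, y)).re := by
        rw [hfin]
        linarith [young1, young2, hA1, hA2, hB1, hB2, hbΨ]
end

section
/- Under the standing assumptions, if δ > 0, then for every θ > 0 and every b with 0 ≤ b ≤ √θ, the spectrum of T is contained in the set {λ ∈ ℂ : re λ ≤ −ω_θ and |im λ| ≤ M_{θ,b}·|re λ| + b}, where M_{θ,b} = ν + 2/(δ·(b + √(b² + 4θ))) + (√θ − b)/β. -/
set_option maxSynthPendingDepth 3
set_option maxHeartbeats 1000000

open scoped InnerProductSpace

private lemma key1 (m u v K : ℝ) (hm : 0 ≤ m) (hu : 0 < u) (hv : 0 < v) (hK : 0 ≤ K)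
    (hmuv : m^2 ≤ u*v) :
    2*m + 2*Real.sqrt (K^2/4 + K*m) ≤ (u+v) + Real.sqrt ((u+v+K)^2 - 4*(u*v)) := by
  set Q := Real.sqrt (K^2/4 + K*m) with hQdef
  have hQ0 : 0 ≤ Q := Real.sqrt_nonneg _
  have hQsq : Q^2 = K^2/4 + K*m := Real.sq_sqrt (by positivity)
  have hargR : 0 ≤ (u+v+K)^2 - 4*(u*v) := by nlinarith [sq_nonneg (u-v), sq_nonneg (u+v)]
  set R := Real.sqrt ((u+v+K)^2 - 4*(u*v)) with hRdef
  have hR0 : 0 ≤ R := Real.sqrt_nonneg _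
  have hRsq : R^2 = (u+v+K)^2 - 4*(u*v) := Real.sq_sqrt hargR
  have hs2m : 2*m ≤ u + v := by nlinarith [sq_nonneg (u-v)]
  rcases le_or_gt (2*m + 2*Q) (u+v) with h | h
  · linarith
  · have hL : 0 < 2*m + 2*Q - (u+v) := by linarith
    have hs2Q : u + v - 2*m < 2*Q := by linarith
    have hcases : (m-u)*(m-v) ≤ ((u+v-2*m)/2)^2 := by nlinarith [sq_nonneg (u-v)]
    have hL2 : (2*m + 2*Q - (u+v))^2 ≤ R^2 := by
      rcases le_or_gt ((m-u)*(m-v)) 0 with hc | hc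
      · nlinarith [mul_nonneg (sub_nonneg.2 hs2m) (by linarith : (0:ℝ) ≤ K + 2*Q)]
      · nlinarith [mul_nonneg (sub_nonneg.2 hs2m) hK, mul_nonneg (sub_nonneg.2 hs2m) hQ0,
          mul_le_mul_of_nonneg_left (le_of_lt hs2Q) (sub_nonneg.2 hs2m)]
    nlinarith [hL2, hR0, hL]

private lemma tpos_aux (a d₁ d₂ μ τ : ℝ) (ha : 0 < a)
    (e₁ : μ^2 - τ^2 + μ*d₁ - τ*d₂ + a = 0) : 0 < μ^2 + τ^2 := by
  rcases eq_or_ne μ 0 with hμ | hμ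
  · rcases eq_or_ne τ 0 with hτ | hτ
    · exfalso; rw [hμ, hτ] at e₁; norm_num at e₁; linarith
    · positivity
  · positivity

private lemma dm1a (δ a d₁ : ℝ) (hδ : 0 < δ) (ha : 0 < a) (h : δ*a ≤ d₁) :
    1 ≤ d₁*(1/(δ*a)) := by
  rw [mul_one_div, le_div_iff₀ (by positivity)]; linarith

private lemma dm1b (α a d₁ : ℝ) (hα : 0 < α) (ha : 0 < a) (h : α ≤ d₁*a) :
    1 ≤ d₁*(a/α) := by
  rw [← mul_div_assoc, le_div_iff₀ hα]; linarith

private lemma dm2a (δ a d₁ : ℝ) (hδ : 0 < δ) (ha : 0 < a) (h : δ*a ≤ d₁) :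
    δ*a ≤ d₁^2*(1/(δ*a)) := by
  rw [mul_one_div, le_div_iff₀ (by positivity)]
  nlinarith [mul_self_le_mul_self (by positivity : (0:ℝ) ≤ δ*a) h]

private lemma dm2b (α δ a d₁ : ℝ) (hα : 0 < α) (ha : 0 < a) (hd₁ : 0 < d₁)
    (h : α ≤ d₁*a) (h2 : δ*a ≤ d₁) :
    δ*a ≤ d₁^2*(a/α) := by
  rw [← mul_div_assoc, le_div_iff₀ hα]
  nlinarith [mul_le_mul_of_nonneg_left h hd₁.le]

private lemma args_aux (a d₁ d₂ : ℝ) (ha : 0 < a) :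
    0 ≤ (d₁^2+d₂^2+2*a)^2 - 4*a^2 := by
  nlinarith [sq_nonneg (d₁^2+d₂^2), sq_nonneg d₁, sq_nonneg d₂]

private lemma aux1 (B a t s : ℝ) (hq : t^2 - B*t + a^2 ≤ 0) (hs0 : 0 ≤ s)
    (hssq : s^2 = B^2 - 4*a^2) (hBs : 0 ≤ B + s) : 2*a^2 ≤ t*(B+s) := by
  have hsq2 : (B-2*t)^2 ≤ s^2 := by nlinarith
  have h2t : B - s ≤ 2*t := by nlinarith [sq_nonneg (s + (B - 2*t))]
  nlinarith [mul_le_mul_of_nonneg_right h2t hBs]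

private lemma sqle_aux (s W : ℝ) (hs0 : 0 ≤ s) (hW : 0 ≤ W) (h : s^2 ≤ W^2) : s ≤ W := by
  nlinarith [sq_nonneg (s-W), sq_nonneg (s+W)]

private lemma sbound_aux (a d₁ d₂ nN δ K m Q s : ℝ) (ha : 0 < a) (hd₁ : 0 < d₁)
    (hδ : 0 < δ) (hKδ : K*δ = nN^2) (hK0 : 0 ≤ K) (hm0 : 0 ≤ m)
    (hd₁δ : δ*a ≤ d₁) (hdN : d₁^2+d₂^2 ≤ nN^2*a^2) (hdm2 : δ*a ≤ d₁^2*m)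
    (hs0 : 0 ≤ s) (hssq : s^2 = (d₁^2+d₂^2+2*a)^2 - 4*a^2)
    (hQ0 : 0 ≤ Q) (hQsq : Q^2 = K^2/4 + K*m) : s ≤ 2*a*d₁*Q := by
  have hx0 : 0 ≤ d₁^2 + d₂^2 := by positivity
  have e1 : (d₁^2+d₂^2)^2 ≤ (nN^2*a^2)^2 := by
    have h := mul_self_le_mul_self hx0 hdN
    calc (d₁^2+d₂^2)^2 = (d₁^2+d₂^2)*(d₁^2+d₂^2) := by ring
    _ ≤ (nN^2*a^2)*(nN^2*a^2) := h
    _ = (nN^2*a^2)^2 := by ring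
  have e2 : (nN^2*a^2)^2 = K^2*δ^2*a^4 := by rw [← hKδ]; ring
  have e3 : (δ*a)^2 ≤ d₁^2 := by
    have h := mul_self_le_mul_self (by positivity : (0:ℝ) ≤ δ*a) hd₁δ
    calc (δ*a)^2 = (δ*a)*(δ*a) := by ring
    _ ≤ d₁*d₁ := h
    _ = d₁^2 := by ring
  have e4 : K^2*δ^2*a^4 ≤ K^2*a^2*d₁^2 := by
    have h := mul_le_mul_of_nonneg_left e3 (by positivity : (0:ℝ) ≤ K^2*a^2)
    calc K^2*δ^2*a^4 = K^2*a^2*((δ*a)^2) := by ring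
    _ ≤ K^2*a^2*d₁^2 := h
  have e5 : 4*a*(d₁^2+d₂^2) ≤ 4*a*(nN^2*a^2) :=
    mul_le_mul_of_nonneg_left hdN (by positivity)
  have e6 : 4*a*(nN^2*a^2) = 4*a^2*(K*(δ*a)) := by rw [← hKδ]; ring
  have e7 : 4*a^2*(K*(δ*a)) ≤ 4*a^2*(K*(d₁^2*m)) :=
    mul_le_mul_of_nonneg_left (mul_le_mul_of_nonneg_left hdm2 hK0) (by positivity)
  have hW0 : 0 ≤ 2*a*d₁*Q := by positivity
  have hs2 : s^2 ≤ (2*a*d₁*Q)^2 := by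
    have hexp : (2*a*d₁*Q)^2 = K^2*a^2*d₁^2 + 4*a^2*(K*(d₁^2*m)) := by
      have h9 : (2*a*d₁*Q)^2 = 4*a^2*d₁^2*Q^2 := by ring
      rw [h9, hQsq]; ring
    have h8 : s^2 = (d₁^2+d₂^2)^2 + 4*a*(d₁^2+d₂^2) := by rw [hssq]; ring
    linarith
  exact sqle_aux s _ hs0 hW0 hs2

private lemma tB_aux (a d₁ d₂ nN δ K m t : ℝ) (ha : 0 < a) (hd₁ : 0 < d₁) (ht : 0 < t)
    (hδ : 0 < δ) (hKδ : K*δ = nN^2) (hK0 : 0 ≤ K)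
    (hd₁δ : δ*a ≤ d₁) (hdN : d₁^2+d₂^2 ≤ nN^2*a^2) (hdm1 : 1 ≤ d₁*m) :
    t*(d₁^2+d₂^2+2*a) ≤ 2*a*d₁*t*(K/2+m) := by
  have b2 : nN^2*a^2 ≤ a*(d₁*K) := by nlinarith [mul_le_mul_of_nonneg_left hd₁δ (mul_nonneg hK0 ha.le)]
  have b1 : t*(d₁^2+d₂^2) ≤ t*(a*(d₁*K)) := by
    have := hdN.trans b2
    exact mul_le_mul_of_nonneg_left this ht.le
  have b3 : t*(2*a) ≤ t*(2*a)*(d₁*m) := by nlinarith [mul_le_mul_of_nonneg_left hdm1 (by positivity : (0:ℝ) ≤ t*(2*a))]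
  nlinarith

private lemma P2_aux (a d₁ t K m Q B s : ℝ) (ha : 0 < a) (hd₁ : 0 < d₁) (ht : 0 < t)
    (h2a2 : 2*a^2 ≤ t*(B+s)) (hsb : s ≤ 2*a*d₁*Q)
    (htB : t*B ≤ 2*a*d₁*t*(K/2+m)) : a ≤ d₁*t*(K/2+m+Q) := by
  have hts : t*s ≤ t*(2*a*d₁*Q) := mul_le_mul_of_nonneg_left hsb ht.le
  have hring : 2*a*(d₁*t*(K/2+m+Q)) = 2*a*d₁*t*(K/2+m) + t*(2*a*d₁*Q) := by ring
  have h1 : 2*a^2 ≤ 2*a*(d₁*t*(K/2+m+Q)) := by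
    have : t*(B+s) = t*B + t*s := by ring
    linarith
  nlinarith

private lemma re_bound (a d₁ d₂ μ τ β α δ nN θ : ℝ)
    (ha : 0 < a) (hβp : 0 < β) (hαp : 0 < α) (hδp : 0 < δ) (hθ : 0 < θ)
    (hd₁β : β ≤ d₁) (hd₁δ : δ*a ≤ d₁) (hd₁α : α ≤ d₁*a)
    (hdN : d₁^2 + d₂^2 ≤ nN^2 * a^2)
    (e₁ : μ^2 - τ^2 + μ*d₁ - τ*d₂ + a = 0)
    (e₂ : 2*μ*τ + μ*d₂ + τ*d₁ = 0) :
    μ < 0 ∧ 1 ≤ (-μ) * (1/β + nN^2/δ/2 + (θ/α + 1/(θ*δ))/2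
      + Real.sqrt ((θ/α + 1/(θ*δ) + nN^2/δ)^2 - 4/(α*δ))/2) := by
  have hd₁ : 0 < d₁ := lt_of_lt_of_le hβp hd₁β
  have E3 : μ*(μ^2+τ^2) + d₁*(μ^2+τ^2) + a*μ = 0 := by linear_combination μ*e₁ + τ*e₂
  have E5 : (μ^2+τ^2)^2 - (d₁^2+d₂^2+2*a)*(μ^2+τ^2) + a^2 + 4*a*μ^2 = 0 := by
    linear_combination ((μ^2 - τ^2 + μ*d₁ - τ*d₂ + a) - 2*(d₁*μ - d₂*τ)) * e₁
      + ((2*μ*τ + μ*d₂ + τ*d₁) - 2*(d₁*τ + d₂*μ)) * e₂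
  set t := μ^2 + τ^2 with htdef
  have ht : 0 < t := tpos_aux a d₁ d₂ μ τ ha e₁
  clear_value t
  have hμta : μ*(t+a) = -(d₁*t) := by linear_combination E3
  have hμneg : μ < 0 := by
    by_contra hcon
    push_neg at hcon
    have h1 : 0 ≤ μ*(t+a) := mul_nonneg hcon (by linarith)
    have h2 : 0 < d₁*t := mul_pos hd₁ ht
    linarith
  refine ⟨hμneg, ?_⟩
  set K := nN^2/δ with hKdef
  have hKδ : K*δ = nN^2 := by rw [hKdef]; field_simp
  have hK0 : 0 ≤ K := by positivity
  set m := min (1/(δ*a)) (a/α) with hmdef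
  have hm1 : m ≤ 1/(δ*a) := min_le_left _ _
  have hm2 : m ≤ a/α := min_le_right _ _
  have hm0 : 0 ≤ m := le_min (by positivity) (by positivity)
  have hdm1 : 1 ≤ d₁ * m := by
    rcases min_choice (1/(δ*a)) (a/α) with h | h <;> rw [hmdef, h]
    · exact dm1a δ a d₁ hδp ha hd₁δ
    · exact dm1b α a d₁ hαp ha hd₁α
  have hdm2 : δ*a ≤ d₁^2 * m := by
    rcases min_choice (1/(δ*a)) (a/α) with h | h <;> rw [hmdef, h]
    · exact dm2a δ a d₁ hδp ha hd₁δ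
    · exact dm2b α δ a d₁ hαp ha hd₁ hd₁α hd₁δ
  set Q := Real.sqrt (K^2/4 + K*m) with hQdef
  have hQ0 : 0 ≤ Q := Real.sqrt_nonneg _
  have hQsq : Q^2 = K^2/4 + K*m := Real.sq_sqrt (by positivity)
  set B := d₁^2 + d₂^2 + 2*a with hBdef
  have hq : t^2 - B*t + a^2 ≤ 0 := by
    have h4 : 0 ≤ 4*a*μ^2 := by positivity
    linarith
  have hargs : 0 ≤ B^2 - 4*a^2 := args_aux a d₁ d₂ ha
  set s := Real.sqrt (B^2 - 4*a^2) with hsdef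
  have hs0 : 0 ≤ s := Real.sqrt_nonneg _
  have hssq : s^2 = B^2 - 4*a^2 := Real.sq_sqrt hargs
  have hB0 : 0 ≤ B := by positivity
  have h2a2 : 2*a^2 ≤ t*(B+s) := aux1 B a t s hq hs0 hssq (by linarith)
  have hsbound : s ≤ 2*a*d₁*Q := sbound_aux a d₁ d₂ nN δ K m Q s ha hd₁ hδp hKδ hK0 hm0 hd₁δ hdN hdm2 hs0 hssq hQ0 hQsq
  have htB : t*B ≤ 2*a*d₁*t*(K/2+m) := tB_aux a d₁ d₂ nN δ K m t ha hd₁ ht hδp hKδ hK0 hd₁δ hdN hdm1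
  have hP2 : a ≤ d₁*t*(K/2+m+Q) := P2_aux a d₁ t K m Q B s ha hd₁ ht h2a2 hsbound htB
  have huv : (θ/α)*(1/(θ*δ)) = 1/(α*δ) := by
    rw [div_mul_div_comm, mul_one, div_eq_div_iff (by positivity) (by positivity)]
    ring
  have hm2uv : m^2 ≤ (θ/α)*(1/(θ*δ)) := by
    rw [huv]
    have h1 : m*m ≤ (1/(δ*a))*(a/α) := mul_le_mul hm1 hm2 hm0 (by positivity)
    have h2 : (1/(δ*a))*(a/α) = 1/(α*δ) := by
      rw [div_mul_div_comm, one_mul, div_eq_div_iff (by positivity) (by positivity)]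
      ring
    calc m^2 = m*m := pow_two m
    _ ≤ (1/(δ*a))*(a/α) := h1
    _ = 1/(α*δ) := h2
  have hkey := key1 m (θ/α) (1/(θ*δ)) K hm0 (by positivity) (by positivity) hK0 hm2uv
  rw [huv, (by ring : 4*(1/(α*δ)) = 4/(α*δ))] at hkey
  set R := Real.sqrt ((θ/α + 1/(θ*δ) + K)^2 - 4/(α*δ)) with hRdef
  have hR0 : 0 ≤ R := Real.sqrt_nonneg _
  have hP1 : t ≤ d₁*t*(1/β) := by
    rw [mul_one_div, le_div_iff₀ hβp]
    have := mul_le_mul_of_nonneg_right hd₁β ht.le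
    linarith
  have hmono : d₁*t*(K/2+m+Q) ≤ d₁*t*(K/2 + (θ/α + 1/(θ*δ))/2 + R/2) :=
    mul_le_mul_of_nonneg_left (by linarith) (by positivity)
  have hfin : t + a ≤ (d₁*t)*(1/β + K/2 + (θ/α + 1/(θ*δ))/2 + R/2) := by
    have hh : (d₁*t)*(1/β + K/2 + (θ/α + 1/(θ*δ))/2 + R/2)
        = d₁*t*(1/β) + d₁*t*(K/2 + (θ/α + 1/(θ*δ))/2 + R/2) := by ring
    linarith
  have hμd : (-μ)*(t+a) = d₁*t := by linear_combination -hμta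
  have hstep : 1*(t+a) ≤ ((-μ)*(1/β + K/2 + (θ/α + 1/(θ*δ))/2 + R/2))*(t+a) := by
    calc 1*(t+a) = t + a := by ring
    _ ≤ (d₁*t)*(1/β + K/2 + (θ/α + 1/(θ*δ))/2 + R/2) := hfin
    _ = ((-μ)*(t+a))*(1/β + K/2 + (θ/α + 1/(θ*δ))/2 + R/2) := by rw [hμd]
    _ = ((-μ)*(1/β + K/2 + (θ/α + 1/(θ*δ))/2 + R/2))*(t+a) := by ring
  have hfinal := le_of_mul_le_mul_right hstep (by linarith : (0:ℝ) < t+a)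
  calc (1:ℝ) ≤ (-μ)*(1/β + K/2 + (θ/α + 1/(θ*δ))/2 + R/2) := hfinal
  _ = (-μ) * (1/β + nN^2/δ/2 + (θ/α + 1/(θ*δ))/2 + R/2) := by rw [hKdef]

private lemma core2 (t X c : ℝ) (ht : 0 ≤ t) (hX : 0 < X) (hXb : X ≤ c) :
    2*Real.sqrt t ≤ t/X + c := by
  have h2 : (Real.sqrt t)^2 = t := Real.sq_sqrt ht
  have h3 : 2*Real.sqrt t * X ≤ t + X^2 := by nlinarith [sq_nonneg (Real.sqrt t - X)]
  have h4 : 2*Real.sqrt t ≤ (t + X^2)/X := (le_div_iff₀ hX).2 h3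
  have h5 : (t + X^2)/X = t/X + X := by field_simp
  linarith

private lemma case_core (t a X sθ b τabs : ℝ) (ht : 0 < t) (ha : 0 < a) (hX : 0 < X)
    (hb0 : 0 ≤ b) (hsb : b ≤ sθ) (hXb : X ≤ sθ + b)
    (hτ : τabs ≤ Real.sqrt t) (hτ0 : 0 ≤ τabs) :
    2*τabs*(min t a) ≤ a*t/X + (sθ - b)*t + b*(t+a) := by
  have hcore0 : 2*Real.sqrt t ≤ t/X + (sθ + b) := core2 t X (sθ + b) ht.le hX hXb
  have hcore : 2*Real.sqrt t ≤ t/X + sθ + b := by linarith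
  have hrw : a*t/X + (sθ - b)*t + b*(t+a) = a*(t/X) + sθ*t + a*b := by
    field_simp; ring
  rw [hrw]
  rcases le_total t a with hta | hta
  · rw [min_eq_left hta]
    have h1 : 2*τabs*t ≤ 2*Real.sqrt t*t := by
      have := mul_le_mul_of_nonneg_right hτ (by linarith : (0:ℝ) ≤ 2*t)
      nlinarith
    have h2 : 2*Real.sqrt t*t ≤ (t/X + sθ + b)*t := mul_le_mul_of_nonneg_right hcore ht.le
    have h3 : (t/X + sθ + b)*t ≤ a*(t/X) + sθ*t + a*b := by
      have hXt : 0 ≤ t/X := by positivity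
      have c1 : t*(t/X) ≤ a*(t/X) := mul_le_mul_of_nonneg_right hta hXt
      have c2 : b*t ≤ a*b := by nlinarith
      nlinarith
    linarith
  · rw [min_eq_right hta]
    have h1 : 2*τabs*a ≤ 2*Real.sqrt t*a := by
      have := mul_le_mul_of_nonneg_right hτ (by linarith : (0:ℝ) ≤ 2*a)
      nlinarith
    have h2 : 2*Real.sqrt t*a ≤ (t/X + sθ + b)*a := mul_le_mul_of_nonneg_right hcore ha.le
    have h3 : (t/X + sθ + b)*a ≤ a*(t/X) + sθ*t + a*b := by
      have c1 : sθ*a ≤ sθ*t := mul_le_mul_of_nonneg_left hta (by linarith)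
      nlinarith
    linarith

private lemma im_bound (a d₁ d₂ μ τ β δ ν X sθ b : ℝ)
    (ha : 0 < a) (hβp : 0 < β) (hδp : 0 < δ)
    (hd₁β : β ≤ d₁) (hd₁δ : δ*a ≤ d₁)
    (hsec : |d₂| ≤ ν*d₁) (hν : 0 ≤ ν)
    (hb0 : 0 ≤ b) (hbs : b ≤ sθ)
    (hX : 0 < X) (hXb : X ≤ sθ + b)
    (e₁ : μ^2 - τ^2 + μ*d₁ - τ*d₂ + a = 0)
    (e₂ : 2*μ*τ + μ*d₂ + τ*d₁ = 0) :
    |τ| ≤ (ν + 1/(δ*X) + (sθ - b)/β)*(-μ) + b := by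
  have hd₁ : 0 < d₁ := lt_of_lt_of_le hβp hd₁β
  have E3 : μ*(μ^2+τ^2) + d₁*(μ^2+τ^2) + a*μ = 0 := by linear_combination μ*e₁ + τ*e₂
  have E4 : τ*(μ^2+τ^2) + d₂*(μ^2+τ^2) - a*τ = 0 := by linear_combination μ*e₂ - τ*e₁
  set t := μ^2 + τ^2 with htdef
  have ht : 0 < t := tpos_aux a d₁ d₂ μ τ ha e₁
  have hτsq : τ^2 ≤ t := by nlinarith [sq_nonneg μ]
  clear_value t
  have hμta : (-μ)*(t+a) = d₁*t := by linear_combination -E3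
  have hμpos : 0 < -μ := by
    have h2 : 0 < d₁*t := mul_pos hd₁ ht
    nlinarith
  have hτt : |τ| ≤ Real.sqrt t := by
    calc |τ| = Real.sqrt (τ^2) := (Real.sqrt_sq_eq_abs τ).symm
    _ ≤ Real.sqrt t := Real.sqrt_le_sqrt hτsq
  have hE4' : τ*(t-a) = -(d₂*t) := by linear_combination E4
  have habs : |τ| * |t - a| ≤ ν*(d₁*t) := by
    have h1 : |τ| * |t - a| = |τ * (t - a)| := (abs_mul τ (t-a)).symm
    rw [h1, hE4', abs_neg, abs_mul, abs_of_pos ht]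
    calc |d₂| * t ≤ ν * d₁ * t := mul_le_mul_of_nonneg_right hsec ht.le
    _ = ν * (d₁ * t) := by ring
  have hmin : |t-a| + 2*(min t a) = t + a := by
    rcases le_total t a with h | h
    · rw [min_eq_left h, abs_of_nonpos (by linarith)]; ring
    · rw [min_eq_right h, abs_of_nonneg (by linarith)]; ring
  have hcase := case_core t a X sθ b (|τ|) ht ha hX hb0 hbs hXb hτt (abs_nonneg τ)
  have hdiv1 : a*t/X ≤ (1/(δ*X))*(d₁*t) := by
    have h0 : (1/(δ*X))*(d₁*t) = d₁*t/(δ*X) := by ring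
    rw [h0, div_le_div_iff₀ hX (by positivity)]
    have h2 := mul_le_mul_of_nonneg_right
      (mul_le_mul_of_nonneg_right hd₁δ ht.le) hX.le
    linarith [h2]
  have hdiv2 : (sθ - b)*t ≤ ((sθ - b)/β)*(d₁*t) := by
    rw [div_mul_eq_mul_div, le_div_iff₀ hβp]
    have h2 : β*t ≤ d₁*t := mul_le_mul_of_nonneg_right hd₁β ht.le
    have h1 : (sθ-b)*(β*t) ≤ (sθ-b)*(d₁*t) :=
      mul_le_mul_of_nonneg_left h2 (by linarith)
    linarith [h1]
  have hmain : |τ| * (t + a) ≤ ((ν + 1/(δ*X) + (sθ - b)/β)*(-μ) + b)*(t+a) := by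
    have h1 : |τ| * (t + a) = |τ| * |t - a| + 2 * |τ| * (min t a) := by
      rw [← hmin]; ring
    have h2 : ((ν + 1/(δ*X) + (sθ - b)/β)*(-μ) + b)*(t+a)
        = ν*((-μ)*(t+a)) + (1/(δ*X))*((-μ)*(t+a)) + ((sθ-b)/β)*((-μ)*(t+a)) + b*(t+a) := by
      ring
    rw [h1, h2, hμta]
    linarith
  have := le_of_mul_le_mul_right hmain (by linarith : (0:ℝ) < t+a)
  linarith

private lemma root_re_im (d : ℂ) (a : ℝ) (r : ℂ) (h : r^2 + d*r + (a:ℂ) = 0) :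
    (r.re^2 - r.im^2 + r.re*d.re - r.im*d.im + a = 0) ∧
    (2*r.re*r.im + r.re*d.im + r.im*d.re = 0) := by
  rw [Complex.ext_iff] at h
  obtain ⟨h1, h2⟩ := h
  simp only [Complex.add_re, Complex.add_im, Complex.mul_re, Complex.mul_im,
    Complex.ofReal_re, Complex.ofReal_im, Complex.zero_re, Complex.zero_im,
    pow_two] at h1 h2
  constructor
  · nlinarith [h1]
  · nlinarith [h2]

open ContinuousLinearMap in
private lemma isUnit_of_coercive {H : Type*} [NormedAddCommGroup H] [InnerProductSpace ℂ H]
    [CompleteSpace H] (P : H →L[ℂ] H) (c : ℝ) (hc : 0 < c)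
    (hP : ∀ x : H, c * ‖x‖ ≤ ‖P x‖)
    (hPa : ∀ x : H, c * ‖x‖ ≤ ‖ContinuousLinearMap.adjoint P x‖) : IsUnit P := by
  have hker : LinearMap.ker (P : H →ₗ[ℂ] H) = ⊥ := by
    rw [LinearMap.ker_eq_bot']
    intro x hx
    have := hP x
    rw [show P x = 0 from hx, norm_zero] at this
    have : ‖x‖ ≤ 0 := by
      by_contra hcon
      push_neg at hcon
      nlinarith
    simpa using le_antisymm this (norm_nonneg x)
  have hanti : AntilipschitzWith (⟨c⁻¹, by positivity⟩ : NNReal) P := by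
    apply ContinuousLinearMap.antilipschitz_of_bound
    intro x
    show ‖x‖ ≤ c⁻¹ * ‖P x‖
    calc ‖x‖ = c⁻¹ * (c * ‖x‖) := by
          rw [← mul_assoc, inv_mul_cancel₀ hc.ne', one_mul]
    _ ≤ c⁻¹ * ‖P x‖ := mul_le_mul_of_nonneg_left (hP x) (by positivity)
  have hclosed : IsClosed (Set.range P) := hanti.isClosed_range P.uniformContinuous
  have hclosed' : IsClosed ((LinearMap.range (P : H →ₗ[ℂ] H) : Submodule ℂ H) : Set H) := by
    have : ((LinearMap.range (P : H →ₗ[ℂ] H) : Submodule ℂ H) : Set H) = Set.range P := by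
      ext y; simp [LinearMap.mem_range]
    rw [this]; exact hclosed
  haveI : CompleteSpace (LinearMap.range (P : H →ₗ[ℂ] H) : Submodule ℂ H) := hclosed'.completeSpace_coe
  have horth : (LinearMap.range (P : H →ₗ[ℂ] H))ᗮ = ⊥ := by
    rw [Submodule.eq_bot_iff]
    intro y hy
    have hy' : ∀ x : H, (inner ℂ (P x) y : ℂ) = 0 := by
      intro x
      exact hy (P x) (LinearMap.mem_range_self _ x)
    have hadj : ContinuousLinearMap.adjoint P y = 0 := by
      have h1 : ∀ x : H, (inner ℂ x (ContinuousLinearMap.adjoint P y) : ℂ) = 0 := by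
        intro x
        rw [ContinuousLinearMap.adjoint_inner_right]
        exact hy' x
      have := h1 (ContinuousLinearMap.adjoint P y)
      rwa [inner_self_eq_zero] at this
    have := hPa y
    rw [hadj, norm_zero] at this
    have hy0 : ‖y‖ ≤ 0 := by
      by_contra hcon
      push_neg at hcon
      nlinarith
    simpa using le_antisymm hy0 (norm_nonneg y)
  have hrange : LinearMap.range (P : H →ₗ[ℂ] H) = ⊤ := Submodule.orthogonal_eq_bot_iff.mp horth
  exact ContinuousLinearMap.isUnit_iff_bijective.mpr
    ⟨LinearMap.ker_eq_bot.mp hker, LinearMap.range_eq_top.mp hrange⟩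

private lemma sep_exists (ω M b : ℝ) (hω : 0 < ω) (hM : 0 ≤ M) (hb0 : 0 ≤ b) (lam : ℂ)
    (hcon : ¬(lam.re ≤ -ω ∧ |lam.im| ≤ M * |lam.re| + b)) :
    ∃ ε : ℝ, 0 < ε ∧ ∀ r : ℂ, r.re ≤ -ω → |r.im| ≤ M*(-r.re) + b → r.re < 0 →
      ε ≤ ‖(starRingEnd ℂ) lam - r‖ := by
  by_cases hre : lam.re ≤ -ω
  · have him : ¬(|lam.im| ≤ M * |lam.re| + b) := fun h => hcon ⟨hre, h⟩
    push_neg at him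
    refine ⟨(|lam.im| - M*|lam.re| - b)/(M+1), div_pos (by linarith) (by linarith), ?_⟩
    intro r h1 h2 h3
    have hu : |lam.re - r.re| ≤ ‖(starRingEnd ℂ) lam - r‖ := by
      have e1 : ((starRingEnd ℂ) lam - r).re = lam.re - r.re := by
        simp [Complex.sub_re, Complex.conj_re]
      calc |lam.re - r.re| = |((starRingEnd ℂ) lam - r).re| := by rw [e1]
      _ ≤ ‖(starRingEnd ℂ) lam - r‖ := Complex.abs_re_le_norm _
      _ = ‖(starRingEnd ℂ) lam - r‖ := rfl
    have hv : |lam.im + r.im| ≤ ‖(starRingEnd ℂ) lam - r‖ := by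
      have e1 : ((starRingEnd ℂ) lam - r).im = -(lam.im + r.im) := by
        simp [Complex.sub_im, Complex.conj_im]; ring
      calc |lam.im + r.im| = |((starRingEnd ℂ) lam - r).im| := by rw [e1, abs_neg]
      _ ≤ ‖(starRingEnd ℂ) lam - r‖ := Complex.abs_im_le_norm _
      _ = ‖(starRingEnd ℂ) lam - r‖ := rfl
    have ha1 : |lam.im| ≤ |lam.im + r.im| + |r.im| := by
      calc |lam.im| = |(lam.im + r.im) + (- r.im)| := by ring_nf
      _ ≤ |lam.im + r.im| + |(- r.im)| := abs_add_le _ _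
      _ = |lam.im + r.im| + |r.im| := by rw [abs_neg]
    have ha2 : -r.re = |r.re| := (abs_of_neg h3).symm
    have ha3 : |r.re| ≤ |lam.re| + |lam.re - r.re| := by
      calc |r.re| = |lam.re - (lam.re - r.re)| := by ring_nf
      _ ≤ |lam.re| + |lam.re - r.re| := abs_sub _ _
    have hMu : M * |r.re| ≤ M * (|lam.re| + |lam.re - r.re|) :=
      mul_le_mul_of_nonneg_left ha3 hM
    have hMw : M * |lam.re - r.re| ≤ M * ‖(starRingEnd ℂ) lam - r‖ :=
      mul_le_mul_of_nonneg_left hu hM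
    rw [div_le_iff₀ (by linarith : (0:ℝ) < M + 1)]
    have h4 : |r.im| ≤ M*|r.re| + b := by rw [← ha2]; exact h2
    nlinarith [hv, ha1, h4, hMu, hMw]
  · push_neg at hre
    refine ⟨lam.re + ω, by linarith, ?_⟩
    intro r h1 _ _
    have e1 : ((starRingEnd ℂ) lam - r).re = lam.re - r.re := by
      simp [Complex.sub_re, Complex.conj_re]
    have h2 : lam.re - r.re ≤ |((starRingEnd ℂ) lam - r).re| := le_abs_self _
    have h3 := Complex.abs_re_le_norm ((starRingEnd ℂ) lam - r)
    rw [e1] at h2 h3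
    have h4 : ‖(starRingEnd ℂ) lam - r‖ = ‖(starRingEnd ℂ) lam - r‖ :=
      rfl
    rw [h4] at h3
    calc lam.re + ω ≤ lam.re - r.re := by linarith
    _ ≤ |lam.re - r.re| := le_abs_self _
    _ ≤ ‖(starRingEnd ℂ) lam - r‖ := h3

/-- if `δ > 0`, then for every `θ > 0` and every `b` with `0 ≤ b ≤ √θ`,
the spectrum of `T` is contained in
`{λ : re λ ≤ −ω_θ and |im λ| ≤ M_{θ,b}·|re λ| + b}`. -/
theorem spectrum_subset_theta_b
    {H : Type*} [NormedAddCommGroup H] [InnerProductSpace ℂ H] [CompleteSpace H]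
    [Nontrivial H]
    (A D S Sinv : H →L[ℂ] H)
    (hA : IsSelfAdjoint A) (a₀ : ℝ) (ha₀ : 0 < a₀)
    (hApd : ∀ x : H, a₀ * ‖x‖ ^ 2 ≤ (inner ℂ (A x) x : ℂ).re)
    (hSsa : IsSelfAdjoint S) (hSpos : ∀ x : H, 0 ≤ (inner ℂ (S x) x : ℂ).re)
    (hSsq : S * S = A)
    (hSinv : S * Sinv = 1) (hSinv' : Sinv * S = 1)
    (hDacc : ∀ x : H, 0 ≤ (inner ℂ (D x) x : ℂ).re)
    (ν : ℝ) (hν : 0 < ν)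
    (hDsec : ∀ x : H, |(inner ℂ (D x) x : ℂ).im| ≤ ν * (inner ℂ (D x) x : ℂ).re)
    (α β δ : ℝ)
    (hα : α = ⨅ x : {x : H // x ≠ 0}, (inner ℂ (D (x : H)) (x : H) : ℂ).re / ‖Sinv (x : H)‖ ^ 2)
    (hβ : β = ⨅ x : {x : H // x ≠ 0}, (inner ℂ (D (x : H)) (x : H) : ℂ).re / ‖(x : H)‖ ^ 2)
    (hδ : δ = ⨅ x : {x : H // x ≠ 0}, (inner ℂ (D (x : H)) (x : H) : ℂ).re / ‖S (x : H)‖ ^ 2)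
    (hδpos : 0 < δ)
    (θ : ℝ) (hθ : 0 < θ)
    (b : ℝ) (hb0 : 0 ≤ b) (hb : b ≤ Real.sqrt θ)
    (ω M : ℝ)
    (hω : ω = (1 / β + ‖Sinv * D * Sinv‖ ^ 2 / (2 * δ)
        + (θ / α + 1 / (θ * δ)) / 2
        + Real.sqrt ((θ / α + 1 / (θ * δ) + ‖Sinv * D * Sinv‖ ^ 2 / δ) ^ 2
            - 4 / (α * δ)) / 2)⁻¹)
    (hM : M = ν + 2 / (δ * (b + Real.sqrt (b ^ 2 + 4 * θ))) + (Real.sqrt θ - b) / β) :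
    spectrum ℂ (Tlin A D) ⊆
      {lam : ℂ | lam.re ≤ -ω ∧ |lam.im| ≤ M * |lam.re| + b} := by
  intro lam hlam
  by_contra hcon
  rw [Set.mem_setOf_eq] at hcon
  obtain ⟨x0, hx0⟩ := exists_ne (0 : H)
  haveI : Nonempty {x : H // x ≠ 0} := ⟨⟨x0, hx0⟩⟩
  -- ## basic algebraic facts about S, Sinv
  have hSinvsa : IsSelfAdjoint Sinv := by
    show star Sinv = Sinv
    calc star Sinv = star Sinv * (S * Sinv) := by rw [hSinv, mul_one]
    _ = (star Sinv * S) * Sinv := by rw [mul_assoc]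
    _ = (star Sinv * star S) * Sinv := by rw [hSsa.star_eq]
    _ = (star (S * Sinv)) * Sinv := by rw [← star_mul]
    _ = Sinv := by rw [hSinv, star_one, one_mul]
  have hSinvS : ∀ x : H, Sinv (S x) = x := by
    intro x
    have := congrArg (fun f : H →L[ℂ] H => f x) hSinv'
    simpa using this
  have hSSinv : ∀ x : H, S (Sinv x) = x := by
    intro x
    have := congrArg (fun f : H →L[ℂ] H => f x) hSinv
    simpa using this
  have hSx_ne : ∀ x : H, x ≠ 0 → S x ≠ 0 := by
    intro x hx h
    exact hx (by rw [← hSinvS x, h, map_zero])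
  have hSsym : ∀ u v : H, (inner ℂ (S u) v : ℂ) = inner ℂ u (S v) := by
    intro u v
    conv_lhs => rw [← hSsa.adjoint_eq]
    exact ContinuousLinearMap.adjoint_inner_left S v u
  have hSinvsym : ∀ u v : H, (inner ℂ (Sinv u) v : ℂ) = inner ℂ u (Sinv v) := by
    intro u v
    conv_lhs => rw [← hSinvsa.adjoint_eq]
    exact ContinuousLinearMap.adjoint_inner_left Sinv v u
  -- ## infimum inequalities
  have hβle : ∀ x : H, x ≠ 0 → β * ‖x‖^2 ≤ (inner ℂ (D x) x : ℂ).re := by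
    intro x hx
    have hbdd : BddBelow (Set.range fun x : {x : H // x ≠ 0} =>
        (inner ℂ (D (x : H)) (x : H) : ℂ).re / ‖(x : H)‖ ^ 2) := by
      refine ⟨0, ?_⟩
      rintro y ⟨i, rfl⟩
      exact div_nonneg (hDacc _) (by positivity)
    have h1 : β ≤ (inner ℂ (D x) x : ℂ).re / ‖x‖ ^ 2 := by
      rw [hβ]; exact ciInf_le hbdd ⟨x, hx⟩
    have hx2 : (0:ℝ) < ‖x‖^2 := pow_pos (norm_pos_iff.mpr hx) 2
    calc β * ‖x‖^2 ≤ ((inner ℂ (D x) x : ℂ).re / ‖x‖ ^ 2) * ‖x‖^2 :=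
          mul_le_mul_of_nonneg_right h1 hx2.le
    _ = (inner ℂ (D x) x : ℂ).re := by field_simp
  have hδle : ∀ x : H, x ≠ 0 → δ * ‖S x‖^2 ≤ (inner ℂ (D x) x : ℂ).re := by
    intro x hx
    have hbdd : BddBelow (Set.range fun x : {x : H // x ≠ 0} =>
        (inner ℂ (D (x : H)) (x : H) : ℂ).re / ‖S (x : H)‖ ^ 2) := by
      refine ⟨0, ?_⟩
      rintro y ⟨i, rfl⟩
      exact div_nonneg (hDacc _) (by positivity)
    have h1 : δ ≤ (inner ℂ (D x) x : ℂ).re / ‖S x‖ ^ 2 := by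
      rw [hδ]; exact ciInf_le hbdd ⟨x, hx⟩
    have hx2 : (0:ℝ) < ‖S x‖^2 := pow_pos (norm_pos_iff.mpr (hSx_ne x hx)) 2
    calc δ * ‖S x‖^2 ≤ ((inner ℂ (D x) x : ℂ).re / ‖S x‖ ^ 2) * ‖S x‖^2 :=
          mul_le_mul_of_nonneg_right h1 hx2.le
    _ = (inner ℂ (D x) x : ℂ).re := by rw [div_mul_cancel₀ _ hx2.ne']
  have hSinvx_ne : ∀ x : H, x ≠ 0 → Sinv x ≠ 0 := by
    intro x hx h
    exact hx (by rw [← hSSinv x, h, map_zero])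
  have hαle : ∀ x : H, x ≠ 0 → α * ‖Sinv x‖^2 ≤ (inner ℂ (D x) x : ℂ).re := by
    intro x hx
    have hbdd : BddBelow (Set.range fun x : {x : H // x ≠ 0} =>
        (inner ℂ (D (x : H)) (x : H) : ℂ).re / ‖Sinv (x : H)‖ ^ 2) := by
      refine ⟨0, ?_⟩
      rintro y ⟨i, rfl⟩
      exact div_nonneg (hDacc _) (by positivity)
    have h1 : α ≤ (inner ℂ (D x) x : ℂ).re / ‖Sinv x‖ ^ 2 := by
      rw [hα]; exact ciInf_le hbdd ⟨x, hx⟩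
    have hx2 : (0:ℝ) < ‖Sinv x‖^2 := pow_pos (norm_pos_iff.mpr (hSinvx_ne x hx)) 2
    calc α * ‖Sinv x‖^2 ≤ ((inner ℂ (D x) x : ℂ).re / ‖Sinv x‖ ^ 2) * ‖Sinv x‖^2 :=
          mul_le_mul_of_nonneg_right h1 hx2.le
    _ = (inner ℂ (D x) x : ℂ).re := by rw [div_mul_cancel₀ _ hx2.ne']
  -- ## positivity of α and β
  have hSinvnorm : 0 < ‖Sinv‖ := by
    rw [norm_pos_iff]
    intro h
    have h1 : (1 : H →L[ℂ] H) = 0 := by rw [← hSinv, h, mul_zero]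
    obtain ⟨x, hx⟩ := exists_ne (0 : H)
    apply hx
    have := congrArg (fun f : H →L[ℂ] H => f x) h1
    simpa using this
  have hnormx : ∀ x : H, ‖x‖ ≤ ‖Sinv‖ * ‖S x‖ := by
    intro x
    calc ‖x‖ = ‖Sinv (S x)‖ := by rw [hSinvS]
    _ ≤ ‖Sinv‖ * ‖S x‖ := Sinv.le_opNorm (S x)
  have hβpos : 0 < β := by
    have h1 : ∀ i : {x : H // x ≠ 0}, δ/‖Sinv‖^2
        ≤ (inner ℂ (D (i : H)) (i : H) : ℂ).re / ‖(i : H)‖ ^ 2 := by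
      rintro ⟨x, hx⟩
      have hx2 : (0:ℝ) < ‖x‖^2 := pow_pos (norm_pos_iff.mpr hx) 2
      rw [div_le_div_iff₀ (by positivity) hx2]
      have h2 := hδle x hx
      have h3 : ‖x‖^2 ≤ ‖Sinv‖^2 * ‖S x‖^2 := by
        have := hnormx x
        nlinarith [norm_nonneg x, norm_nonneg (S x), norm_nonneg Sinv]
      nlinarith [sq_nonneg ‖Sinv‖, hδpos]
    have h2 : δ/‖Sinv‖^2 ≤ β := by
      rw [hβ]; exact le_ciInf h1
    have : (0:ℝ) < δ/‖Sinv‖^2 := by positivity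
    linarith
  have hαpos : 0 < α := by
    have h1 : ∀ i : {x : H // x ≠ 0}, δ/‖Sinv‖^4
        ≤ (inner ℂ (D (i : H)) (i : H) : ℂ).re / ‖Sinv (i : H)‖ ^ 2 := by
      rintro ⟨x, hx⟩
      have hx2 : (0:ℝ) < ‖Sinv x‖^2 := pow_pos (norm_pos_iff.mpr (hSinvx_ne x hx)) 2
      rw [div_le_div_iff₀ (by positivity) hx2]
      have h2 := hδle x hx
      have h4 : ‖Sinv x‖ ≤ ‖Sinv‖ * ‖x‖ := Sinv.le_opNorm x
      have h5 : ‖x‖ ≤ ‖Sinv‖ * ‖S x‖ := hnormx x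
      have h6 : ‖Sinv x‖ ≤ ‖Sinv‖^2 * ‖S x‖ := by nlinarith [norm_nonneg (Sinv x), norm_nonneg Sinv, norm_nonneg x, norm_nonneg (S x)]
      have h7 : ‖Sinv x‖^2 ≤ ‖Sinv‖^4 * ‖S x‖^2 := by nlinarith [norm_nonneg (Sinv x), norm_nonneg Sinv, norm_nonneg (S x)]
      nlinarith [hδpos, pow_pos hSinvnorm 4]
    have h2 : δ/‖Sinv‖^4 ≤ α := by
      rw [hα]; exact le_ciInf h1
    have : (0:ℝ) < δ/‖Sinv‖^4 := by positivity
    linarith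
  -- ## bound |⟪Dx,x⟫| ≤ ‖N‖ ‖Sx‖²
  set nN : ℝ := ‖Sinv * D * Sinv‖ with hnNdef
  have hdabs : ∀ x : H, ‖(inner ℂ (D x) x : ℂ)‖ ≤ nN * ‖S x‖^2 := by
    intro x
    have h1 : (Sinv * D * Sinv) (S x) = Sinv (D x) := by
      simp only [ContinuousLinearMap.mul_apply]
      rw [hSinvS]
    have h2 : (inner ℂ (D x) x : ℂ) = inner ℂ ((Sinv * D * Sinv) (S x)) (S x) := by
      rw [h1, hSinvsym (D x) (S x), hSinvS]
    rw [h2]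
    calc ‖(inner ℂ ((Sinv * D * Sinv) (S x)) (S x) : ℂ)‖
        ≤ ‖(Sinv * D * Sinv) (S x)‖ * ‖S x‖ := norm_inner_le_norm _ _
    _ ≤ (nN * ‖S x‖) * ‖S x‖ := by
        have := (Sinv * D * Sinv).le_opNorm (S x)
        exact mul_le_mul_of_nonneg_right this (norm_nonneg _)
    _ = nN * ‖S x‖^2 := by ring
  -- ## ω and M arithmetic
  set Φ : ℝ := 1/β + nN^2/δ/2 + (θ/α + 1/(θ*δ))/2
      + Real.sqrt ((θ/α + 1/(θ*δ) + nN^2/δ)^2 - 4/(α*δ))/2 with hΦdef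
  have hΦpos : 0 < Φ := by
    have h1 : 0 < 1/β := by positivity
    have h2 : 0 ≤ nN^2/δ/2 := by positivity
    have h3 : 0 ≤ (θ/α + 1/(θ*δ))/2 := by positivity
    have h4 : 0 ≤ Real.sqrt ((θ/α + 1/(θ*δ) + nN^2/δ)^2 - 4/(α*δ))/2 := by positivity
    rw [hΦdef]; linarith
  have hωeq : ω = Φ⁻¹ := by
    rw [hω, hΦdef]
    congr 1
    ring
  have hωpos : 0 < ω := by rw [hωeq]; exact inv_pos.mpr hΦpos
  set sθ : ℝ := Real.sqrt θ with hsθdef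
  have hsθpos : 0 < sθ := Real.sqrt_pos.mpr hθ
  set sq4 : ℝ := Real.sqrt (b^2 + 4*θ) with hsq4def
  have hsq4pos : 0 < sq4 := Real.sqrt_pos.mpr (by positivity)
  set X : ℝ := (b + sq4)/2 with hXdef
  have hXpos : 0 < X := by rw [hXdef]; positivity
  have hXle : X ≤ sθ + b := by
    have hsθsq : sθ^2 = θ := Real.sq_sqrt hθ.le
    have h1 : b^2 + 4*θ ≤ (2*sθ + b)^2 := by nlinarith [hsθpos.le]
    have h2 : sq4 ≤ 2*sθ + b := by
      rw [hsq4def]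
      calc Real.sqrt (b^2+4*θ) ≤ Real.sqrt ((2*sθ + b)^2) := Real.sqrt_le_sqrt h1
      _ = 2*sθ + b := Real.sqrt_sq (by positivity)
    rw [hXdef]; linarith
  have hMcoef : M = ν + 1/(δ*X) + (sθ - b)/β := by
    rw [hM, hsθdef]
    congr 1
    congr 1
    rw [hXdef]
    rw [div_eq_div_iff (by positivity) (by positivity)]
    ring
  have hM0 : 0 ≤ M := by
    rw [hMcoef]
    have h1 : 0 ≤ 1/(δ*X) := by positivity
    have h2 : 0 ≤ (sθ - b)/β := div_nonneg (by linarith [hb]) hβpos.le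
    linarith
  -- ## separation constant
  obtain ⟨ε, hεpos, hsep⟩ := sep_exists ω M b hωpos hM0 hb0 lam hcon
  -- ## roots of the quadratic + region bounds, for unit vectors
  have hroots : ∀ y : H, ‖y‖ = 1 → ∃ r₁ r₂ : ℂ,
      (∀ w : ℂ, w^2 + (inner ℂ (D y) y : ℂ)*w + ((‖S y‖^2 : ℝ) : ℂ) = (w - r₁)*(w - r₂)) ∧
      ε ≤ ‖(starRingEnd ℂ) lam - r₁‖ ∧ ε ≤ ‖(starRingEnd ℂ) lam - r₂‖ := by
    intro y hy
    have hyne : y ≠ 0 := by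
      intro h; rw [h, norm_zero] at hy; norm_num at hy
    set d : ℂ := inner ℂ (D y) y with hddef
    set a : ℝ := ‖S y‖^2 with hadef
    have ha : 0 < a := pow_pos (norm_pos_iff.mpr (hSx_ne y hyne)) 2
    have hd1β : β ≤ d.re := by
      have := hβle y hyne
      rw [hy] at this
      simpa using this
    have hd1δ : δ*a ≤ d.re := hδle y hyne
    have hCS : 1 ≤ a * ‖Sinv y‖^2 := by
      have hip : (inner ℂ (S y) (Sinv y) : ℂ) = inner ℂ y y := by
        rw [hSsym y (Sinv y), hSSinv]
      have h2 : (inner ℂ y y : ℂ) = 1 := by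
        rw [inner_self_eq_norm_sq_to_K, hy]; norm_num
      have h3 : (1:ℝ) ≤ ‖S y‖ * ‖Sinv y‖ := by
        have h4 : ‖(inner ℂ (S y) (Sinv y) : ℂ)‖ = 1 := by rw [hip, h2]; norm_num
        have h5 := norm_inner_le_norm (𝕜 := ℂ) (S y) (Sinv y)
        rw [h4] at h5
        exact h5
      nlinarith [norm_nonneg (S y), norm_nonneg (Sinv y)]
    have hd1α : α ≤ d.re * a := by
      have h1 := hαle y hyne
      calc α = α * 1 := by ring
      _ ≤ α * (a * ‖Sinv y‖^2) := mul_le_mul_of_nonneg_left hCS hαpos.le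
      _ = a * (α * ‖Sinv y‖^2) := by ring
      _ ≤ a * d.re := mul_le_mul_of_nonneg_left h1 ha.le
      _ = d.re * a := by ring
    have hdN : d.re^2 + d.im^2 ≤ nN^2 * a^2 := by
      have h1 := hdabs y
      have h2 : ‖d‖^2 = d.re^2 + d.im^2 := by
        rw [Complex.sq_norm, Complex.normSq_apply]; ring
      have h3 : ‖d‖^2 ≤ (nN*a)^2 := by
        have := mul_self_le_mul_self (norm_nonneg d) h1
        calc ‖d‖^2 = ‖d‖*‖d‖ := by ring
        _ ≤ (nN*a)*(nN*a) := this
        _ = (nN*a)^2 := by ring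
      nlinarith
    have hsec : |d.im| ≤ ν * d.re := hDsec y
    obtain ⟨z, hz⟩ := IsAlgClosed.exists_pow_nat_eq (d^2 - 4*(a:ℂ)) (n := 2) (by norm_num)
    have hfact : ∀ w : ℂ, w^2 + d*w + ((a:ℝ) : ℂ) = (w - (-d+z)/2)*(w - (-d-z)/2) := by
      intro w
      have h1 : (w - (-d+z)/2)*(w - (-d-z)/2) = w^2 + d*w + (d^2 - z^2)/4 := by ring
      rw [h1, hz]
      ring
    have hbound : ∀ r : ℂ, r^2 + d*r + ((a:ℝ):ℂ) = 0 → ε ≤ ‖(starRingEnd ℂ) lam - r‖ := by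
      intro r hr
      obtain ⟨e₁, e₂⟩ := root_re_im d a r hr
      have hre := re_bound a d.re d.im r.re r.im β α δ nN θ ha hβpos hαpos hδpos hθ
        hd1β hd1δ hd1α hdN e₁ e₂
      have him := im_bound a d.re d.im r.re r.im β δ ν X sθ b ha hβpos hδpos
        hd1β hd1δ hsec hν.le hb0 hb hXpos hXle e₁ e₂
      have hrre : r.re ≤ -ω := by
        have h5 : ω ≤ -r.re := by
          rw [hωeq, inv_eq_one_div]
          exact (div_le_iff₀ hΦpos).mpr (by rw [hΦdef]; linarith [hre.2])
        linarith
      have hrim : |r.im| ≤ M*(-r.re) + b := by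
        rw [hMcoef]; exact him
      exact hsep r hrre hrim hre.1
    refine ⟨(-d+z)/2, (-d-z)/2, hfact, ?_, ?_⟩
    · apply hbound
      linear_combination ((1:ℂ)/4) * hz
    · apply hbound
      linear_combination ((1:ℂ)/4) * hz
  -- ## the quadratic pencil operator and its coercivity
  set Qop : H →L[ℂ] H := lam^2 • (1 : H →L[ℂ] H) + lam • D + A with hQopdef
  have hQapp : ∀ v : H, Qop v = lam^2 • v + lam • D v + A v := by
    intro v
    rw [hQopdef]
    simp [ContinuousLinearMap.add_apply, ContinuousLinearMap.smul_apply,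
      ContinuousLinearMap.one_apply]
  have hQinner1 : ∀ y : H, ‖y‖ = 1 → (inner ℂ (Qop y) y : ℂ)
      = ((starRingEnd ℂ) lam)^2 + (inner ℂ (D y) y : ℂ) * ((starRingEnd ℂ) lam)
        + ((‖S y‖^2 : ℝ) : ℂ) := by
    intro y hy
    rw [hQapp, inner_add_left, inner_add_left, inner_smul_left, inner_smul_left]
    have h1 : (inner ℂ y y : ℂ) = 1 := by
      rw [inner_self_eq_norm_sq_to_K, hy]; norm_num
    have h2 : (inner ℂ (A y) y : ℂ) = ((‖S y‖^2 : ℝ) : ℂ) := by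
      have hA' : A y = S (S y) := by
        rw [← hSsq]; rfl
      rw [hA', hSsym (S y) y, inner_self_eq_norm_sq_to_K]
      norm_cast
    rw [h1, h2, map_pow]
    ring
  have hQlow : ∀ y : H, ‖y‖ = 1 → ε^2 ≤ ‖(inner ℂ (Qop y) y : ℂ)‖ := by
    intro y hy
    obtain ⟨r₁, r₂, hfact, h1, h2⟩ := hroots y hy
    rw [hQinner1 y hy]
    have heq : ((starRingEnd ℂ) lam)^2 + (inner ℂ (D y) y : ℂ) * ((starRingEnd ℂ) lam)
        + ((‖S y‖^2 : ℝ) : ℂ) = ((starRingEnd ℂ) lam - r₁)*((starRingEnd ℂ) lam - r₂) :=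
      hfact ((starRingEnd ℂ) lam)
    rw [heq, norm_mul]
    calc ε^2 = ε*ε := by ring
    _ ≤ ‖(starRingEnd ℂ) lam - r₁‖ * ‖(starRingEnd ℂ) lam - r₂‖ :=
        mul_le_mul h1 h2 hεpos.le (norm_nonneg _)
  have hQcoer : ∀ x : H, ε^2 * ‖x‖ ≤ ‖Qop x‖ := by
    intro x
    rcases eq_or_ne x 0 with rfl | hx
    · simp
    · have hxpos : 0 < ‖x‖ := norm_pos_iff.mpr hx
      set c : ℂ := ((‖x‖⁻¹ : ℝ) : ℂ) with hcdef
      set y : H := c • x with hydef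
      have hy1 : ‖y‖ = 1 := by
        rw [hydef, norm_smul, hcdef, Complex.norm_real, norm_inv, norm_norm,
          inv_mul_cancel₀ hxpos.ne']
      have hinner : (inner ℂ (Qop y) y : ℂ) = c * c * inner ℂ (Qop x) x := by
        rw [hydef, map_smul, inner_smul_left, inner_smul_right]
        have hconj : (starRingEnd ℂ) c = c := by
          rw [hcdef]; exact Complex.conj_ofReal _
        rw [hconj]; ring
      have hnorm1 : ‖(inner ℂ (Qop y) y : ℂ)‖ = ‖x‖⁻¹ * ‖x‖⁻¹ * ‖(inner ℂ (Qop x) x : ℂ)‖ := by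
        rw [hinner, norm_mul, norm_mul, hcdef, Complex.norm_real, norm_inv, norm_norm]
      have h3 := hQlow y hy1
      rw [hnorm1] at h3
      have h4 := norm_inner_le_norm (𝕜 := ℂ) (Qop x) x
      have h5 : ε^2 * (‖x‖ * ‖x‖) ≤ ‖(inner ℂ (Qop x) x : ℂ)‖ := by
        have h6 : ε^2 * (‖x‖*‖x‖) ≤ (‖x‖⁻¹*‖x‖⁻¹*‖(inner ℂ (Qop x) x : ℂ)‖) * (‖x‖*‖x‖) := by
          apply mul_le_mul_of_nonneg_right h3 (by positivity)
        calc ε^2 * (‖x‖*‖x‖) ≤ (‖x‖⁻¹*‖x‖⁻¹*‖(inner ℂ (Qop x) x : ℂ)‖) * (‖x‖*‖x‖) := h6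
        _ = ‖(inner ℂ (Qop x) x : ℂ)‖ * (‖x‖⁻¹*‖x‖) * (‖x‖⁻¹*‖x‖) := by ring
        _ = ‖(inner ℂ (Qop x) x : ℂ)‖ := by rw [inv_mul_cancel₀ hxpos.ne']; ring
      have h7 : ε^2 * (‖x‖ * ‖x‖) ≤ ‖Qop x‖ * ‖x‖ := le_trans h5 h4
      have := le_of_mul_le_mul_right (by linarith : (ε^2 * ‖x‖) * ‖x‖ ≤ ‖Qop x‖ * ‖x‖) hxpos
      exact this
  have hQadjcoer : ∀ x : H, ε^2 * ‖x‖ ≤ ‖ContinuousLinearMap.adjoint Qop x‖ := by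
    intro x
    rcases eq_or_ne x 0 with rfl | hx
    · simp
    · have hxpos : 0 < ‖x‖ := norm_pos_iff.mpr hx
      have h1 : (inner ℂ (ContinuousLinearMap.adjoint Qop x) x : ℂ) = inner ℂ x (Qop x) :=
        ContinuousLinearMap.adjoint_inner_left Qop x x
      have h2 : ‖(inner ℂ x (Qop x) : ℂ)‖ = ‖(inner ℂ (Qop x) x : ℂ)‖ := by
        rw [← inner_conj_symm]
        exact RCLike.norm_conj _
      -- ε² ‖x‖² ≤ ‖⟪Qx,x⟫‖ (as in hQcoer)
      set c : ℂ := ((‖x‖⁻¹ : ℝ) : ℂ) with hcdef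
      set y : H := c • x with hydef
      have hy1 : ‖y‖ = 1 := by
        rw [hydef, norm_smul, hcdef, Complex.norm_real, norm_inv, norm_norm,
          inv_mul_cancel₀ hxpos.ne']
      have hinner : (inner ℂ (Qop y) y : ℂ) = c * c * inner ℂ (Qop x) x := by
        rw [hydef, map_smul, inner_smul_left, inner_smul_right]
        have hconj : (starRingEnd ℂ) c = c := by
          rw [hcdef]; exact Complex.conj_ofReal _
        rw [hconj]; ring
      have hnorm1 : ‖(inner ℂ (Qop y) y : ℂ)‖ = ‖x‖⁻¹ * ‖x‖⁻¹ * ‖(inner ℂ (Qop x) x : ℂ)‖ := by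
        rw [hinner, norm_mul, norm_mul, hcdef, Complex.norm_real, norm_inv, norm_norm]
      have h3 := hQlow y hy1
      rw [hnorm1] at h3
      have h5 : ε^2 * (‖x‖ * ‖x‖) ≤ ‖(inner ℂ (Qop x) x : ℂ)‖ := by
        have h6 : ε^2 * (‖x‖*‖x‖) ≤ (‖x‖⁻¹*‖x‖⁻¹*‖(inner ℂ (Qop x) x : ℂ)‖) * (‖x‖*‖x‖) := by
          apply mul_le_mul_of_nonneg_right h3 (by positivity)
        calc ε^2 * (‖x‖*‖x‖) ≤ (‖x‖⁻¹*‖x‖⁻¹*‖(inner ℂ (Qop x) x : ℂ)‖) * (‖x‖*‖x‖) := h6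
        _ = ‖(inner ℂ (Qop x) x : ℂ)‖ * (‖x‖⁻¹*‖x‖) * (‖x‖⁻¹*‖x‖) := by ring
        _ = ‖(inner ℂ (Qop x) x : ℂ)‖ := by rw [inv_mul_cancel₀ hxpos.ne']; ring
      have h4 := norm_inner_le_norm (𝕜 := ℂ) (ContinuousLinearMap.adjoint Qop x) x
      rw [h1, h2] at h4
      have h7 : ε^2 * (‖x‖ * ‖x‖) ≤ ‖ContinuousLinearMap.adjoint Qop x‖ * ‖x‖ :=
        le_trans h5 h4
      exact le_of_mul_le_mul_right (by linarith : (ε^2 * ‖x‖) * ‖x‖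
        ≤ ‖ContinuousLinearMap.adjoint Qop x‖ * ‖x‖) hxpos
  have hQunit : IsUnit Qop := isUnit_of_coercive Qop (ε^2) (by positivity) hQcoer hQadjcoer
  -- ## build the inverse of (λ - T)
  obtain ⟨uQ, huQ⟩ := hQunit
  set Rop : H →L[ℂ] H := ↑uQ⁻¹ with hRdef
  have hQR : Qop * Rop = 1 := by
    rw [hRdef, ← huQ]
    exact uQ.mul_inv
  have hRQ : Rop * Qop = 1 := by
    rw [hRdef, ← huQ]
    exact uQ.inv_mul
  have hQRapp : ∀ v : H, Qop (Rop v) = v := by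
    intro v
    have := congrArg (fun f : H →L[ℂ] H => f v) hQR
    simpa [ContinuousLinearMap.mul_apply] using this
  have hRQapp : ∀ v : H, Rop (Qop v) = v := by
    intro v
    have := congrArg (fun f : H →L[ℂ] H => f v) hRQ
    simpa [ContinuousLinearMap.mul_apply] using this
  rw [spectrum.mem_iff] at hlam
  apply hlam
  set F : (H × H) →L[ℂ] (H × H) := algebraMap ℂ ((H × H) →L[ℂ] (H × H)) lam - Tlin A D
    with hFdef
  have hFapp : ∀ w : H × H, F w = (lam • w.1 + D w.1 + A w.2, lam • w.2 - w.1) := by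
    intro w
    rw [hFdef]
    simp only [ContinuousLinearMap.sub_apply, Algebra.algebraMap_eq_smul_one,
      ContinuousLinearMap.smul_apply, ContinuousLinearMap.one_apply, Tlin,
      ContinuousLinearMap.prod_apply, ContinuousLinearMap.coe_sub', Pi.sub_apply,
      ContinuousLinearMap.neg_apply, ContinuousLinearMap.comp_apply,
      ContinuousLinearMap.coe_fst', ContinuousLinearMap.coe_snd']
    apply Prod.ext
    · show lam • w.1 - (-(D w.1) - A w.2) = lam • w.1 + D w.1 + A w.2
      abel
    · show lam • w.2 - w.1 = lam • w.2 - w.1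
      rfl
  set L2 : (H × H) →L[ℂ] H := Rop.comp ((ContinuousLinearMap.fst ℂ H H)
      + lam • (ContinuousLinearMap.snd ℂ H H) + D.comp (ContinuousLinearMap.snd ℂ H H))
    with hL2def
  have hL2app : ∀ w : H × H, L2 w = Rop (w.1 + lam • w.2 + D w.2) := by
    intro w
    rw [hL2def]
    simp [ContinuousLinearMap.comp_apply, ContinuousLinearMap.add_apply,
      ContinuousLinearMap.smul_apply]
  set L1 : (H × H) →L[ℂ] H := lam • L2 - (ContinuousLinearMap.snd ℂ H H) with hL1def
  have hL1app : ∀ w : H × H, L1 w = lam • L2 w - w.2 := by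
    intro w
    rw [hL1def]
    simp [ContinuousLinearMap.sub_apply, ContinuousLinearMap.smul_apply]
  set G : (H × H) →L[ℂ] (H × H) := L1.prod L2 with hGdef
  have hGapp : ∀ w : H × H, G w = (L1 w, L2 w) := fun w => rfl
  have hFG : F * G = 1 := by
    apply ContinuousLinearMap.ext
    intro w
    rw [ContinuousLinearMap.mul_apply, ContinuousLinearMap.one_apply, hGapp, hFapp]
    have hz := hQRapp (w.1 + lam • w.2 + D w.2)
    rw [hQapp] at hz
    apply Prod.ext
    · show lam • L1 w + D (L1 w) + A (L2 w) = w.1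
      rw [hL1app, hL2app, map_sub, map_smul]
      have hm : lam • (lam • Rop (w.1 + lam • w.2 + D w.2) - w.2)
          + (lam • D (Rop (w.1 + lam • w.2 + D w.2)) - D w.2)
          + A (Rop (w.1 + lam • w.2 + D w.2))
          = (lam^2 • Rop (w.1 + lam • w.2 + D w.2)
              + lam • D (Rop (w.1 + lam • w.2 + D w.2))
              + A (Rop (w.1 + lam • w.2 + D w.2))) - (lam • w.2 + D w.2) := by
        module
      rw [hm, hz]
      abel
    · show lam • L2 w - L1 w = w.2
      rw [hL1app]
      abel
  have hGF : G * F = 1 := by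
    apply ContinuousLinearMap.ext
    intro w
    rw [ContinuousLinearMap.mul_apply, ContinuousLinearMap.one_apply, hGapp]
    have harg : (F w).1 + lam • (F w).2 + D ((F w).2)
        = lam^2 • w.2 + lam • D w.2 + A w.2 := by
      rw [hFapp]
      show (lam • w.1 + D w.1 + A w.2) + lam • (lam • w.2 - w.1) + D (lam • w.2 - w.1)
        = lam^2 • w.2 + lam • D w.2 + A w.2
      rw [map_sub, map_smul]
      module
    have hL2F : L2 (F w) = w.2 := by
      rw [hL2app, harg, ← hQapp, hRQapp]
    have hL1F : L1 (F w) = w.1 := by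
      rw [hL1app, hL2F, hFapp]
      show lam • w.2 - (lam • w.2 - w.1) = w.1
      abel
    apply Prod.ext
    · show L1 (F w) = w.1
      exact hL1F
    · show L2 (F w) = w.2
      exact hL2F
  exact ⟨⟨F, G, hFG, hGF⟩, rfl⟩
end

section
/- Under the standing assumptions, if δ > 0, then for every θ > 0 the spectrum of T is contained in the set {λ ∈ ℂ : re λ ≤ −ω_θ and |im λ| ≤ (ν + 1/(δ√θ) + √θ/β)·|re λ|}. -/
set_option maxSynthPendingDepth 3

open scoped InnerProductSpace
open Filter Topology

-- L1: numerical range bounded below implies unit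
lemma isUnit_of_inner_bound
    {H : Type*} [NormedAddCommGroup H] [InnerProductSpace ℂ H] [CompleteSpace H]
    (P : H →L[ℂ] H) (c : ℝ) (hc : 0 < c)
    (h : ∀ x : H, c * ‖x‖ ^ 2 ≤ ‖(inner ℂ (P x) x : ℂ)‖) : IsUnit P := by
  have hlow : ∀ x : H, c * ‖x‖ ≤ ‖P x‖ := by
    intro x
    rcases eq_or_ne x 0 with rfl | hx
    · simp
    · have h1 := h x
      have h2 : ‖(inner ℂ (P x) x : ℂ)‖ ≤ ‖P x‖ * ‖x‖ := norm_inner_le_norm _ _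
      have hxpos : 0 < ‖x‖ := norm_pos_iff.mpr hx
      nlinarith [sq_nonneg ‖x‖]
  have hanti : AntilipschitzWith (⟨c, hc.le⟩ : NNReal)⁻¹ P := by
    apply ContinuousLinearMap.antilipschitz_of_bound
    intro x
    have := hlow x
    change ‖x‖ ≤ c⁻¹ * ‖P x‖
    have : ‖x‖ ≤ c⁻¹ * ‖P x‖ := by
      rw [le_inv_mul_iff₀ hc]; exact hlow x
    simpa using this
  have hker : LinearMap.ker (P : H →ₗ[ℂ] H) = ⊥ := by
    rw [LinearMap.ker_eq_bot]
    exact hanti.injective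
  have hclosed : IsClosed (Set.range P) := hanti.isClosed_range P.uniformContinuous
  have hrangeclosed : IsClosed ((LinearMap.range (P : H →ₗ[ℂ] H) : Submodule ℂ H) : Set H) := by
    simpa [LinearMap.coe_range] using hclosed
  haveI : CompleteSpace (LinearMap.range (P : H →ₗ[ℂ] H) : Submodule ℂ H) := hrangeclosed.completeSpace_coe
  have hsurj : LinearMap.range (P : H →ₗ[ℂ] H) = ⊤ := by
    rw [← Submodule.orthogonal_eq_bot_iff]
    rw [Submodule.eq_bot_iff]
    intro y hy
    have hy0 : (inner ℂ (P y) y : ℂ) = 0 := by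
      exact hy (P y) (LinearMap.mem_range_self _ y)
    have := h y
    rw [hy0] at this
    simp at this
    have : ‖y‖ ^ 2 ≤ 0 := by nlinarith
    have : ‖y‖ = 0 := by nlinarith [sq_nonneg ‖y‖, norm_nonneg y]
    exact norm_eq_zero.mp this
  let e := ContinuousLinearEquiv.ofBijective P hker hsurj
  have he : (e : H →L[ℂ] H) = P := ContinuousLinearEquiv.coe_ofBijective P hker hsurj
  refine ⟨⟨P, (e.symm : H →L[ℂ] H), ?_, ?_⟩, rfl⟩
  · ext x
    have : P ((e.symm : H →L[ℂ] H) x) = x := by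
      conv_lhs => rw [← he]
      exact e.apply_symm_apply x
    simpa [ContinuousLinearMap.mul_apply] using this
  · ext x
    have : (e.symm : H →L[ℂ] H) (P x) = x := by
      conv_lhs => rw [← he]
      exact e.symm_apply_apply x
    simpa [ContinuousLinearMap.mul_apply] using this

lemma pencil_unit {H : Type*} [NormedAddCommGroup H] [InnerProductSpace ℂ H]
    (A D : H →L[ℂ] H) (lam : ℂ)
    (hP : IsUnit ((lam ^ 2) • (1 : H →L[ℂ] H) + lam • D + A)) :
    IsUnit (algebraMap ℂ ((H × H) →L[ℂ] (H × H)) lam - Tlin A D) := by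
  set P : H →L[ℂ] H := (lam ^ 2) • (1 : H →L[ℂ] H) + lam • D + A with hPdef
  obtain ⟨u, hu⟩ := hP
  set Q : H →L[ℂ] H := ↑u⁻¹ with hQdef
  have hQPm : Q * P = 1 := by rw [hQdef, ← hu]; exact u.inv_mul
  have hPQm : P * Q = 1 := by rw [hQdef, ← hu]; exact u.mul_inv
  have hQP : ∀ z : H, Q (P z) = z := fun z => by
    have := congrArg (fun f : H →L[ℂ] H => f z) hQPm
    simpa [ContinuousLinearMap.mul_apply] using this
  have hPQ : ∀ z : H, P (Q z) = z := fun z => by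
    have := congrArg (fun f : H →L[ℂ] H => f z) hPQm
    simpa [ContinuousLinearMap.mul_apply] using this
  set W : (H × H) →L[ℂ] H :=
    ContinuousLinearMap.fst ℂ H H + lam • ContinuousLinearMap.snd ℂ H H
      + D.comp (ContinuousLinearMap.snd ℂ H H) with hWdef
  set R : (H × H) →L[ℂ] (H × H) :=
    ((lam • (Q.comp W)) - ContinuousLinearMap.snd ℂ H H).prod (Q.comp W) with hRdef
  set M : (H × H) →L[ℂ] (H × H) := algebraMap ℂ ((H × H) →L[ℂ] (H × H)) lam - Tlin A D
    with hMdef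
  have hM : ∀ w : H × H, M w = (lam • w.1 + D w.1 + A w.2, lam • w.2 - w.1) := by
    intro w
    rw [hMdef]
    apply Prod.ext
    · simp [Tlin, Algebra.algebraMap_eq_smul_one, ContinuousLinearMap.prod_apply,
        ContinuousLinearMap.sub_apply, ContinuousLinearMap.smul_apply,
        ContinuousLinearMap.coe_comp', ContinuousLinearMap.neg_apply]
      abel
    · simp [Tlin, Algebra.algebraMap_eq_smul_one, ContinuousLinearMap.prod_apply,
        ContinuousLinearMap.sub_apply, ContinuousLinearMap.smul_apply,
        ContinuousLinearMap.coe_comp', ContinuousLinearMap.neg_apply]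
  have hR : ∀ w : H × H, R w = (lam • Q (W w) - w.2, Q (W w)) := by
    intro w
    rw [hRdef]
    simp [ContinuousLinearMap.prod_apply, ContinuousLinearMap.sub_apply,
      ContinuousLinearMap.smul_apply, ContinuousLinearMap.coe_comp']
  have hW : ∀ w : H × H, W w = w.1 + lam • w.2 + D w.2 := by
    intro w
    rw [hWdef]
    simp [ContinuousLinearMap.add_apply, ContinuousLinearMap.smul_apply,
      ContinuousLinearMap.coe_comp']
  have hPz : ∀ z : H, P z = lam ^ 2 • z + lam • D z + A z := by
    intro z
    rw [hPdef]
    simp [ContinuousLinearMap.add_apply, ContinuousLinearMap.smul_apply]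
  have hMR : M * R = 1 := by
    refine ContinuousLinearMap.ext fun w => ?_
    have h1 : (M * R) w = M (R w) := rfl
    rw [h1, hR w, hM _]
    apply Prod.ext
    · show lam • (lam • Q (W w) - w.2) + D (lam • Q (W w) - w.2) + A (Q (W w)) = w.1
      have expand : lam • (lam • Q (W w) - w.2) + D (lam • Q (W w) - w.2) + A (Q (W w))
          = P (Q (W w)) - (lam • w.2 + D w.2) := by
        rw [hPz]
        simp only [smul_sub, map_sub, map_smul, smul_smul, ← pow_two]
        abel
      rw [expand, hPQ, hW w]
      simp
    · show lam • Q (W w) - (lam • Q (W w) - w.2) = w.2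
      abel
  have hRM : R * M = 1 := by
    refine ContinuousLinearMap.ext fun w => ?_
    have h1 : (R * M) w = R (M w) := rfl
    rw [h1, hR _]
    have hWM : W (M w) = P w.2 := by
      rw [hW _, hM w, hPz]
      simp only [map_sub, map_smul, map_add]
      module
    rw [hWM, hQP]
    apply Prod.ext
    · show lam • w.2 - (M w).2 = w.1
      rw [hM w]
      show lam • w.2 - (lam • w.2 - w.1) = w.1
      abel
    · rfl
  exact ⟨⟨M, R, hMR, hRM⟩, rfl⟩

set_option maxHeartbeats 1000000 in
lemma scalar_key (α β δ ν θ K a : ℝ) (d lam : ℂ)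
    (hα : 0 < α) (hβ : 0 < β) (hδ : 0 < δ) (hν : 0 < ν) (hθ : 0 < θ) (hK : 0 ≤ K)
    (ha : 0 < a)
    (hpβ : β ≤ d.re) (hpδ : δ * a ≤ d.re) (hpα : α ≤ d.re * a)
    (hdK : ‖d‖ ≤ K * a) (hsec : |d.im| ≤ ν * d.re)
    (hq : lam ^ 2 + d * lam + (a : ℂ) = 0) :
    lam.re ≤ -(1 / β + K ^ 2 / (2 * δ) + (θ / α + 1 / (θ * δ)) / 2
        + Real.sqrt ((θ / α + 1 / (θ * δ) + K ^ 2 / δ) ^ 2 - 4 / (α * δ)) / 2)⁻¹ ∧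
    |lam.im| ≤ (ν + 1 / (δ * Real.sqrt θ) + Real.sqrt θ / β) * |lam.re| := by
  set x := lam.re with hxdef
  set y := lam.im with hydef
  set dr := d.re with hdrdef
  set di := d.im with hdidef
  have hp : 0 < dr := lt_of_lt_of_le hβ hpβ
  have hre : x ^ 2 - y ^ 2 + (dr * x - di * y) + a = 0 := by
    have h := congrArg Complex.re hq
    simp only [Complex.add_re, Complex.mul_re, Complex.ofReal_re, Complex.ofReal_im,
      Complex.zero_re, pow_two] at h
    rw [hxdef, hydef, hdrdef, hdidef]
    linear_combination h
  have him : 2 * x * y + (dr * y + di * x) = 0 := by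
    have h := congrArg Complex.im hq
    simp only [Complex.add_im, Complex.mul_im, Complex.ofReal_re, Complex.ofReal_im,
      Complex.zero_im, pow_two] at h
    rw [hxdef, hydef, hdrdef, hdidef]
    linear_combination h
  clear_value x y dr di
  set t := x ^ 2 + y ^ 2 with htdef
  have hlam0 : lam ≠ 0 := by
    intro h0
    rw [h0] at hq
    simp only [ne_eq, OfNat.ofNat_ne_zero, not_false_eq_true, zero_pow, mul_zero, add_zero,
      zero_add] at hq
    have : (a : ℂ).re = 0 := by rw [hq]; rfl
    simp only [Complex.ofReal_re] at this
    linarith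
  have ht : 0 < t := by
    have h1 : Complex.normSq lam ≠ 0 := by
      simpa [Complex.normSq_eq_zero] using hlam0
    have h2 : 0 ≤ Complex.normSq lam := Complex.normSq_nonneg lam
    have h3 : Complex.normSq lam = t := by
      rw [Complex.normSq_apply, htdef, hxdef, hydef]; ring
    rw [h3] at h1 h2
    exact lt_of_le_of_ne h2 (Ne.symm h1)
  clear_value t
  have I1 : t * x + dr * t + a * x = 0 := by
    rw [htdef]; linear_combination x * hre + y * him
  have I2 : (dr ^ 2 + di ^ 2) * t = (t - a) ^ 2 + 4 * a * x ^ 2 := by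
    rw [htdef]
    linear_combination ((dr * x - di * y) - (x ^ 2 - y ^ 2 + a)) * hre
      + ((dr * y + di * x) - 2 * x * y) * him
  have I3 : y * (t - a) + t * di = 0 := by
    rw [htdef]; linear_combination x * him - y * hre
  have hx : x < 0 := by nlinarith only [I1, ht, ha, hp]
  have hd2 : dr ^ 2 + di ^ 2 ≤ K ^ 2 * a ^ 2 := by
    have h1 : ‖d‖ ^ 2 ≤ (K * a) ^ 2 := by
      nlinarith only [hdK, norm_nonneg d, ha, hK]
    have h2 : ‖d‖ ^ 2 = dr ^ 2 + di ^ 2 := by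
      rw [Complex.sq_norm, Complex.normSq_apply, hdrdef, hdidef]; ring
    linarith only [h1, h2]
  have hdi : |di| ≤ ν * dr := hsec
  -- ===================== Part 1 : real part bound =====================
  set u := θ / α + 1 / (θ * δ) with hudef
  set v := K ^ 2 / δ with hvdef
  have hαδ : 0 < α * δ := mul_pos hα hδ
  set q := Real.sqrt (α * δ) with hqdef
  have hq2 : q ^ 2 = α * δ := Real.sq_sqrt hαδ.le
  have hqpos : 0 < q := Real.sqrt_pos.mpr hαδ
  have hv0 : 0 ≤ v := div_nonneg (sq_nonneg K) hδ.le
  have hu0 : 0 < u := by rw [hudef]; positivity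
  have hpt : 0 < dr * t := mul_pos hp ht
  clear_value u v q
  have hqp : q ≤ dr := by
    have h1 : α * δ ≤ dr ^ 2 := by nlinarith only [hpα, hpδ, ha, hp, hδ]
    calc q = Real.sqrt (α * δ) := hqdef
      _ ≤ Real.sqrt (dr ^ 2) := Real.sqrt_le_sqrt h1
      _ = dr := Real.sqrt_sq hp.le
  have huq : 2 ≤ u * q := by
    have hg1 : (0:ℝ) < θ / α := by positivity
    have hg2 : (0:ℝ) < 1 / (θ * δ) := by positivity
    have e1 : Real.sqrt (θ / α) ^ 2 = θ / α := Real.sq_sqrt hg1.le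
    have e2 : Real.sqrt (1 / (θ * δ)) ^ 2 = 1 / (θ * δ) := Real.sq_sqrt hg2.le
    have e3 : Real.sqrt (θ / α) * Real.sqrt (1 / (θ * δ)) * q = 1 := by
      rw [hqdef, ← Real.sqrt_mul hg1.le, ← Real.sqrt_mul (by positivity)]
      rw [show θ / α * (1 / (θ * δ)) * (α * δ) = 1 by field_simp <;> ring]
      exact Real.sqrt_one
    have hsq := sq_nonneg (Real.sqrt (θ / α) - Real.sqrt (1 / (θ * δ)))
    have h4 : 2 * (Real.sqrt (θ / α) * Real.sqrt (1 / (θ * δ))) ≤ θ / α + 1 / (θ * δ) := by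
      linarith only [hsq, e1, e2]
    have h5 : 2 * (Real.sqrt (θ / α) * Real.sqrt (1 / (θ * δ))) * q ≤ u * q := by
      rw [hudef]
      exact mul_le_mul_of_nonneg_right h4 hqpos.le
    linarith only [h5, e3]
  set disc := (u + v) ^ 2 - 4 / (α * δ) with hdiscdef
  clear_value disc
  have hS : a ≤ ((u + v) / 2 + Real.sqrt disc / 2) * (dr * t) := by
    by_cases hcase : 2 * a ≤ (u + v) * (dr * t)
    · linarith only [hcase, mul_nonneg (Real.sqrt_nonneg disc) hpt.le]
    · push_neg at hcase
      have hhard2 : dr * t ≤ a * q := by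
        linarith only [mul_pos (sub_pos.mpr hcase) hqpos,
          mul_nonneg (sub_nonneg.mpr huq) hpt.le,
          mul_nonneg (mul_nonneg hv0 hpt.le) hqpos.le]
      have hKv : v * δ = K ^ 2 := by rw [hvdef]; field_simp
      have hI2' : (t - a) ^ 2 ≤ (dr ^ 2 + di ^ 2) * t := by
        linarith only [I2, mul_nonneg (mul_nonneg (by norm_num : (0:ℝ) ≤ 4) ha.le)
          (sq_nonneg x)]
      have hδa : 0 < δ * a := mul_pos hδ ha
      have hKat : (t - a) ^ 2 ≤ K ^ 2 * a ^ 2 * t := by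
        nlinarith only [hI2', hd2, ht]
      have hP1' : (t - a) ^ 2 * (δ * a) ≤ (v * a * t * dr) * (δ * a) := by
        have hRHS : (v * a * t * dr) * (δ * a) = K ^ 2 * a ^ 2 * t * dr := by
          rw [← hKv]; ring
        rw [hRHS]
        have hs1 : (t - a) ^ 2 * (δ * a) ≤ (K ^ 2 * a ^ 2 * t) * (δ * a) :=
          mul_le_mul_of_nonneg_right hKat hδa.le
        have hs2 : (K ^ 2 * a ^ 2 * t) * (δ * a) ≤ (K ^ 2 * a ^ 2 * t) * dr := by
          apply mul_le_mul_of_nonneg_left _ (by positivity)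
          linarith only [hpδ]
        linarith only [hs1, hs2]
      have hP1 : (t - a) ^ 2 ≤ v * a * t * dr := (mul_le_mul_iff_of_pos_right hδa).mp hP1'
      have hG : 0 ≤ a * (u + v) * (dr * t) * q ^ 2 - a ^ 2 * q ^ 2 - (dr * t) ^ 2 := by
        have hT0 : 0 ≤ (v * a * t * dr - (t - a) ^ 2) * q ^ 2 :=
          mul_nonneg (by linarith only [hP1]) (sq_nonneg q)
        have hT1 : 0 ≤ (a * q - dr * t) * (u * q - 2) * (dr * t) :=
          mul_nonneg (mul_nonneg (by linarith only [hhard2])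
            (by linarith only [huq])) hpt.le
        have hT2 : 0 ≤ 2 * ((a * q - dr * t) * ((dr - q) * t)) :=
          mul_nonneg (by norm_num) (mul_nonneg (by linarith only [hhard2])
            (mul_nonneg (by linarith only [hqp]) ht.le))
        have hT3 : 0 ≤ (dr - q) ^ 2 * t ^ 2 := mul_nonneg (sq_nonneg _) (sq_nonneg _)
        have hT4 : 0 ≤ (u * q - 2) * dr ^ 2 * t ^ 2 :=
          mul_nonneg (mul_nonneg (by linarith only [huq]) (sq_nonneg _)) (sq_nonneg _)
        have hid : a * (u + v) * (dr * t) * q ^ 2 - a ^ 2 * q ^ 2 - (dr * t) ^ 2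
            = (v * a * t * dr - (t - a) ^ 2) * q ^ 2
              + (a * q - dr * t) * (u * q - 2) * (dr * t)
              + 2 * ((a * q - dr * t) * ((dr - q) * t))
              + (dr - q) ^ 2 * t ^ 2
              + (u * q - 2) * dr ^ 2 * t ^ 2 := by ring
        linarith only [hT0, hT1, hT2, hT3, hT4, hid]
      have hw0 : 0 ≤ 2 * a - (u + v) * (dr * t) := by linarith only [hcase]
      have hq2pos : 0 < q ^ 2 := by positivity
      have hd1 : (2 * a - (u + v) * (dr * t)) ^ 2 * q ^ 2 ≤ disc * (dr * t) ^ 2 * q ^ 2 := by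
        have h4q : (4:ℝ) / (α * δ) = 4 / q ^ 2 := by rw [hq2]
        rw [hdiscdef, h4q]
        have hexp : ((u + v) ^ 2 - 4 / q ^ 2) * (dr * t) ^ 2 * q ^ 2
            = (u + v) ^ 2 * (dr * t) ^ 2 * q ^ 2 - 4 * (dr * t) ^ 2 := by
          field_simp
        rw [hexp]
        have hid2 : (u + v) ^ 2 * (dr * t) ^ 2 * q ^ 2 - 4 * (dr * t) ^ 2
            - (2 * a - (u + v) * (dr * t)) ^ 2 * q ^ 2
            = 4 * (a * (u + v) * (dr * t) * q ^ 2 - a ^ 2 * q ^ 2 - (dr * t) ^ 2) := by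
          ring
        linarith only [hG, hid2]
      have hd1' : (2 * a - (u + v) * (dr * t)) ^ 2 ≤ disc * (dr * t) ^ 2 :=
        (mul_le_mul_iff_of_pos_right hq2pos).mp hd1
      have hdisc0 : 0 ≤ disc := by
        nlinarith only [hd1', sq_nonneg (2 * a - (u + v) * (dr * t)), mul_pos hpt hpt]
      have hsqrt : 2 * a - (u + v) * (dr * t) ≤ Real.sqrt disc * (dr * t) := by
        calc 2 * a - (u + v) * (dr * t)
            = Real.sqrt ((2 * a - (u + v) * (dr * t)) ^ 2) := (Real.sqrt_sq hw0).symm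
          _ ≤ Real.sqrt (disc * (dr * t) ^ 2) := Real.sqrt_le_sqrt hd1'
          _ = Real.sqrt disc * Real.sqrt ((dr * t) ^ 2) := Real.sqrt_mul hdisc0 _
          _ = Real.sqrt disc * (dr * t) := by rw [Real.sqrt_sq hpt.le]
      linarith only [hsqrt]
  set Z := 1 / β + K ^ 2 / (2 * δ) + u / 2 + Real.sqrt disc / 2 with hZdef
  clear_value Z
  have hZrw : Z = 1 / β + v / 2 + u / 2 + Real.sqrt disc / 2 := by
    rw [hZdef, hvdef]; ring
  have hβinv : 0 < 1 / β := by positivity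
  have hZpos : 0 < Z := by
    rw [hZrw]
    linarith only [Real.sqrt_nonneg disc, hv0, hu0.le, hβinv]
  have hCore : t + a ≤ Z * (dr * t) := by
    rw [hZrw]
    have h1 : t ≤ 1 / β * (dr * t) := by
      rw [div_mul_eq_mul_div, le_div_iff₀ hβ]
      nlinarith only [hpβ, ht]
    linarith only [hS, h1]
  have part1 : x ≤ -Z⁻¹ := by
    have hxeq : x * (t + a) = -(dr * t) := by linarith only [I1]
    have h1 : Z⁻¹ * (t + a) ≤ dr * t := by
      calc Z⁻¹ * (t + a) ≤ Z⁻¹ * (Z * (dr * t)) := by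
            apply mul_le_mul_of_nonneg_left hCore (inv_nonneg.mpr hZpos.le)
        _ = dr * t := by field_simp
    nlinarith only [hxeq, h1, ht, ha]
  -- ===================== Part 2 : imaginary part bound =====================
  set sθ := Real.sqrt θ with hsθdef
  set sa := Real.sqrt a with hsadef
  set st := Real.sqrt t with hstdef
  have hsθ2 : sθ ^ 2 = θ := Real.sq_sqrt hθ.le
  have hsa2 : sa ^ 2 = a := Real.sq_sqrt ha.le
  have hst2 : st ^ 2 = t := Real.sq_sqrt ht.le
  have hsθ0 : 0 < sθ := Real.sqrt_pos.mpr hθ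
  have hsa0 : 0 < sa := Real.sqrt_pos.mpr ha
  have hst0 : 0 < st := Real.sqrt_pos.mpr ht
  clear_value sθ sa st
  have hAM : 2 * sa * sθ ≤ a + θ := by linarith only [sq_nonneg (sa - sθ), hsa2, hsθ2]
  have hy2t : y ^ 2 ≤ t := by rw [htdef]; linarith only [sq_nonneg x]
  have hyst : |y| ≤ st := by
    nlinarith only [sq_abs y, hst2, hy2t, abs_nonneg y, hst0]
  have hR : |y| * ((t + a) * sθ) ≤ (ν * dr * sθ + a + θ) * t := by
    by_cases hAB : (t + a) * sθ ≤ (ν * dr * sθ + a + θ) * st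
    · have h1 : |y| * ((t + a) * sθ) ≤ st * ((t + a) * sθ) := by
        apply mul_le_mul_of_nonneg_right hyst
        positivity
      have h2 : st * ((t + a) * sθ) ≤ st * ((ν * dr * sθ + a + θ) * st) :=
        mul_le_mul_of_nonneg_left hAB hst0.le
      have h2' : st * ((ν * dr * sθ + a + θ) * st) = (ν * dr * sθ + a + θ) * t := by
        rw [← hst2]; ring
      linarith only [h1, h2, h2']
    · push_neg at hAB
      have hAMst : 2 * sa * sθ * st ≤ (a + θ) * st :=
        mul_le_mul_of_nonneg_right hAM hst0.le
      have h6 : 0 < sθ * (t + a - ν * dr * st - 2 * sa * st) := by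
        nlinarith only [hAB, hAMst]
      have hkey1' : ν * dr * st < t + a - 2 * sa * st := by
        nlinarith only [h6, hsθ0]
      rcases lt_trichotomy t a with htlt | hteq | htgt
      · have hsast : st ≤ sa := by
          rw [hstdef, hsadef]; exact Real.sqrt_le_sqrt htlt.le
        have hprod : 0 ≤ (sa - st) * st := mul_nonneg (by linarith only [hsast]) hst0.le
        have hkey2 : ν * dr * st < a - t := by
          linarith only [hkey1', hprod, hst2]
        have h3 : t ≤ sa * st := by linarith only [hprod, hst2]
        have hkey3 : 2 * ν * dr * t * sθ ≤ (a + θ) * (a - t) := by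
          have h1 : 2 * sa * sθ * (ν * dr * st) ≤ 2 * sa * sθ * (a - t) := by
            apply mul_le_mul_of_nonneg_left hkey2.le
            positivity
          have h2 : 2 * sa * sθ * (a - t) ≤ (a + θ) * (a - t) :=
            mul_le_mul_of_nonneg_right hAM (by linarith only [htlt])
          nlinarith only [h1, h2, h3, mul_pos (mul_pos hν hp) hsθ0]
        have hyta : |y| * (a - t) ≤ ν * dr * t := by
          have he : y * (a - t) = t * di := by linarith only [I3]
          have habs : |y| * (a - t) = |t * di| := by
            rw [← he, abs_mul, abs_of_pos (by linarith only [htlt] : (0:ℝ) < a - t)]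
          rw [habs, abs_mul, abs_of_pos ht]
          calc t * |di| ≤ t * (ν * dr) := mul_le_mul_of_nonneg_left hdi ht.le
            _ = ν * dr * t := by ring
        have hkey : 0 ≤ ((ν * dr * sθ + a + θ) * t - |y| * ((t + a) * sθ)) * (a - t) := by
          have h4 : |y| * (a - t) * ((t + a) * sθ) ≤ ν * dr * t * ((t + a) * sθ) := by
            apply mul_le_mul_of_nonneg_right hyta
            positivity
          have h5 : t * (2 * ν * dr * t * sθ) ≤ t * ((a + θ) * (a - t)) :=
            mul_le_mul_of_nonneg_left hkey3 ht.le
          nlinarith only [h4, h5]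
        nlinarith only [hkey, htlt]
      · exfalso
        have hstsa : st = sa := by rw [hstdef, hsadef, hteq]
        rw [hteq, hstsa] at hAB
        have hint2 : 2 * sa * sθ * sa ≤ (a + θ) * sa :=
          mul_le_mul_of_nonneg_right hAM hsa0.le
        have hsa2θ : sa ^ 2 * sθ = a * sθ := by rw [hsa2]
        nlinarith only [hAB, hint2, hsa2θ,
          mul_pos (mul_pos (mul_pos hν hp) hsθ0) hsa0]
      · have hsast : sa ≤ st := by
          rw [hstdef, hsadef]; exact Real.sqrt_le_sqrt htgt.le
        have hprod : 0 ≤ (st - sa) * sa := mul_nonneg (by linarith only [hsast]) hsa0.le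
        have hkey2 : ν * dr * st < t - a := by
          linarith only [hkey1', hprod, hsa2]
        have h3 : a ≤ sa * st := by linarith only [hprod, hsa2]
        have hkey3 : 2 * ν * dr * a * sθ ≤ (a + θ) * (t - a) := by
          have h1 : 2 * sa * sθ * (ν * dr * st) ≤ 2 * sa * sθ * (t - a) := by
            apply mul_le_mul_of_nonneg_left hkey2.le
            positivity
          have h2 : 2 * sa * sθ * (t - a) ≤ (a + θ) * (t - a) :=
            mul_le_mul_of_nonneg_right hAM (by linarith only [htgt])
          nlinarith only [h1, h2, h3, mul_pos (mul_pos hν hp) hsθ0]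
        have hyta : |y| * (t - a) ≤ ν * dr * t := by
          have he : y * (t - a) = -(t * di) := by linarith only [I3]
          have habs : |y| * (t - a) = |t * di| := by
            rw [show |t * di| = |-(t * di)| from (abs_neg _).symm, ← he, abs_mul,
              abs_of_pos (by linarith only [htgt] : (0:ℝ) < t - a)]
          rw [habs, abs_mul, abs_of_pos ht]
          calc t * |di| ≤ t * (ν * dr) := mul_le_mul_of_nonneg_left hdi ht.le
            _ = ν * dr * t := by ring
        have hkey : 0 ≤ ((ν * dr * sθ + a + θ) * t - |y| * ((t + a) * sθ)) * (t - a) := by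
          have h4 : |y| * (t - a) * ((t + a) * sθ) ≤ ν * dr * t * ((t + a) * sθ) := by
            apply mul_le_mul_of_nonneg_right hyta
            positivity
          have h5 : t * (2 * ν * dr * a * sθ) ≤ t * ((a + θ) * (t - a)) :=
            mul_le_mul_of_nonneg_left hkey3 ht.le
          nlinarith only [h4, h5]
        nlinarith only [hkey, htgt]
  have hxabs : |x| * (t + a) = dr * t := by
    rw [abs_of_neg hx]; linarith only [I1]
  have part2 : |y| ≤ (ν + 1 / (δ * sθ) + sθ / β) * |x| := by
    have hC' : (ν + a / (dr * sθ) + sθ / dr) ≤ ν + 1 / (δ * sθ) + sθ / β := by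
      have h1 : a / (dr * sθ) ≤ 1 / (δ * sθ) := by
        rw [div_le_div_iff₀ (by positivity) (by positivity)]
        nlinarith only [hpδ, hsθ0]
      have h2 : sθ / dr ≤ sθ / β := div_le_div_of_nonneg_left hsθ0.le hβ hpβ
      linarith only [h1, h2]
    have hm : 0 < (t + a) * sθ * dr := by positivity
    have hfact : (ν + a / (dr * sθ) + sθ / dr) * ((t + a) * sθ * dr)
        = (ν * dr * sθ + a + θ) * (t + a) := by
      rw [← hsθ2]; field_simp
    have hmain : |y| ≤ (ν + a / (dr * sθ) + sθ / dr) * |x| := by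
      rw [← mul_le_mul_iff_of_pos_right hm]
      calc |y| * ((t + a) * sθ * dr) = |y| * ((t + a) * sθ) * dr := by ring
        _ ≤ (ν * dr * sθ + a + θ) * t * dr := mul_le_mul_of_nonneg_right hR hp.le
        _ = (ν * dr * sθ + a + θ) * (dr * t) := by ring
        _ = (ν * dr * sθ + a + θ) * (|x| * (t + a)) := by rw [hxabs]
        _ = (ν * dr * sθ + a + θ) * (t + a) * |x| := by ring
        _ = (ν + a / (dr * sθ) + sθ / dr) * ((t + a) * sθ * dr) * |x| := by rw [hfact]
        _ = (ν + a / (dr * sθ) + sθ / dr) * |x| * ((t + a) * sθ * dr) := by ring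
    calc |y| ≤ (ν + a / (dr * sθ) + sθ / dr) * |x| := hmain
      _ ≤ (ν + 1 / (δ * sθ) + sθ / β) * |x| :=
        mul_le_mul_of_nonneg_right hC' (abs_nonneg x)
  exact ⟨part1, part2⟩

section helpers
variable {H : Type*} [NormedAddCommGroup H] [InnerProductSpace ℂ H] [CompleteSpace H]

-- basic selfadjointness facts
lemma sinv_selfadjoint (S Sinv : H →L[ℂ] H) (hSsa : IsSelfAdjoint S)
    (hSinv : S * Sinv = 1) (hSinv' : Sinv * S = 1) : IsSelfAdjoint Sinv := by
  have h1 : star Sinv * S = 1 := by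
    have h := congrArg star hSinv
    rw [star_mul, star_one, hSsa.star_eq] at h
    exact h
  show star Sinv = Sinv
  calc star Sinv = star Sinv * (S * Sinv) := by rw [hSinv, mul_one]
    _ = (star Sinv * S) * Sinv := by rw [mul_assoc]
    _ = Sinv := by rw [h1, one_mul]

lemma inner_A_eq (S A : H →L[ℂ] H) (hSsa : IsSelfAdjoint S) (hSsq : S * S = A) (x : H) :
    (inner ℂ (A x) x : ℂ) = ((‖S x‖ : ℂ)) ^ 2 := by
  have h1 : A x = S (S x) := by rw [← hSsq]; rfl
  have h2 : (inner ℂ (S (S x)) x : ℂ) = inner ℂ (S x) (S x) := hSsa.isSymmetric (S x) x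
  rw [h1, h2, inner_self_eq_norm_sq_to_K]
  norm_cast

lemma cauchy_schwarz_SinvS (S Sinv : H →L[ℂ] H) (hSsa : IsSelfAdjoint S)
    (hSinv : S * Sinv = 1) (x : H) :
    ‖x‖ ^ 2 * ‖x‖ ^ 2 ≤ ‖Sinv x‖ ^ 2 * ‖S x‖ ^ 2 := by
  have h0 : S (Sinv x) = x := by
    have := congrArg (fun f : H →L[ℂ] H => f x) hSinv
    simpa [ContinuousLinearMap.mul_apply] using this
  have h2 : (inner ℂ x x : ℂ) = inner ℂ (Sinv x) (S x) := by
    calc (inner ℂ x x : ℂ) = inner ℂ (S (Sinv x)) x := by rw [h0]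
      _ = inner ℂ (Sinv x) (S x) := hSsa.isSymmetric (Sinv x) x
  have h3 : ‖x‖ ^ 2 ≤ ‖Sinv x‖ * ‖S x‖ := by
    have h4 : ‖(inner ℂ x x : ℂ)‖ = ‖x‖ ^ 2 := by
      rw [inner_self_eq_norm_sq_to_K, norm_pow, RCLike.norm_ofReal, abs_norm]
    calc ‖x‖ ^ 2 = ‖(inner ℂ x x : ℂ)‖ := h4.symm
      _ = ‖(inner ℂ (Sinv x) (S x) : ℂ)‖ := by rw [h2]
      _ ≤ ‖Sinv x‖ * ‖S x‖ := norm_inner_le_norm _ _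
  nlinarith only [h3, sq_nonneg ‖x‖, norm_nonneg (Sinv x), norm_nonneg (S x),
    mul_nonneg (norm_nonneg (Sinv x)) (norm_nonneg (S x))]

lemma abs_inner_D (S Sinv D : H →L[ℂ] H) (hSsa : IsSelfAdjoint S)
    (hSinv : S * Sinv = 1) (hSinv' : Sinv * S = 1) (x : H) :
    ‖(inner ℂ (D x) x : ℂ)‖ ≤ ‖Sinv * D * Sinv‖ * ‖S x‖ ^ 2 := by
  have hSinvsa := sinv_selfadjoint S Sinv hSsa hSinv hSinv'
  have h0 : Sinv (S x) = x := by
    have := congrArg (fun f : H →L[ℂ] H => f x) hSinv'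
    simpa [ContinuousLinearMap.mul_apply] using this
  have h1 : (Sinv * D * Sinv) (S x) = Sinv (D x) := by
    simp [ContinuousLinearMap.mul_apply, h0]
  have h2 : (inner ℂ ((Sinv * D * Sinv) (S x)) (S x) : ℂ) = inner ℂ (D x) x := by
    rw [h1]
    calc (inner ℂ (Sinv (D x)) (S x) : ℂ) = inner ℂ (D x) (Sinv (S x)) :=
          hSinvsa.isSymmetric (D x) (S x)
      _ = inner ℂ (D x) x := by rw [h0]
  calc ‖(inner ℂ (D x) x : ℂ)‖ = ‖(inner ℂ ((Sinv * D * Sinv) (S x)) (S x) : ℂ)‖ := by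
        rw [h2]
    _ ≤ ‖(Sinv * D * Sinv) (S x)‖ * ‖S x‖ := norm_inner_le_norm _ _
    _ ≤ (‖Sinv * D * Sinv‖ * ‖S x‖) * ‖S x‖ :=
        mul_le_mul_of_nonneg_right ((Sinv * D * Sinv).le_opNorm (S x)) (norm_nonneg _)
    _ = ‖Sinv * D * Sinv‖ * ‖S x‖ ^ 2 := by ring

end helpers

set_option maxHeartbeats 1000000 in
/-- if `δ > 0`, then for every `θ > 0` the spectrum of `T` is contained
in `{λ : re λ ≤ −ω_θ and |im λ| ≤ (ν + 1/(δ√θ) + √θ/β)·|re λ|}`. -/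
theorem spectrum_subset_theta
    {H : Type*} [NormedAddCommGroup H] [InnerProductSpace ℂ H] [CompleteSpace H]
    [Nontrivial H]
    (A D S Sinv : H →L[ℂ] H)
    (hA : IsSelfAdjoint A) (a₀ : ℝ) (ha₀ : 0 < a₀)
    (hApd : ∀ x : H, a₀ * ‖x‖ ^ 2 ≤ (inner ℂ (A x) x : ℂ).re)
    (hSsa : IsSelfAdjoint S) (hSpos : ∀ x : H, 0 ≤ (inner ℂ (S x) x : ℂ).re)
    (hSsq : S * S = A)
    (hSinv : S * Sinv = 1) (hSinv' : Sinv * S = 1)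
    (hDacc : ∀ x : H, 0 ≤ (inner ℂ (D x) x : ℂ).re)
    (ν : ℝ) (hν : 0 < ν)
    (hDsec : ∀ x : H, |(inner ℂ (D x) x : ℂ).im| ≤ ν * (inner ℂ (D x) x : ℂ).re)
    (α β δ : ℝ)
    (hα : α = ⨅ x : {x : H // x ≠ 0}, (inner ℂ (D (x : H)) (x : H) : ℂ).re / ‖Sinv (x : H)‖ ^ 2)
    (hβ : β = ⨅ x : {x : H // x ≠ 0}, (inner ℂ (D (x : H)) (x : H) : ℂ).re / ‖(x : H)‖ ^ 2)
    (hδ : δ = ⨅ x : {x : H // x ≠ 0}, (inner ℂ (D (x : H)) (x : H) : ℂ).re / ‖S (x : H)‖ ^ 2)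
    (hδpos : 0 < δ)
    (θ : ℝ) (hθ : 0 < θ)
    (ω : ℝ)
    (hω : ω = (1 / β + ‖Sinv * D * Sinv‖ ^ 2 / (2 * δ)
        + (θ / α + 1 / (θ * δ)) / 2
        + Real.sqrt ((θ / α + 1 / (θ * δ) + ‖Sinv * D * Sinv‖ ^ 2 / δ) ^ 2
            - 4 / (α * δ)) / 2)⁻¹) :
    spectrum ℂ (Tlin A D) ⊆
      {lam : ℂ | lam.re ≤ -ω ∧
        |lam.im| ≤ (ν + 1 / (δ * Real.sqrt θ) + Real.sqrt θ / β) * |lam.re|} := by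
  intro lam hlam
  rw [Set.mem_setOf_eq]
  obtain ⟨x0, hx0⟩ := exists_ne (0 : H)
  haveI : Nonempty {x : H // x ≠ 0} := ⟨⟨x0, hx0⟩⟩
  -- pointwise inequalities
  have hSx_ne : ∀ x : H, x ≠ 0 → S x ≠ 0 := by
    intro x hx hc
    apply hx
    have := congrArg (fun f : H →L[ℂ] H => f x) hSinv'
    simp only [ContinuousLinearMap.mul_apply, ContinuousLinearMap.one_apply] at this
    rw [← this, hc, map_zero]
  have hSinvx_ne : ∀ x : H, x ≠ 0 → Sinv x ≠ 0 := by
    intro x hx hc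
    apply hx
    have := congrArg (fun f : H →L[ℂ] H => f x) hSinv
    simp only [ContinuousLinearMap.mul_apply, ContinuousLinearMap.one_apply] at this
    rw [← this, hc, map_zero]
  have hbddβ : BddBelow (Set.range fun z : {x : H // x ≠ 0} =>
      (inner ℂ (D (z : H)) (z : H) : ℂ).re / ‖(z : H)‖ ^ 2) := by
    refine ⟨0, ?_⟩
    rintro r ⟨z, rfl⟩
    exact div_nonneg (hDacc _) (sq_nonneg _)
  have hbddδ : BddBelow (Set.range fun z : {x : H // x ≠ 0} =>
      (inner ℂ (D (z : H)) (z : H) : ℂ).re / ‖S (z : H)‖ ^ 2) := by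
    refine ⟨0, ?_⟩
    rintro r ⟨z, rfl⟩
    exact div_nonneg (hDacc _) (sq_nonneg _)
  have hbddα : BddBelow (Set.range fun z : {x : H // x ≠ 0} =>
      (inner ℂ (D (z : H)) (z : H) : ℂ).re / ‖Sinv (z : H)‖ ^ 2) := by
    refine ⟨0, ?_⟩
    rintro r ⟨z, rfl⟩
    exact div_nonneg (hDacc _) (sq_nonneg _)
  have hβle : ∀ x : H, x ≠ 0 → β * ‖x‖ ^ 2 ≤ (inner ℂ (D x) x : ℂ).re := by
    intro x hx
    have h := hβ ▸ ciInf_le hbddβ ⟨x, hx⟩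
    rw [le_div_iff₀ (pow_pos (norm_pos_iff.mpr hx) 2)] at h
    linarith
  have hδle : ∀ x : H, x ≠ 0 → δ * ‖S x‖ ^ 2 ≤ (inner ℂ (D x) x : ℂ).re := by
    intro x hx
    have h := hδ ▸ ciInf_le hbddδ ⟨x, hx⟩
    have hS0 : (0:ℝ) < ‖S x‖ ^ 2 := pow_pos (norm_pos_iff.mpr (hSx_ne x hx)) 2
    rw [le_div_iff₀ hS0] at h
    linarith
  have hαle : ∀ x : H, x ≠ 0 → α * ‖Sinv x‖ ^ 2 ≤ (inner ℂ (D x) x : ℂ).re := by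
    intro x hx
    have h := hα ▸ ciInf_le hbddα ⟨x, hx⟩
    have hS0 : (0:ℝ) < ‖Sinv x‖ ^ 2 := pow_pos (norm_pos_iff.mpr (hSinvx_ne x hx)) 2
    rw [le_div_iff₀ hS0] at h
    linarith
  have haSle : ∀ x : H, a₀ * ‖x‖ ^ 2 ≤ ‖S x‖ ^ 2 := by
    intro x
    have h := hApd x
    rw [inner_A_eq S A hSsa hSsq x] at h
    simpa [← Complex.ofReal_pow] using h
  -- positivity of β and α
  have hβpos : 0 < β := by
    have h1 : δ * a₀ ≤ β := by
      rw [hβ]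
      apply le_ciInf
      intro z
      rw [le_div_iff₀ (pow_pos (norm_pos_iff.mpr z.2) 2)]
      calc δ * a₀ * ‖(z : H)‖ ^ 2 = δ * (a₀ * ‖(z : H)‖ ^ 2) := by ring
        _ ≤ δ * ‖S (z : H)‖ ^ 2 :=
            mul_le_mul_of_nonneg_left (haSle (z : H)) hδpos.le
        _ ≤ (inner ℂ (D (z : H)) (z : H) : ℂ).re := hδle (z : H) z.2
    exact lt_of_lt_of_le (by positivity) h1
  have hSinvnorm_pos : 0 < ‖Sinv‖ := by
    rw [norm_pos_iff]
    intro hc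
    apply hx0
    have h := congrArg (fun f : H →L[ℂ] H => f x0) hSinv'
    simp only [ContinuousLinearMap.mul_apply, ContinuousLinearMap.one_apply] at h
    rw [hc] at h
    simpa using h.symm
  have hαpos : 0 < α := by
    have h1 : δ / ‖Sinv‖ ^ 4 ≤ α := by
      rw [hα]
      apply le_ciInf
      intro z
      have hz := z.2
      have hm0 : (0:ℝ) < ‖Sinv (z : H)‖ ^ 2 :=
        pow_pos (norm_pos_iff.mpr (hSinvx_ne (z : H) hz)) 2
      rw [le_div_iff₀ hm0]
      have hcs := cauchy_schwarz_SinvS S Sinv hSsa hSinv (z : H)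
      have hop : ‖Sinv (z : H)‖ ≤ ‖Sinv‖ * ‖(z : H)‖ := Sinv.le_opNorm (z : H)
      have hδz := hδle (z : H) hz
      have hx2 : (0:ℝ) < ‖(z : H)‖ ^ 2 := pow_pos (norm_pos_iff.mpr hz) 2
      -- δ/‖Sinv‖⁴ * m ≤ δ * ‖Sz‖²  ≤  re d
      have h6 : ‖Sinv (z : H)‖ ^ 2 ≤ ‖Sinv‖ ^ 2 * ‖(z:H)‖ ^ 2 := by
        nlinarith only [hop, norm_nonneg (Sinv (z : H)), norm_nonneg (z : H),
          norm_nonneg Sinv]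
      have h7 : ‖Sinv (z:H)‖ ^ 2 * ‖Sinv (z:H)‖ ^ 2
          ≤ (‖Sinv‖ ^ 4 * ‖S (z:H)‖ ^ 2) * ‖Sinv (z:H)‖ ^ 2 := by
        nlinarith only [h6, hcs, hm0.le, hx2.le, sq_nonneg ‖Sinv‖, sq_nonneg ‖(z:H)‖,
          sq_nonneg ‖S (z:H)‖, pow_nonneg (norm_nonneg Sinv) 4]
      have h8 : ‖Sinv (z:H)‖ ^ 2 ≤ ‖Sinv‖ ^ 4 * ‖S (z:H)‖ ^ 2 :=
        (mul_le_mul_iff_of_pos_right hm0).mp h7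
      have hkey : δ / ‖Sinv‖ ^ 4 * ‖Sinv (z : H)‖ ^ 2 ≤ δ * ‖S (z : H)‖ ^ 2 := by
        rw [div_mul_eq_mul_div, div_le_iff₀ (by positivity : (0:ℝ) < ‖Sinv‖ ^ 4)]
        have := mul_le_mul_of_nonneg_left h8 hδpos.le
        linarith only [this]
      calc δ / ‖Sinv‖ ^ 4 * ‖Sinv (z : H)‖ ^ 2 ≤ δ * ‖S (z : H)‖ ^ 2 := hkey
        _ ≤ (inner ℂ (D (z : H)) (z : H) : ℂ).re := hδz
    exact lt_of_lt_of_le (by positivity) h1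
  -- ============ extraction of the approximating sequence ============
  set KK := ‖Sinv * D * Sinv‖ with hKKdef
  have hKK0 : 0 ≤ KK := norm_nonneg _
  have hnotunit : ¬ IsUnit ((lam ^ 2) • (1 : H →L[ℂ] H) + lam • D + A) := by
    intro h
    exact (spectrum.mem_iff.mp hlam) (pencil_unit A D lam h)
  have key : ∀ n : ℕ, ∃ p : ℂ × ℝ,
      β ≤ p.1.re ∧ δ * p.2 ≤ p.1.re ∧ α ≤ p.1.re * p.2 ∧
      ‖p.1‖ ≤ KK * p.2 ∧ |p.1.im| ≤ ν * p.1.re ∧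
      a₀ ≤ p.2 ∧ ‖p.1‖ ≤ ‖D‖ ∧ p.2 ≤ ‖S‖ ^ 2 ∧
      ‖lam ^ 2 + p.1 * lam + ((p.2 : ℝ) : ℂ)‖ < 1 / ((n : ℝ) + 1) := by
    intro n
    set P : H →L[ℂ] H := (lam ^ 2) • (1 : H →L[ℂ] H) + lam • D + A with hPdef
    have h2 : ¬ ∀ x : H, (1 / ((n : ℝ) + 1)) * ‖x‖ ^ 2 ≤ ‖(inner ℂ (P x) x : ℂ)‖ := by
      intro hall
      exact hnotunit (isUnit_of_inner_bound P _ (by positivity) hall)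
    push_neg at h2
    obtain ⟨x, hxlt⟩ := h2
    have hxne : x ≠ 0 := by
      rintro rfl
      simp only [inner_zero_right, norm_zero, ne_eq, mul_zero] at hxlt
      simp at hxlt
    have hN0 : (0:ℝ) < ‖x‖ ^ 2 := pow_pos (norm_pos_iff.mpr hxne) 2
    have haS0 : (0:ℝ) < ‖S x‖ ^ 2 := pow_pos (norm_pos_iff.mpr (hSx_ne x hxne)) 2
    set dC : ℂ := inner ℂ (D x) x with hdCdef
    have hre_eq : (((starRingEnd ℂ) dC / ((‖x‖ ^ 2 : ℝ) : ℂ)).re) = dC.re / ‖x‖ ^ 2 := by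
      rw [Complex.div_ofReal_re, Complex.conj_re]
    have him_eq : (((starRingEnd ℂ) dC / ((‖x‖ ^ 2 : ℝ) : ℂ)).im) = -dC.im / ‖x‖ ^ 2 := by
      rw [Complex.div_ofReal_im, Complex.conj_im]
    have habs_eq : ‖(starRingEnd ℂ) dC / ((‖x‖ ^ 2 : ℝ) : ℂ)‖
        = ‖dC‖ / ‖x‖ ^ 2 := by
      rw [norm_div, Complex.norm_conj, Complex.norm_real, Real.norm_eq_abs, abs_of_pos hN0]
    have hxx : (inner ℂ x x : ℂ) = ((‖x‖ ^ 2 : ℝ) : ℂ) := by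
      rw [inner_self_eq_norm_sq_to_K]; norm_cast
    refine ⟨((starRingEnd ℂ) dC / ((‖x‖ ^ 2 : ℝ) : ℂ), ‖S x‖ ^ 2 / ‖x‖ ^ 2),
      ?_, ?_, ?_, ?_, ?_, ?_, ?_, ?_, ?_⟩
    · dsimp only
      rw [hre_eq, le_div_iff₀ hN0]
      linarith only [hβle x hxne]
    · dsimp only
      rw [hre_eq, ← mul_div_assoc, div_le_div_iff₀ hN0 hN0]
      nlinarith only [hδle x hxne, hN0.le]
    · dsimp only
      rw [hre_eq, div_mul_div_comm, le_div_iff₀ (mul_pos hN0 hN0)]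
      have h1 := hαle x hxne
      have h2 := cauchy_schwarz_SinvS S Sinv hSsa hSinv x
      have hd0 : 0 ≤ dC.re := hDacc x
      nlinarith only [h1, h2, hd0, hαpos.le, sq_nonneg ‖S x‖, sq_nonneg ‖Sinv x‖]
    · dsimp only
      rw [habs_eq, ← mul_div_assoc, div_le_div_iff₀ hN0 hN0]
      have h1 := abs_inner_D S Sinv D hSsa hSinv hSinv' x
      rw [← hKKdef] at h1
      nlinarith only [h1, hN0.le]
    · dsimp only
      rw [hre_eq, him_eq, abs_div, abs_neg, abs_of_pos hN0, ← mul_div_assoc,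
        div_le_div_iff₀ hN0 hN0]
      nlinarith only [hDsec x, hN0.le]
    · dsimp only
      rw [le_div_iff₀ hN0]
      exact haSle x
    · dsimp only
      rw [habs_eq, div_le_iff₀ hN0]
      calc ‖dC‖ = ‖(inner ℂ (D x) x : ℂ)‖ := by rw [hdCdef]
        _ ≤ ‖D x‖ * ‖x‖ := norm_inner_le_norm _ _
        _ ≤ (‖D‖ * ‖x‖) * ‖x‖ :=
            mul_le_mul_of_nonneg_right (D.le_opNorm x) (norm_nonneg _)
        _ = ‖D‖ * ‖x‖ ^ 2 := by ring
    · dsimp only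
      rw [div_le_iff₀ hN0]
      have := S.le_opNorm x
      nlinarith only [this, norm_nonneg (S x), norm_nonneg S, norm_nonneg x]
    · -- the approximate equation
      dsimp only
      have hPx : (inner ℂ (P x) x : ℂ)
          = (starRingEnd ℂ) (lam ^ 2) * ((‖x‖ ^ 2 : ℝ) : ℂ) + (starRingEnd ℂ) lam * dC
            + ((‖S x‖ ^ 2 : ℝ) : ℂ) := by
        have hPxval : P x = lam ^ 2 • x + lam • D x + A x := by
          rw [hPdef]
          simp [ContinuousLinearMap.add_apply, ContinuousLinearMap.smul_apply,
            ContinuousLinearMap.one_apply]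
        have hAxx : (inner ℂ (A x) x : ℂ) = ((‖S x‖ ^ 2 : ℝ) : ℂ) := by
          rw [inner_A_eq S A hSsa hSsq x]; norm_cast
        rw [hPxval, inner_add_left, inner_add_left, inner_smul_left, inner_smul_left,
          hxx, hAxx, hdCdef]
      have hxnorm_ne : ((‖x‖ : ℝ) : ℂ) ≠ 0 := by
        exact_mod_cast norm_ne_zero_iff.mpr hxne
      have hconj : (starRingEnd ℂ) (inner ℂ (P x) x : ℂ)
          = ((‖x‖ ^ 2 : ℝ) : ℂ) * (lam ^ 2 + ((starRingEnd ℂ) dC / ((‖x‖ ^ 2 : ℝ) : ℂ)) * lam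
              + ((‖S x‖ ^ 2 / ‖x‖ ^ 2 : ℝ) : ℂ)) := by
        rw [hPx]
        push_cast
        field_simp
        simp only [map_add, map_mul, map_pow, Complex.conj_conj, Complex.conj_ofReal]
        ring
      have hnorm : ‖(inner ℂ (P x) x : ℂ)‖
          = ‖x‖ ^ 2 * ‖lam ^ 2 + ((starRingEnd ℂ) dC / ((‖x‖ ^ 2 : ℝ) : ℂ)) * lam
            + ((‖S x‖ ^ 2 / ‖x‖ ^ 2 : ℝ) : ℂ)‖ := by
        rw [← norm_star (inner ℂ (P x) x : ℂ), ← starRingEnd_apply, hconj, norm_mul]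
        congr 1
        rw [Complex.norm_real, Real.norm_eq_abs, abs_of_pos hN0]
      rw [hnorm] at hxlt
      have h9 : ‖x‖ ^ 2 * ‖lam ^ 2 + ((starRingEnd ℂ) dC / ((‖x‖ ^ 2 : ℝ) : ℂ)) * lam
            + ((‖S x‖ ^ 2 / ‖x‖ ^ 2 : ℝ) : ℂ)‖ < ‖x‖ ^ 2 * (1 / ((n : ℝ) + 1)) := by
        linarith only [hxlt]
      exact (mul_lt_mul_iff_right₀ hN0).mp h9
  -- ============ pass to the limit ============
  choose seq hseq using key
  have hmem : ∀ n : ℕ, seq n ∈ Metric.closedBall (0 : ℂ × ℝ) (‖D‖ + ‖S‖ ^ 2) := by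
    intro n
    rw [Metric.mem_closedBall, dist_zero_right, Prod.norm_def]
    apply max_le
    · calc ‖(seq n).1‖ ≤ ‖D‖ := (hseq n).2.2.2.2.2.2.1
        _ ≤ ‖D‖ + ‖S‖ ^ 2 := by linarith [sq_nonneg ‖S‖]
    · rw [Real.norm_eq_abs, abs_of_nonneg (le_trans ha₀.le (hseq n).2.2.2.2.2.1)]
      calc (seq n).2 ≤ ‖S‖ ^ 2 := (hseq n).2.2.2.2.2.2.2.1
        _ ≤ ‖D‖ + ‖S‖ ^ 2 := by linarith [norm_nonneg D]
  obtain ⟨z, _, φ, hφmono, hφtend⟩ :=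
    tendsto_subseq_of_bounded Metric.isBounded_closedBall hmem
  set dL := z.1 with hdLdef
  set aL := z.2 with haLdef
  have htd : Tendsto (fun n => (seq (φ n)).1) atTop (𝓝 dL) :=
    (continuous_fst.tendsto z).comp hφtend
  have hta : Tendsto (fun n => (seq (φ n)).2) atTop (𝓝 aL) :=
    (continuous_snd.tendsto z).comp hφtend
  have htdre : Tendsto (fun n => (seq (φ n)).1.re) atTop (𝓝 dL.re) :=
    (Complex.continuous_re.tendsto dL).comp htd
  have htdim : Tendsto (fun n => (seq (φ n)).1.im) atTop (𝓝 dL.im) :=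
    (Complex.continuous_im.tendsto dL).comp htd
  have htdabs : Tendsto (fun n => ‖(seq (φ n)).1‖) atTop (𝓝 ‖dL‖) :=
    (continuous_norm.tendsto dL).comp htd
  have hβL : β ≤ dL.re :=
    ge_of_tendsto htdre (Eventually.of_forall fun n => (hseq (φ n)).1)
  have hδL : δ * aL ≤ dL.re := by
    have h := htdre.sub (hta.const_mul δ)
    have h2 : (0:ℝ) ≤ dL.re - δ * aL :=
      ge_of_tendsto h (Eventually.of_forall fun n => by
        have := (hseq (φ n)).2.1
        linarith)
    linarith
  have hαL : α ≤ dL.re * aL :=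
    ge_of_tendsto (htdre.mul hta) (Eventually.of_forall fun n => (hseq (φ n)).2.2.1)
  have hKL : ‖dL‖ ≤ KK * aL := by
    have h := (hta.const_mul KK).sub htdabs
    have h2 : (0:ℝ) ≤ KK * aL - ‖dL‖ :=
      ge_of_tendsto h (Eventually.of_forall fun n => by
        have := (hseq (φ n)).2.2.2.1
        linarith)
    linarith
  have hsecL : |dL.im| ≤ ν * dL.re := by
    have habs : Tendsto (fun n => |(seq (φ n)).1.im|) atTop (𝓝 |dL.im|) :=
      (continuous_abs.tendsto dL.im).comp htdim
    have h := (htdre.const_mul ν).sub habs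
    have h2 : (0:ℝ) ≤ ν * dL.re - |dL.im| :=
      ge_of_tendsto h (Eventually.of_forall fun n => by
        have := (hseq (φ n)).2.2.2.2.1
        linarith)
    linarith
  have haL : a₀ ≤ aL :=
    ge_of_tendsto hta (Eventually.of_forall fun n => (hseq (φ n)).2.2.2.2.2.1)
  have haLpos : 0 < aL := lt_of_lt_of_le ha₀ haL
  have hEq : lam ^ 2 + dL * lam + ((aL : ℝ) : ℂ) = 0 := by
    have hGlim : Tendsto (fun n => lam ^ 2 + (seq (φ n)).1 * lam + (((seq (φ n)).2 : ℝ) : ℂ))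
        atTop (𝓝 (lam ^ 2 + dL * lam + ((aL : ℝ) : ℂ))) := by
      exact (tendsto_const_nhds.add (htd.mul tendsto_const_nhds)).add
        ((Complex.continuous_ofReal.tendsto aL).comp hta)
    have hnormlim : Tendsto
        (fun n => ‖lam ^ 2 + (seq (φ n)).1 * lam + (((seq (φ n)).2 : ℝ) : ℂ)‖) atTop
        (𝓝 ‖lam ^ 2 + dL * lam + ((aL : ℝ) : ℂ)‖) := hGlim.norm
    have hzero : Tendsto
        (fun n => ‖lam ^ 2 + (seq (φ n)).1 * lam + (((seq (φ n)).2 : ℝ) : ℂ)‖) atTop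
        (𝓝 0) := by
      refine squeeze_zero (fun n => norm_nonneg _) ?_
        tendsto_one_div_add_atTop_nhds_zero_nat
      intro n
      have h1 := (hseq (φ n)).2.2.2.2.2.2.2.2
      have h2 : 1 / ((φ n : ℝ) + 1) ≤ 1 / ((n : ℝ) + 1) := by
        apply one_div_le_one_div_of_le (by positivity)
        have h3 : (n : ℝ) ≤ (φ n : ℝ) := Nat.cast_le.mpr hφmono.le_apply
        linarith
      linarith
    have h0 : ‖lam ^ 2 + dL * lam + ((aL : ℝ) : ℂ)‖ = 0 :=
      tendsto_nhds_unique hnormlim hzero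
    exact norm_eq_zero.mp h0
  obtain ⟨P1, P2⟩ := scalar_key α β δ ν θ KK aL dL lam hαpos hβpos hδpos hν hθ hKK0
    haLpos hβL hδL hαL hKL hsecL hEq
  refine ⟨?_, P2⟩
  rw [hω]
  exact P1
end

section
/- Under the standing assumptions, if δ > 0, then for every θ > 0, every t ≥ 0 and every w ∈ H × H one has [exp(tT) w, exp(tT) w]_θ ≤ exp(−2 ω_θ t) · [w, w]_θ; that is, the semigroup exp(tT) decays at exponential rate ω_θ in the norm |·|_θ. -/
set_option maxSynthPendingDepth 3

open scoped InnerProductSpace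

private lemma stepA {H : Type*} [NormedAddCommGroup H] [InnerProductSpace ℂ H]
    (A D S Sinv : H →L[ℂ] H) (θ : ℝ)
    (h1 : ∀ x y : H, (inner ℂ (A x) y : ℂ) = inner ℂ (S x) (S y))
    (h1r : ∀ x y : H, (inner ℂ x (A y) : ℂ) = inner ℂ (S x) (S y))
    (h2 : ∀ x y : H, (inner ℂ (S x) (Sinv y) : ℂ) = inner ℂ x y)
    (h3 : ∀ x y : H, (inner ℂ (Sinv x) (S y) : ℂ) = inner ℂ x y)
    (h4 : ∀ x : H, Sinv (A x) = S x)
    (u : H × H) :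
    formTheta D S Sinv θ (Tlin A D u) u + formTheta D S Sinv θ u (Tlin A D u)
      = -((inner ℂ (D u.1) u.1 : ℂ) + inner ℂ u.1 (D u.1))
        - (θ : ℂ) * ((inner ℂ (D u.2) u.2 : ℂ) + inner ℂ u.2 (D u.2)) := by
  simp only [formTheta, Tlin, ContinuousLinearMap.prod_apply, ContinuousLinearMap.sub_apply,
    ContinuousLinearMap.neg_apply, ContinuousLinearMap.comp_apply,
    ContinuousLinearMap.coe_fst', ContinuousLinearMap.coe_snd', map_sub, map_neg,
    inner_sub_left, inner_sub_right, inner_neg_left, inner_neg_right, h4, h1, h1r, h2, h3]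
  ring


private lemma formTheta_self_re' {H : Type*} [NormedAddCommGroup H] [InnerProductSpace ℂ H]
    (D S Sinv : H →L[ℂ] H) (θ : ℝ) (u : H × H) :
    (formTheta D S Sinv θ u u).re
      = ‖u.1‖ ^ 2 + θ * ‖Sinv u.1‖ ^ 2 + ‖S u.2‖ ^ 2 + θ * ‖u.2‖ ^ 2
        + θ * ‖Sinv (D u.2)‖ ^ 2
        + 2 * (θ * (inner ℂ (Sinv (D u.2)) (Sinv u.1) : ℂ).re) := by
  have hn : ∀ x : H, (inner ℂ x x : ℂ).re = ‖x‖ ^ 2 := by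
    intro x; rw [inner_self_eq_norm_sq_to_K]; simp [← Complex.ofReal_pow]
  have hc : (inner ℂ (Sinv u.1) (Sinv (D u.2)) : ℂ).re
      = (inner ℂ (Sinv (D u.2)) (Sinv u.1) : ℂ).re := by
    rw [← inner_conj_symm (Sinv u.1) (Sinv (D u.2)), Complex.conj_re]
  simp only [formTheta, Complex.add_re, Complex.re_ofReal_mul, hn, hc]
  ring

private lemma arith_core (m a b c R θ d1 d2 n1 s1 n2 t2 r2 X : ℝ)
    (hm : 0 < m) (ha : 0 < a) (hb : 0 < b) (hc : 0 < c) (hθ : 0 < θ)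
    (hRnn : 0 ≤ R) (hR2 : R ^ 2 = (a - b - 2 * c) ^ 2 + 8 * a * c)
    (e1 : n1 ≤ m * d1) (e2 : θ * s1 ≤ a * d1) (e3 : t2 ≤ b * (θ * d2))
    (e4 : θ * n2 ≤ m * (θ * d2)) (e5 : θ * r2 ≤ 2 * c * (θ * d2))
    (eX : ∀ ε : ℝ, 0 < ε → 2 * (θ * X) ≤ ε * (θ * s1) + (θ * r2) / ε) :
    n1 + θ * s1 + t2 + θ * n2 + θ * r2 + 2 * (θ * X)
      ≤ (m + c + (a + b) / 2 + R / 2) * (d1 + θ * d2) := by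
  set q : ℝ := a - b - 2 * c with hq
  have hqR : q < R := by nlinarith
  have hεp : 0 < (-q + R) / (2 * a) := div_pos (by linarith) (by linarith)
  set ε : ℝ := (-q + R) / (2 * a) with hε
  have haε : a * ε = (-q + R) / 2 := by
    rw [hε]; field_simp
  have key2 : (a * ε + q) * ε = 2 * c := by
    have h4a : (2 * a) ≠ 0 := by positivity
    rw [hε]; field_simp
    linear_combination hR2
  have key2' : 2 * c / ε = a * ε + q := by
    rw [eq_comm, eq_div_iff (ne_of_gt hεp)]; exact key2
  have f1 : ε * (θ * s1) ≤ ε * (a * d1) := by nlinarith [e2]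
  have f2 : (θ * r2) / ε ≤ (2 * c * (θ * d2)) / ε := (div_le_div_iff_of_pos_right hεp).mpr e5
  have eX' := eX ε hεp
  have sum1 : n1 + θ * s1 + t2 + θ * n2 + θ * r2 + 2 * (θ * X)
      ≤ (m + a + a * ε) * d1 + (b + m + 2 * c + 2 * c / ε) * (θ * d2) := by
    have expand : (m + a + a * ε) * d1 + (b + m + 2 * c + 2 * c / ε) * (θ * d2)
        = m * d1 + a * d1 + ε * (a * d1) + b * (θ * d2) + m * (θ * d2)
          + 2 * c * (θ * d2) + (2 * c * (θ * d2)) / ε := by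
      field_simp; ring
    rw [expand]
    linarith
  have coef1 : m + a + a * ε = m + c + (a + b) / 2 + R / 2 := by
    rw [haε, hq]; ring
  have coef2 : b + m + 2 * c + 2 * c / ε = m + c + (a + b) / 2 + R / 2 := by
    rw [key2', haε, hq]; ring
  rw [coef1, coef2] at sum1
  linarith [sum1]

set_option maxHeartbeats 1600000 in
private lemma stepB' {H : Type*} [NormedAddCommGroup H] [InnerProductSpace ℂ H]
    (D S Sinv : H →L[ℂ] H) (θ α β δ K : ℝ)
    (hθ : 0 < θ) (hαp : 0 < α) (hβp : 0 < β) (hδp : 0 < δ) (hKp : 0 < K)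
    (hbα : ∀ x : H, α * ‖Sinv x‖ ^ 2 ≤ (inner ℂ (D x) x : ℂ).re)
    (hbβ : ∀ x : H, β * ‖x‖ ^ 2 ≤ (inner ℂ (D x) x : ℂ).re)
    (hbδ : ∀ x : H, δ * ‖S x‖ ^ 2 ≤ (inner ℂ (D x) x : ℂ).re)
    (hKb : ∀ x : H, ‖Sinv (D x)‖ ≤ K * ‖S x‖)
    (u : H × H) :
    (formTheta D S Sinv θ u u).re
      ≤ (1 / β + K ^ 2 / (2 * δ) + (θ / α + 1 / (θ * δ)) / 2
          + Real.sqrt ((θ / α + 1 / (θ * δ) + K ^ 2 / δ) ^ 2 - 4 / (α * δ)) / 2)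
        * ((inner ℂ (D u.1) u.1 : ℂ).re + θ * (inner ℂ (D u.2) u.2 : ℂ).re) := by
  obtain ⟨x, y⟩ := u
  simp only at *
  have hd1 := hbβ x
  have hd2 := hbβ y
  have hRad : (θ / α + 1 / (θ * δ) + K ^ 2 / δ) ^ 2 - 4 / (α * δ)
      = (θ / α - 1 / (θ * δ) - 2 * (K ^ 2 / (2 * δ))) ^ 2
        + 8 * (θ / α) * (K ^ 2 / (2 * δ)) := by
    field_simp; ring
  have e1 : ‖x‖ ^ 2 ≤ (1 / β) * (inner ℂ (D x) x : ℂ).re := by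
    rw [one_div, inv_mul_eq_div, le_div_iff₀ hβp, mul_comm]; exact hd1
  have e2 : θ * ‖Sinv x‖ ^ 2 ≤ (θ / α) * (inner ℂ (D x) x : ℂ).re := by
    rw [div_mul_eq_mul_div, le_div_iff₀ hαp]
    nlinarith [hbα x]
  have e3 : ‖S y‖ ^ 2 ≤ (1 / (θ * δ)) * (θ * (inner ℂ (D y) y : ℂ).re) := by
    have h3 := hbδ y
    rw [one_div, inv_mul_eq_div, le_div_iff₀ (by positivity : (0:ℝ) < θ * δ)]
    nlinarith
  have e4 : θ * ‖y‖ ^ 2 ≤ (1 / β) * (θ * (inner ℂ (D y) y : ℂ).re) := by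
    rw [one_div, inv_mul_eq_div, le_div_iff₀ hβp]
    nlinarith
  have e5 : θ * ‖Sinv (D y)‖ ^ 2
      ≤ 2 * (K ^ 2 / (2 * δ)) * (θ * (inner ℂ (D y) y : ℂ).re) := by
    have h1 : ‖Sinv (D y)‖ ≤ K * ‖S y‖ := hKb y
    have h2 : ‖Sinv (D y)‖ ^ 2 ≤ K ^ 2 * ‖S y‖ ^ 2 := by
      nlinarith [norm_nonneg (Sinv (D y)), norm_nonneg (S y), hKp.le]
    have h3 : δ * ‖S y‖ ^ 2 ≤ (inner ℂ (D y) y : ℂ).re := hbδ y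
    have h4 : 2 * (K ^ 2 / (2 * δ)) * (θ * (inner ℂ (D y) y : ℂ).re)
        = θ * (K ^ 2 * ((inner ℂ (D y) y : ℂ).re / δ)) := by
      field_simp
    rw [h4]
    have h5 : ‖S y‖ ^ 2 ≤ (inner ℂ (D y) y : ℂ).re / δ := by
      rw [le_div_iff₀ hδp]; nlinarith
    have h6 : ‖Sinv (D y)‖ ^ 2 ≤ K ^ 2 * ((inner ℂ (D y) y : ℂ).re / δ) := by
      nlinarith [sq_nonneg K]
    exact mul_le_mul_of_nonneg_left h6 hθ.le
  have eX : ∀ ε : ℝ, 0 < ε →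
      2 * (θ * (inner ℂ (Sinv (D y)) (Sinv x) : ℂ).re)
        ≤ ε * (θ * ‖Sinv x‖ ^ 2) + (θ * ‖Sinv (D y)‖ ^ 2) / ε := by
    intro ε hε
    have h : (inner ℂ (Sinv (D y)) (Sinv x) : ℂ).re ≤ ‖Sinv (D y)‖ * ‖Sinv x‖ :=
      (Complex.re_le_norm _).trans (by
                                      exact norm_inner_le_norm _ _)
    have h2 : 2 * ε * (inner ℂ (Sinv (D y)) (Sinv x) : ℂ).re
        ≤ ε ^ 2 * ‖Sinv x‖ ^ 2 + ‖Sinv (D y)‖ ^ 2 := by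
      nlinarith [sq_nonneg (ε * ‖Sinv x‖ - ‖Sinv (D y)‖), norm_nonneg (Sinv x),
        norm_nonneg (Sinv (D y))]
    have h3 : (2 * (θ * (inner ℂ (Sinv (D y)) (Sinv x) : ℂ).re)) * ε
        ≤ (ε * (θ * ‖Sinv x‖ ^ 2) + (θ * ‖Sinv (D y)‖ ^ 2) / ε) * ε := by
      have heq : (ε * (θ * ‖Sinv x‖ ^ 2) + (θ * ‖Sinv (D y)‖ ^ 2) / ε) * ε
          = ε ^ 2 * (θ * ‖Sinv x‖ ^ 2) + θ * ‖Sinv (D y)‖ ^ 2 := by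
        field_simp
      rw [heq]
      nlinarith [mul_le_mul_of_nonneg_left h2 hθ.le]
    exact le_of_mul_le_mul_right h3 hε
  have key := arith_core (1 / β) (θ / α) (1 / (θ * δ)) (K ^ 2 / (2 * δ))
      (Real.sqrt ((θ / α + 1 / (θ * δ) + K ^ 2 / δ) ^ 2 - 4 / (α * δ))) θ
      ((inner ℂ (D x) x : ℂ).re) ((inner ℂ (D y) y : ℂ).re)
      (‖x‖ ^ 2) (‖Sinv x‖ ^ 2) (‖y‖ ^ 2) (‖S y‖ ^ 2) (‖Sinv (D y)‖ ^ 2)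
      ((inner ℂ (Sinv (D y)) (Sinv x) : ℂ).re)
      (by positivity) (by positivity) (by positivity) (by positivity) hθ
      (Real.sqrt_nonneg _)
      (by rw [Real.sq_sqrt (by rw [hRad]; positivity)]; exact hRad)
      e1 e2 e3 e4 e5 eX
  have hform := formTheta_self_re' D S Sinv θ (x, y)
  simp only at hform
  rw [hform]
  linarith [key]

set_option maxHeartbeats 1600000 in
/-- if `δ > 0`, then for every `θ > 0`, `t ≥ 0` and `w ∈ H × H`,
`[exp(tT) w, exp(tT) w]_θ ≤ exp(−2 ω_θ t) · [w, w]_θ`: the semigroup `exp(tT)` decays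
at exponential rate `ω_θ` in the norm `|·|_θ`. -/
theorem exp_decay_formTheta
    {H : Type*} [NormedAddCommGroup H] [InnerProductSpace ℂ H] [CompleteSpace H]
    [Nontrivial H]
    (A D S Sinv : H →L[ℂ] H)
    (hA : IsSelfAdjoint A) (a₀ : ℝ) (ha₀ : 0 < a₀)
    (hApd : ∀ x : H, a₀ * ‖x‖ ^ 2 ≤ (inner ℂ (A x) x : ℂ).re)
    (hSsa : IsSelfAdjoint S) (hSpos : ∀ x : H, 0 ≤ (inner ℂ (S x) x : ℂ).re)
    (hSsq : S * S = A)
    (hSinv : S * Sinv = 1) (hSinv' : Sinv * S = 1)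
    (hDacc : ∀ x : H, 0 ≤ (inner ℂ (D x) x : ℂ).re)
    (ν : ℝ) (hν : 0 < ν)
    (hDsec : ∀ x : H, |(inner ℂ (D x) x : ℂ).im| ≤ ν * (inner ℂ (D x) x : ℂ).re)
    (α β δ : ℝ)
    (hα : α = ⨅ x : {x : H // x ≠ 0}, (inner ℂ (D (x : H)) (x : H) : ℂ).re / ‖Sinv (x : H)‖ ^ 2)
    (hβ : β = ⨅ x : {x : H // x ≠ 0}, (inner ℂ (D (x : H)) (x : H) : ℂ).re / ‖(x : H)‖ ^ 2)
    (hδ : δ = ⨅ x : {x : H // x ≠ 0}, (inner ℂ (D (x : H)) (x : H) : ℂ).re / ‖S (x : H)‖ ^ 2)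
    (hδpos : 0 < δ)
    (θ : ℝ) (hθ : 0 < θ)
    (ω : ℝ)
    (hω : ω = (1 / β + ‖Sinv * D * Sinv‖ ^ 2 / (2 * δ)
        + (θ / α + 1 / (θ * δ)) / 2
        + Real.sqrt ((θ / α + 1 / (θ * δ) + ‖Sinv * D * Sinv‖ ^ 2 / δ) ^ 2
            - 4 / (α * δ)) / 2)⁻¹)
    (t : ℝ) (ht : 0 ≤ t) (w : H × H) :
    (formTheta D S Sinv θ (NormedSpace.exp (t • Tlin A D) w)
        (NormedSpace.exp (t • Tlin A D) w)).re
      ≤ Real.exp (-2 * ω * t) * (formTheta D S Sinv θ w w).re := by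
  -- basic pointwise operator identities
  have hSS : ∀ x : H, S (Sinv x) = x := fun x => by
    have h := ContinuousLinearMap.ext_iff.mp hSinv x
    simpa [ContinuousLinearMap.mul_apply] using h
  have hSS' : ∀ x : H, Sinv (S x) = x := fun x => by
    have h := ContinuousLinearMap.ext_iff.mp hSinv' x
    simpa [ContinuousLinearMap.mul_apply] using h
  have hSA : ∀ x : H, S (S x) = A x := fun x => by
    have h := ContinuousLinearMap.ext_iff.mp hSsq x
    simpa [ContinuousLinearMap.mul_apply] using h
  have hadjS : ∀ x y : H, (inner ℂ (S x) y : ℂ) = inner ℂ x (S y) := by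
    intro x y
    conv_lhs => rw [← hSsa.adjoint_eq]
    exact ContinuousLinearMap.adjoint_inner_left S y x
  have hSinvsa : IsSelfAdjoint Sinv := by
    have h1 : star Sinv * S = 1 := by
      have h := congrArg star hSinv
      rwa [star_mul, star_one, hSsa.star_eq] at h
    show star Sinv = Sinv
    calc star Sinv = star Sinv * (S * Sinv) := by rw [hSinv, mul_one]
      _ = star Sinv * S * Sinv := by rw [mul_assoc]
      _ = Sinv := by rw [h1, one_mul]
  have hadjSinv : ∀ x y : H, (inner ℂ (Sinv x) y : ℂ) = inner ℂ x (Sinv y) := by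
    intro x y
    conv_lhs => rw [← hSinvsa.adjoint_eq]
    exact ContinuousLinearMap.adjoint_inner_left Sinv y x
  -- inner-product identities for stepA
  have h1 : ∀ x y : H, (inner ℂ (A x) y : ℂ) = inner ℂ (S x) (S y) := by
    intro x y; rw [← hSA x, hadjS]
  have h1r : ∀ x y : H, (inner ℂ x (A y) : ℂ) = inner ℂ (S x) (S y) := by
    intro x y; rw [← hSA y, ← hadjS]
  have h2 : ∀ x y : H, (inner ℂ (S x) (Sinv y) : ℂ) = inner ℂ x y := by
    intro x y; rw [hadjS, hSS]
  have h3 : ∀ x y : H, (inner ℂ (Sinv x) (S y) : ℂ) = inner ℂ x y := by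
    intro x y; rw [hadjSinv, hSS']
  have h4 : ∀ x : H, Sinv (A x) = S x := by
    intro x; rw [← hSA x, hSS']
  -- nonvanishing facts
  obtain ⟨x₀, hx₀⟩ := exists_ne (0 : H)
  haveI : Nonempty {x : H // x ≠ 0} := ⟨⟨x₀, hx₀⟩⟩
  have hSx : ∀ x : H, x ≠ 0 → S x ≠ 0 := by
    intro x hx h; exact hx (by rw [← hSS' x, h, map_zero])
  have hSinvx : ∀ x : H, x ≠ 0 → Sinv x ≠ 0 := by
    intro x hx h; exact hx (by rw [← hSS x, h, map_zero])
  -- pointwise lower bounds from the infima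
  have hbddβ : BddBelow (Set.range fun x : {x : H // x ≠ 0} =>
      (inner ℂ (D (x : H)) (x : H) : ℂ).re / ‖(x : H)‖ ^ 2) := by
    refine ⟨0, ?_⟩; rintro r ⟨y, rfl⟩
    exact div_nonneg (hDacc _) (by positivity)
  have hbddα : BddBelow (Set.range fun x : {x : H // x ≠ 0} =>
      (inner ℂ (D (x : H)) (x : H) : ℂ).re / ‖Sinv (x : H)‖ ^ 2) := by
    refine ⟨0, ?_⟩; rintro r ⟨y, rfl⟩
    exact div_nonneg (hDacc _) (by positivity)
  have hbddδ : BddBelow (Set.range fun x : {x : H // x ≠ 0} =>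
      (inner ℂ (D (x : H)) (x : H) : ℂ).re / ‖S (x : H)‖ ^ 2) := by
    refine ⟨0, ?_⟩; rintro r ⟨y, rfl⟩
    exact div_nonneg (hDacc _) (by positivity)
  have hbβ : ∀ x : H, β * ‖x‖ ^ 2 ≤ (inner ℂ (D x) x : ℂ).re := by
    intro x
    rcases eq_or_ne x 0 with rfl | hx
    · simp
    · have h : β ≤ (inner ℂ (D x) x : ℂ).re / ‖x‖ ^ 2 := by
        rw [hβ]; exact ciInf_le hbddβ (⟨x, hx⟩ : {x : H // x ≠ 0})
      have hx2 : (0:ℝ) < ‖x‖ ^ 2 := pow_pos (norm_pos_iff.mpr hx) 2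
      rw [le_div_iff₀ hx2] at h; linarith
  have hbα : ∀ x : H, α * ‖Sinv x‖ ^ 2 ≤ (inner ℂ (D x) x : ℂ).re := by
    intro x
    rcases eq_or_ne x 0 with rfl | hx
    · simp
    · have h : α ≤ (inner ℂ (D x) x : ℂ).re / ‖Sinv x‖ ^ 2 := by
        rw [hα]; exact ciInf_le hbddα (⟨x, hx⟩ : {x : H // x ≠ 0})
      have hx2 : (0:ℝ) < ‖Sinv x‖ ^ 2 := pow_pos (norm_pos_iff.mpr (hSinvx x hx)) 2
      rw [le_div_iff₀ hx2] at h; linarith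
  have hbδ : ∀ x : H, δ * ‖S x‖ ^ 2 ≤ (inner ℂ (D x) x : ℂ).re := by
    intro x
    rcases eq_or_ne x 0 with rfl | hx
    · simp
    · have h : δ ≤ (inner ℂ (D x) x : ℂ).re / ‖S x‖ ^ 2 := by
        rw [hδ]; exact ciInf_le hbddδ (⟨x, hx⟩ : {x : H // x ≠ 0})
      have hx2 : (0:ℝ) < ‖S x‖ ^ 2 := pow_pos (norm_pos_iff.mpr (hSx x hx)) 2
      rw [le_div_iff₀ hx2] at h; linarith
  -- ‖Sinv‖ > 0
  have hSinvop : 0 < ‖Sinv‖ := by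
    obtain ⟨x, hx⟩ := exists_ne (0 : H)
    have : Sinv ≠ 0 := by
      intro h
      exact hSinvx x hx (by rw [h]; rfl)
    exact norm_pos_iff.mpr this
  -- positivity of α and β
  have hβpos : 0 < β := by
    have hlb : ∀ x : {x : H // x ≠ 0},
        δ / ‖Sinv‖ ^ 2 ≤ (inner ℂ (D (x : H)) (x : H) : ℂ).re / ‖(x : H)‖ ^ 2 := by
      rintro ⟨x, hx⟩
      have hSxne := hSx x hx
      have h5 : ‖x‖ ≤ ‖Sinv‖ * ‖S x‖ := by
        calc ‖x‖ = ‖Sinv (S x)‖ := by rw [hSS']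
          _ ≤ ‖Sinv‖ * ‖S x‖ := Sinv.le_opNorm _
      have hd := hbδ x
      have hx2 : (0:ℝ) < ‖x‖ ^ 2 := pow_pos (norm_pos_iff.mpr hx) 2
      rw [div_le_div_iff₀ (pow_pos hSinvop 2) hx2]
      have h6 : ‖x‖ ^ 2 ≤ ‖Sinv‖ ^ 2 * ‖S x‖ ^ 2 := by
        nlinarith [norm_nonneg x, norm_nonneg (S x), norm_nonneg Sinv]
      nlinarith [hδpos, norm_nonneg (S x)]
    have h0 : δ / ‖Sinv‖ ^ 2 ≤ β := by rw [hβ]; exact le_ciInf hlb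
    have h1' : 0 < δ / ‖Sinv‖ ^ 2 := div_pos hδpos (pow_pos hSinvop 2)
    linarith
  have hαpos : 0 < α := by
    have hlb : ∀ x : {x : H // x ≠ 0},
        δ / ‖Sinv‖ ^ 4 ≤ (inner ℂ (D (x : H)) (x : H) : ℂ).re / ‖Sinv (x : H)‖ ^ 2 := by
      rintro ⟨x, hx⟩
      have hSinvxne := hSinvx x hx
      have h5 : ‖Sinv x‖ ≤ ‖Sinv‖ ^ 2 * ‖S x‖ := by
        calc ‖Sinv x‖ = ‖Sinv (Sinv (S x))‖ := by rw [hSS']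
          _ ≤ ‖Sinv‖ * ‖Sinv (S x)‖ := Sinv.le_opNorm _
          _ ≤ ‖Sinv‖ * (‖Sinv‖ * ‖S x‖) := by
              have := Sinv.le_opNorm (S x)
              nlinarith [norm_nonneg Sinv]
          _ = ‖Sinv‖ ^ 2 * ‖S x‖ := by ring
      have hd := hbδ x
      have hx2 : (0:ℝ) < ‖Sinv x‖ ^ 2 := pow_pos (norm_pos_iff.mpr hSinvxne) 2
      rw [div_le_div_iff₀ (pow_pos hSinvop 4) hx2]
      have h6 : ‖Sinv x‖ ^ 2 ≤ (‖Sinv‖ ^ 2) ^ 2 * ‖S x‖ ^ 2 := by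
        nlinarith [norm_nonneg (Sinv x), norm_nonneg (S x), norm_nonneg Sinv]
      have h7 : (‖Sinv‖ ^ 2) ^ 2 = ‖Sinv‖ ^ 4 := by ring
      nlinarith [hδpos, norm_nonneg (S x)]
    have h0 : 0 < δ / ‖Sinv‖ ^ 4 := div_pos hδpos (pow_pos hSinvop 4)
    have h0' : δ / ‖Sinv‖ ^ 4 ≤ α := by rw [hα]; exact le_ciInf hlb
    linarith
  -- K > 0
  have hDne : D ≠ 0 := by
    intro h
    obtain ⟨x, hx⟩ := exists_ne (0 : H)
    have h1' := hbδ x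
    have h2' : (0:ℝ) < ‖S x‖ ^ 2 := pow_pos (norm_pos_iff.mpr (hSx x hx)) 2
    rw [h] at h1'
    simp only [ContinuousLinearMap.zero_apply, inner_zero_left, Complex.zero_re] at h1'
    nlinarith
  have hKpos : 0 < ‖Sinv * D * Sinv‖ := by
    refine norm_pos_iff.mpr ?_
    intro h
    apply hDne
    have : S * (Sinv * D * Sinv) * S = D := by
      calc S * (Sinv * D * Sinv) * S = (S * Sinv) * D * (Sinv * S) := by
            simp only [mul_assoc]
        _ = D := by rw [hSinv, hSinv', one_mul, mul_one]
    rw [← this, h, mul_zero, zero_mul]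
  -- bound ‖Sinv (D x)‖ ≤ K ‖S x‖
  have hKb : ∀ x : H, ‖Sinv (D x)‖ ≤ ‖Sinv * D * Sinv‖ * ‖S x‖ := by
    intro x
    have : Sinv (D x) = (Sinv * D * Sinv) (S x) := by
      simp [ContinuousLinearMap.mul_apply, hSS']
    rw [this]
    exact (Sinv * D * Sinv).le_opNorm _
  -- Ω and ω
  set K : ℝ := ‖Sinv * D * Sinv‖ with hK
  set Ω : ℝ := 1 / β + K ^ 2 / (2 * δ) + (θ / α + 1 / (θ * δ)) / 2
      + Real.sqrt ((θ / α + 1 / (θ * δ) + K ^ 2 / δ) ^ 2 - 4 / (α * δ)) / 2 with hΩ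
  have hΩpos : 0 < Ω := by
    rw [hΩ]
    have h1' : 0 < 1 / β := by positivity
    have h2' : 0 ≤ K ^ 2 / (2 * δ) := by positivity
    have h3' : 0 ≤ (θ / α + 1 / (θ * δ)) / 2 := by positivity
    have h4' : 0 ≤ Real.sqrt ((θ / α + 1 / (θ * δ) + K ^ 2 / δ) ^ 2 - 4 / (α * δ)) / 2 :=
      by positivity
    linarith
  have hωΩ : ω = Ω⁻¹ := hω
  have hωpos : 0 < ω := by rw [hωΩ]; exact inv_pos.mpr hΩpos
  -- step B specialized
  have hB : ∀ u : H × H, ω * (formTheta D S Sinv θ u u).re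
      ≤ (inner ℂ (D u.1) u.1 : ℂ).re + θ * (inner ℂ (D u.2) u.2 : ℂ).re := by
    intro u
    have hb := stepB' D S Sinv θ α β δ K hθ hαpos hβpos hδpos hKpos hbα hbβ hbδ hKb u
    have h5 := mul_le_mul_of_nonneg_left hb hωpos.le
    calc ω * (formTheta D S Sinv θ u u).re ≤ ω * (Ω *
          ((inner ℂ (D u.1) u.1 : ℂ).re + θ * (inner ℂ (D u.2) u.2 : ℂ).re)) := h5
      _ = (inner ℂ (D u.1) u.1 : ℂ).re + θ * (inner ℂ (D u.2) u.2 : ℂ).re := by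
          rw [hωΩ, ← mul_assoc, inv_mul_cancel₀ (ne_of_gt hΩpos), one_mul]
  -- the semigroup curve
  set T : (H × H) →L[ℂ] (H × H) := Tlin A D with hT
  have hexpeq : (NormedSpace.exp : ((H × H) →L[ℂ] (H × H)) → _)
      = NormedSpace.exp := rfl
  set u : ℝ → H × H := fun s => NormedSpace.exp (s • T) w with hu
  have hclm : ∀ (c : H →L[ℂ] H) {f : ℝ → H} {f' : H} {s : ℝ},
      HasDerivAt f f' s → HasDerivAt (fun t => c (f t)) (c f') s := by
    intro c f f' s hf
    exact (c.restrictScalars ℝ).hasFDerivAt.comp_hasDerivAt s hf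
  have hder : ∀ s : ℝ, HasDerivAt u (T (u s)) s := by
    intro s
    have h := hasDerivAt_exp_smul_const' (𝕂 := ℝ) T s
    have happ := (((ContinuousLinearMap.apply ℂ (H × H) w).restrictScalars
        ℝ).hasFDerivAt).comp_hasDerivAt s h
    exact happ
  have hder1 : ∀ s : ℝ, HasDerivAt (fun t => (u t).1) ((T (u s)).1) s := by
    intro s
    exact (((ContinuousLinearMap.fst ℂ H H).restrictScalars
      ℝ).hasFDerivAt).comp_hasDerivAt s (hder s)
  have hder2 : ∀ s : ℝ, HasDerivAt (fun t => (u t).2) ((T (u s)).2) s := by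
    intro s
    exact (((ContinuousLinearMap.snd ℂ H H).restrictScalars
      ℝ).hasFDerivAt).comp_hasDerivAt s (hder s)
  -- derivative of the quadratic form along the curve
  have hF : ∀ s : ℝ, HasDerivAt (fun t => formTheta D S Sinv θ (u t) (u t))
      (formTheta D S Sinv θ (T (u s)) (u s) + formTheta D S Sinv θ (u s) (T (u s))) s := by
    intro s
    have k1 := hder1 s
    have k2 := hder2 s
    have t1 := HasDerivAt.inner ℂ k1 k1
    have t2 := (HasDerivAt.inner ℂ (hclm Sinv k1) (hclm Sinv k1)).const_mul (θ : ℂ)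
    have t3 := HasDerivAt.inner ℂ (hclm S k2) (hclm S k2)
    have t4 := (HasDerivAt.inner ℂ k2 k2).const_mul (θ : ℂ)
    have t5 := (HasDerivAt.inner ℂ (hclm Sinv (hclm D k2))
      (hclm Sinv (hclm D k2))).const_mul (θ : ℂ)
    have t6 := (HasDerivAt.inner ℂ (hclm Sinv (hclm D k2)) (hclm Sinv k1)).const_mul (θ : ℂ)
    have t7 := (HasDerivAt.inner ℂ (hclm Sinv k1) (hclm Sinv (hclm D k2))).const_mul (θ : ℂ)
    have hsum := ((((((t1.add t2).add t3).add t4).add t5).add t6).add t7)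
    convert hsum using 1
    · rfl
    · funext y; simp only [formTheta, Pi.add_apply]
    · simp only [formTheta]
      ring
  have hΦ : ∀ s : ℝ, HasDerivAt (fun t => (formTheta D S Sinv θ (u t) (u t)).re)
      (-(2 * ((inner ℂ (D (u s).1) (u s).1 : ℂ).re
        + θ * (inner ℂ (D (u s).2) (u s).2 : ℂ).re))) s := by
    intro s
    have h := (Complex.reCLM.hasFDerivAt).comp_hasDerivAt s (hF s)
    have heq : (formTheta D S Sinv θ (T (u s)) (u s)
        + formTheta D S Sinv θ (u s) (T (u s))).re
        = -(2 * ((inner ℂ (D (u s).1) (u s).1 : ℂ).re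
          + θ * (inner ℂ (D (u s).2) (u s).2 : ℂ).re)) := by
      rw [stepA A D S Sinv θ h1 h1r h2 h3 h4 (u s)]
      have hc1 : ((inner ℂ ((u s).1) (D (u s).1) : ℂ)).re
          = ((inner ℂ (D (u s).1) ((u s).1) : ℂ)).re := by
        rw [← inner_conj_symm ((u s).1) (D (u s).1), Complex.conj_re]
      have hc2 : ((inner ℂ ((u s).2) (D (u s).2) : ℂ)).re
          = ((inner ℂ (D (u s).2) ((u s).2) : ℂ)).re := by
        rw [← inner_conj_symm ((u s).2) (D (u s).2), Complex.conj_re]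
      simp only [Complex.sub_re, Complex.neg_re, Complex.add_re, Complex.re_ofReal_mul,
        hc1, hc2]
      ring
    rw [← heq]
    exact h
  -- Gronwall via monotonicity
  set Φ : ℝ → ℝ := fun t => (formTheta D S Sinv θ (u t) (u t)).re with hΦdef
  set g : ℝ → ℝ := fun s => Real.exp (2 * ω * s) * Φ s with hg
  have hgder : ∀ s : ℝ, HasDerivAt g
      (Real.exp (2 * ω * s) * (2 * ω) * Φ s
        + Real.exp (2 * ω * s) * (-(2 * ((inner ℂ (D (u s).1) (u s).1 : ℂ).re
          + θ * (inner ℂ (D (u s).2) (u s).2 : ℂ).re)))) s := by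
    intro s
    have he : HasDerivAt (fun s : ℝ => Real.exp (2 * ω * s))
        (Real.exp (2 * ω * s) * (2 * ω)) s := by
      simpa using ((hasDerivAt_id s).const_mul (2 * ω)).exp
    exact he.mul (hΦ s)
  have hganti : Antitone g := by
    apply antitone_of_deriv_nonpos
    · intro s; exact (hgder s).differentiableAt
    · intro s
      rw [(hgder s).deriv]
      have hBs := hB (u s)
      have hexps : 0 < Real.exp (2 * ω * s) := Real.exp_pos _
      have : Real.exp (2 * ω * s) * (2 * ω) * Φ s
          + Real.exp (2 * ω * s) * (-(2 * ((inner ℂ (D (u s).1) (u s).1 : ℂ).re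
            + θ * (inner ℂ (D (u s).2) (u s).2 : ℂ).re)))
          = Real.exp (2 * ω * s) * (2 * (ω * Φ s
            - ((inner ℂ (D (u s).1) (u s).1 : ℂ).re
              + θ * (inner ℂ (D (u s).2) (u s).2 : ℂ).re))) := by ring
      rw [this]
      apply mul_nonpos_of_nonneg_of_nonpos hexps.le
      have : ω * Φ s ≤ (inner ℂ (D (u s).1) (u s).1 : ℂ).re
          + θ * (inner ℂ (D (u s).2) (u s).2 : ℂ).re := hBs
      linarith
  have hgt := hganti ht
  have hu0 : u 0 = w := by
    rw [hu]
    simp [NormedSpace.exp_zero]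
  have hg0 : g 0 = (formTheta D S Sinv θ w w).re := by
    simp [hg, hΦdef, hu0]
  have hgt' : Real.exp (2 * ω * t) * Φ t ≤ (formTheta D S Sinv θ w w).re := by
    rw [← hg0]; exact hgt
  have hgoal : Φ t ≤ Real.exp (-2 * ω * t) * (formTheta D S Sinv θ w w).re := by
    have hpos : 0 < Real.exp (2 * ω * t) := Real.exp_pos _
    have hneg : Real.exp (-2 * ω * t) = (Real.exp (2 * ω * t))⁻¹ := by
      rw [← Real.exp_neg]
      congr 1
      ring
    rw [hneg]
    have hstep := mul_le_mul_of_nonneg_left hgt' (inv_pos.mpr hpos).le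
    calc Φ t = (Real.exp (2 * ω * t))⁻¹ * (Real.exp (2 * ω * t) * Φ t) := by
          field_simp
      _ ≤ (Real.exp (2 * ω * t))⁻¹ * (formTheta D S Sinv θ w w).re := hstep
  have hcurve : NormedSpace.exp (t • T) w = u t := by
    rw [hu]
  rw [hcurve]
  exact hgoal
end
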